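/- arXiv:1703.00236 — 16 statements merged into one kernel-verified Lean document; each statement's English description precedes it below -/
import Mathlib

section
/- For every finite simple graph G, if the vertex set of G can be partitioned into r sets each of which induces a clique in G, then G admits a very strong rainbow coloring using at most r(r+1)/2 colors; in particular vsrc(G) ≤ cp(G)(cp(G)+1)/2. -/
open SimpleGraph

/-- A very strong rainbow coloring: for every shortest path (a path whose length equals the
distance between its endpoints), all edges receive pairwise distinct colors. -/
def IsVSRC {V : Type*} (G : SimpleGraph V) (c : Sym2 V → ℕ) : Prop :=
  ∀ (u v : V) (p : G.Walk u v), p.IsPath → p.length = G.dist u v →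
    (p.edges.map c).Nodup

private lemma exists_drop_walk {V : Type*} {G : SimpleGraph V} :
    ∀ {u v : V} (p : G.Walk u v) (m : ℕ),
      ∃ q : G.Walk (p.getVert m) v, q.length = p.length - m := by
  intro u v p
  induction p with
  | nil => intro m; exact ⟨Walk.nil, by simp⟩
  | cons h q ih =>
    intro m
    match m with
    | 0 =>
      exact ⟨(Walk.cons h q).copy (Walk.getVert_zero _).symm rfl, by simp⟩
    | (m + 1) =>
      obtain ⟨q', hq'⟩ := ih m
      refine ⟨q'.copy (Walk.getVert_cons_succ _ _).symm rfl, ?_⟩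
      simp [hq']

private lemma exists_short_walk {V : Type*} {G : SimpleGraph V} :
    ∀ {u v : V} (p : G.Walk u v) (k m : ℕ), k ≤ m → m ≤ p.length →
      (p.getVert k = p.getVert m ∨ G.Adj (p.getVert k) (p.getVert m)) →
      ∃ q : G.Walk u v, q.length ≤ k + 1 + (p.length - m) := by
  intro u v p
  induction p with
  | nil =>
    intro k m hkm hm _
    exact ⟨Walk.nil, by simp⟩
  | cons h q ih =>
    intro k m hkm hm hadj
    match k, m with
    | 0, 0 => exact ⟨Walk.cons h q, by simp⟩
    | 0, (m + 1) =>
      rw [Walk.getVert_zero, Walk.getVert_cons_succ] at hadj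
      have hmq : m ≤ q.length := by simpa using hm
      obtain ⟨w, hw⟩ := exists_drop_walk q m
      rcases hadj with heq | hadj
      · refine ⟨w.copy heq.symm rfl, ?_⟩
        simp only [Walk.length_copy, hw, Walk.length_cons]
        omega
      · refine ⟨Walk.cons hadj w, ?_⟩
        simp only [Walk.length_cons, hw]
        omega
    | (k + 1), 0 => omega
    | (k + 1), (m + 1) =>
      rw [Walk.getVert_cons_succ, Walk.getVert_cons_succ] at hadj
      have hmq : m ≤ q.length := by simpa using hm
      obtain ⟨w, hw⟩ := ih k m (by omega) hmq hadj
      refine ⟨Walk.cons h w, ?_⟩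
      simp only [Walk.length_cons]
      omega

private lemma same_class_step {V : Type*} {G : SimpleGraph V} {r : ℕ} {f : V → Fin r}
    (hf : ∀ i : Fin r, G.IsClique {v | f v = i}) {u v : V} (p : G.Walk u v)
    (hd : p.length = G.dist u v) {k m : ℕ} (hkm : k < m) (hm : m ≤ p.length)
    (hfe : f (p.getVert k) = f (p.getVert m)) : m = k + 1 := by
  have hor : p.getVert k = p.getVert m ∨ G.Adj (p.getVert k) (p.getVert m) := by
    by_cases he : p.getVert k = p.getVert m
    · exact Or.inl he
    · exact Or.inr (hf (f (p.getVert k)) (by simp) (by simp [hfe]) he)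
  obtain ⟨q, hq⟩ := exists_short_walk p k m hkm.le hm hor
  have hdq : G.dist u v ≤ q.length := SimpleGraph.dist_le q
  omega

private lemma edges_getElem_eq {V : Type*} {G : SimpleGraph V} :
    ∀ {u v : V} (p : G.Walk u v) (k : ℕ) (hk : k < p.edges.length),
      p.edges[k] = s(p.getVert k, p.getVert (k + 1)) := by
  intro u v p
  induction p with
  | nil => intro k hk; simp at hk
  | cons h q ih =>
    intro k hk
    match k with
    | 0 => simp [Walk.getVert_cons_succ, Walk.getVert_zero]
    | (k + 1) =>
      have hk' : k < q.edges.length := by simpa using hk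
      simpa [Walk.getVert_cons_succ] using ih k hk'

theorem stmt_0 {V : Type*} [Fintype V] (G : SimpleGraph V) (r : ℕ)
    (f : V → Fin r) (hf : ∀ i : Fin r, G.IsClique {v | f v = i}) :
    ∃ c : Sym2 V → ℕ, IsVSRC G c ∧ ∀ e ∈ G.edgeSet, c e < r * (r + 1) / 2 := by
  classical
  have hcard : Fintype.card (Sym2 (Fin r)) = r * (r + 1) / 2 := by
    rw [Sym2.card, Fintype.card_fin, Nat.choose_two_right]
    simp [Nat.mul_comm]
  let e : Sym2 (Fin r) ≃ Fin (r * (r + 1) / 2) := Fintype.equivFinOfCardEq hcard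
  refine ⟨fun s => (e (s.map f)).val, ?_, ?_⟩
  · intro u v p _hp hlen
    rw [List.Nodup, List.pairwise_iff_getElem]
    intro i j hi hj hij
    simp only [List.getElem_map]
    intro hcc
    have hij' : (e ((p.edges[i]'(by simpa using hi)).map f)) =
        (e ((p.edges[j]'(by simpa using hj)).map f)) := Fin.ext hcc
    have hmm : (p.edges[i]'(by simpa using hi)).map f =
        (p.edges[j]'(by simpa using hj)).map f := e.injective hij'
    rw [edges_getElem_eq p i (by simpa using hi), edges_getElem_eq p j (by simpa using hj),
      Sym2.map_pair_eq, Sym2.map_pair_eq, Sym2.eq_iff] at hmm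
    have hilen : i < p.length := by
      have := hi; simpa [List.length_map, Walk.length_edges] using this
    have hjlen : j < p.length := by
      have := hj; simpa [List.length_map, Walk.length_edges] using this
    rcases hmm with ⟨h1, h2⟩ | ⟨h1, h2⟩
    · have hji : j = i + 1 := same_class_step hf p hlen hij (by omega) h1
      subst hji
      have h3 : f (p.getVert i) = f (p.getVert (i + 2)) := by
        rw [h1, h2]
      have := same_class_step hf p hlen (show i < i + 2 by omega) (by omega) h3
      omega
    · have := same_class_step hf p hlen (show i < j + 1 by omega) (by omega) h1
      omega
  · intro s _
    exact (e (s.map f)).isLt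
end

section
/- For every finite simple graph G, if the vertex set of G can be partitioned into r sets each of which induces a clique in G, then the graph Ĝ obtained from G by adding a universal vertex admits a very strong rainbow coloring using at most r(r+1)/2 colors; in particular vsrc(Ĝ) ≤ cp(G)(cp(G)+1)/2. -/
open SimpleGraph

/-- The graph Ĝ obtained from `G` by adding a new universal vertex (`none`). -/
def hatGraph {V : Type*} (G : SimpleGraph V) : SimpleGraph (Option V) where
  Adj x y :=
    match x, y with
    | some u, some v => G.Adj u v
    | some _, none => True
    | none, some _ => True
    | none, none => False
  symm := by
    constructor
    rintro (_ | u) (_ | v) h <;> simp_all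
    exact G.symm.symm _ _ h
  loopless := by
    constructor
    rintro (_ | u) h <;> simp_all

def vsT (b : ℕ) : ℕ := ∑ i ∈ Finset.range (b+1), i

lemma vsT_mono : Monotone vsT := fun a b h =>
  Finset.sum_le_sum_of_subset (Finset.range_subset_range.2 (by omega))

lemma vsT_succ (b : ℕ) : vsT (b+1) = vsT b + (b+1) := Finset.sum_range_succ _ _

lemma vsT_eq (r : ℕ) : vsT r = r * (r+1) / 2 := by
  unfold vsT
  rw [Finset.sum_range_id, Nat.add_sub_cancel, Nat.mul_comm]

def vsEnc (i j : ℕ) : ℕ := min i j + vsT (max i j)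

lemma vsEnc_comm (i j : ℕ) : vsEnc i j = vsEnc j i := by
  unfold vsEnc; rw [min_comm, max_comm]

lemma vsKey (a b a' b' : ℕ) (hab : a ≤ b) (ha'b' : a' ≤ b')
    (h : a + vsT b = a' + vsT b') : a = a' ∧ b = b' := by
  rcases lt_trichotomy b b' with hlt | he | hgt
  · have h1 := vsT_succ b
    have h2 : vsT (b+1) ≤ vsT b' := vsT_mono (by omega)
    omega
  · subst he; omega
  · have h1 := vsT_succ b'
    have h2 : vsT (b'+1) ≤ vsT b := vsT_mono (by omega)
    omega

lemma vsEnc_inj (i j k l : ℕ) (h : vsEnc i j = vsEnc k l) :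
    min i j = min k l ∧ max i j = max k l :=
  vsKey _ _ _ _ (min_le_max) (min_le_max) h

lemma vsEnc_lt (r i j : ℕ) (hi : i < r) (hj : j < r) : vsEnc i j < vsT r := by
  have h1 : max i j + 1 ≤ r := by omega
  have h2 := vsT_succ (max i j)
  have h3 : vsT (max i j + 1) ≤ vsT r := vsT_mono h1
  have : min i j ≤ max i j := min_le_max
  unfold vsEnc
  omega

def vsF {V : Type*} {r : ℕ} (f : V → Fin r) : Option V → Option V → ℕ
  | some u, some v => vsEnc (f u) (f v)
  | some u, none => vsEnc (f u) (f u)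
  | none, some v => vsEnc (f v) (f v)
  | none, none => 0

lemma vsF_comm {V : Type*} {r : ℕ} (f : V → Fin r) (x y : Option V) :
    vsF f x y = vsF f y x := by
  cases x <;> cases y <;> simp [vsF, vsEnc_comm]

def vsC {V : Type*} {r : ℕ} (f : V → Fin r) : Sym2 (Option V) → ℕ :=
  Sym2.lift ⟨vsF f, vsF_comm f⟩

lemma vsC_mk {V : Type*} {r : ℕ} (f : V → Fin r) (x y : Option V) :
    vsC f s(x, y) = vsF f x y := rfl

theorem stmt_1 {V : Type*} [Fintype V] (G : SimpleGraph V) (r : ℕ)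
    (f : V → Fin r) (hf : ∀ i : Fin r, G.IsClique {v | f v = i}) :
    ∃ c : Sym2 (Option V) → ℕ, IsVSRC (hatGraph G) c ∧
      ∀ e ∈ (hatGraph G).edgeSet, c e < r * (r + 1) / 2 := by
  refine ⟨vsC f, ?_, ?_⟩
  · intro u v p hp hlen
    -- distance at most 2
    have hd2 : (hatGraph G).dist u v ≤ 2 := by
      by_cases huv : u = v
      · subst huv; simp [SimpleGraph.dist_self]
      · by_cases hadj : (hatGraph G).Adj u v
        · exact le_trans (SimpleGraph.dist_le (Walk.cons hadj Walk.nil)) (by simp)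
        · cases u with
          | none =>
            cases v with
            | none => exact absurd rfl huv
            | some b => exact absurd trivial hadj
          | some a =>
            cases v with
            | none => exact absurd trivial hadj
            | some b =>
              have h1 : (hatGraph G).Adj (some a) none := trivial
              have h2 : (hatGraph G).Adj none (some b) := trivial
              exact le_trans
                (SimpleGraph.dist_le (Walk.cons h1 (Walk.cons h2 Walk.nil))) (by simp)
    cases p with
    | nil => simp
    | cons h q =>
      rename_i w
      cases q with
      | nil => simp
      | cons h' q' =>
        rename_i w'
        cases q' with
        | cons h'' q'' =>
          exfalso
          simp only [Walk.length_cons] at hlen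
          omega
        | nil =>
          have hd : (hatGraph G).dist u v = 2 := by
            simp only [Walk.length_cons, Walk.length_nil] at hlen
            omega
          have hne : u ≠ v := by
            rintro rfl
            rw [SimpleGraph.dist_self] at hd
            omega
          have hnadj : ¬ (hatGraph G).Adj u v := by
            intro hadj
            have := SimpleGraph.dist_le (Walk.cons hadj Walk.nil)
            simp [hd] at this
          obtain ⟨a, rfl⟩ : ∃ a, u = some a := by
            cases u with
            | none =>
              exfalso
              cases v with
              | none => exact hne rfl
              | some b => exact hnadj trivial
            | some a => exact ⟨a, rfl⟩
          obtain ⟨b, rfl⟩ : ∃ b, v = some b := by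
            cases v with
            | none => exact absurd trivial hnadj
            | some b => exact ⟨b, rfl⟩
          have hab : a ≠ b := fun hh => hne (by rw [hh])
          have hG : ¬ G.Adj a b := hnadj
          have hfab : f a ≠ f b := by
            intro he
            exact hG (hf (f b) he rfl hab)
          have hfab' : (f a : ℕ) ≠ (f b : ℕ) := fun hh => hfab (Fin.val_injective hh)
          simp only [Walk.edges_cons, Walk.edges_nil, List.map_cons, List.map_nil,
            List.nodup_cons, List.mem_singleton, List.nodup_nil, and_true, not_false_iff,
            List.not_mem_nil, or_false]
          intro hcc
          cases w with
          | none =>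
            rw [vsC_mk, vsC_mk] at hcc
            simp only [vsF] at hcc
            have := vsEnc_inj _ _ _ _ hcc
            simp only [min_self, max_self] at this
            exact hfab' this.1
          | some t =>
            rw [vsC_mk, vsC_mk] at hcc
            simp only [vsF] at hcc
            have := vsEnc_inj _ _ _ _ hcc
            omega
  · intro e he
    induction e using Sym2.ind with
    | _ x y =>
      rw [SimpleGraph.mem_edgeSet] at he
      rw [← vsT_eq]
      cases x with
      | none =>
        cases y with
        | none => exact absurd he ((hatGraph G).loopless.irrefl _)
        | some b =>
          rw [vsC_mk]
          exact vsEnc_lt r _ _ (f b).isLt (f b).isLt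
      | some a =>
        cases y with
        | none =>
          rw [vsC_mk]
          exact vsEnc_lt r _ _ (f a).isLt (f a).isLt
        | some b =>
          rw [vsC_mk]
          exact vsEnc_lt r _ _ (f a).isLt (f b).isLt
end

section
/- For every finite simple graph G, if there are k cliques of G whose union covers every edge of G (an edge clique cover of size k), then G admits a very strong rainbow coloring with at most k colors, i.e., vsrc(G) ≤ ecc(G). -/
open SimpleGraph

namespace VSRCaux

variable {V : Type*} {G : SimpleGraph V}

lemma edges_getElem {u v : V} (p : G.Walk u v) (i : ℕ) (h : i < p.edges.length) :
    p.edges[i] = s(p.getVert i, p.getVert (i + 1)) := by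
  induction p generalizing i with
  | nil => simp at h
  | cons ha q ih =>
    cases i with
    | zero => simp [Walk.getVert]
    | succ n =>
      simp only [Walk.edges_cons, Walk.getVert_cons_succ]
      have h' : n < q.edges.length := by
        simpa [Nat.succ_lt_succ_iff] using h
      simpa using ih n h'

lemma walk_to {u v : V} (p : G.Walk u v) (n : ℕ) :
    ∃ w : G.Walk u (p.getVert n), w.length ≤ n := by
  induction p generalizing n with
  | nil => exact ⟨Walk.nil.copy rfl (by simp [Walk.getVert_of_length_le]), by simp⟩
  | cons ha q ih =>
    cases n with
    | zero => exact ⟨Walk.nil.copy rfl (by simp), by simp⟩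
    | succ m =>
      obtain ⟨w, hw⟩ := ih m
      exact ⟨(Walk.cons ha w).copy rfl (by simp [Walk.getVert_cons_succ]),
        by simpa using Nat.succ_le_succ hw⟩

lemma walk_from {u v : V} (p : G.Walk u v) (n : ℕ) :
    ∃ w : G.Walk (p.getVert n) v, w.length ≤ p.length - n := by
  have hrv : p.reverse.getVert (p.length - n) = p.getVert n := by
    rw [Walk.getVert_reverse]
    by_cases hn : n ≤ p.length
    · rw [Nat.sub_sub_self hn]
    · push_neg at hn
      rw [Nat.sub_eq_zero_of_le hn.le, Nat.sub_zero, Walk.getVert_length,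
        Walk.getVert_of_length_le _ hn.le]
  obtain ⟨w, hw⟩ := walk_to p.reverse (p.length - n)
  exact ⟨(w.copy rfl hrv).reverse, by simpa using hw⟩

lemma length_le {u v : V} (p : G.Walk u v) (hd : p.length = G.dist u v) (a b : ℕ)
    (q : G.Walk (p.getVert a) (p.getVert b)) :
    p.length ≤ a + q.length + (p.length - b) := by
  obtain ⟨w1, h1⟩ := walk_to p a
  obtain ⟨w2, h2⟩ := walk_from p b
  have := SimpleGraph.dist_le (w1.append (q.append w2))
  rw [← hd] at this
  simp only [Walk.length_append] at this
  omega

end VSRCaux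

theorem stmt_2 {V : Type*} [Fintype V] (G : SimpleGraph V) (k : ℕ)
    (S : Fin k → Set V) (hS : ∀ i, G.IsClique (S i))
    (hcov : ∀ u v : V, G.Adj u v → ∃ i, u ∈ S i ∧ v ∈ S i) :
    ∃ c : Sym2 V → ℕ, IsVSRC G c ∧ ∀ e ∈ G.edgeSet, c e < k := by
  classical
  set c : Sym2 V → ℕ := fun e =>
    if h : ∃ i : Fin k, ∀ x ∈ e, x ∈ S i then (h.choose : ℕ) else 0 with hc
  have hex : ∀ e ∈ G.edgeSet, ∃ i : Fin k, ∀ x ∈ e, x ∈ S i := by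
    intro e he
    induction e with
    | _ a b =>
      rw [SimpleGraph.mem_edgeSet] at he
      obtain ⟨i, hia, hib⟩ := hcov a b he
      exact ⟨i, by intro x hx; rcases Sym2.mem_iff.mp hx with rfl | rfl <;> assumption⟩
  have hmem : ∀ e ∈ G.edgeSet, ∃ i : Fin k, (i : ℕ) = c e ∧ ∀ x ∈ e, x ∈ S i := by
    intro e he
    have h := hex e he
    refine ⟨h.choose, ?_, h.choose_spec⟩
    simp [hc, dif_pos h]
  refine ⟨c, ?_, ?_⟩
  · intro u v p hp hd
    rw [List.nodup_iff_injective_get]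
    intro a b hab
    by_contra hne
    simp only [List.get_eq_getElem, List.getElem_map] at hab
    -- wlog a < b
    wlog hlt : (a : ℕ) < (b : ℕ) generalizing a b
    · have hv : (a : ℕ) ≠ (b : ℕ) := fun h => hne (Fin.ext h)
      exact this (a := b) (b := a) (Ne.symm hne) hab.symm (by omega)
    · have ha' : (a : ℕ) < p.edges.length := by simpa using a.isLt
      have hb' : (b : ℕ) < p.edges.length := by simpa using b.isLt
      have hlen : p.edges.length = p.length := p.length_edges
      have hea : p.edges[(a : ℕ)] = s(p.getVert a, p.getVert (a + 1)) :=
        VSRCaux.edges_getElem p a ha'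
      have heb : p.edges[(b : ℕ)] = s(p.getVert b, p.getVert (b + 1)) :=
        VSRCaux.edges_getElem p b hb'
      have hmea : p.edges[(a : ℕ)] ∈ G.edgeSet :=
        p.edges_subset_edgeSet (List.getElem_mem _)
      have hmeb : p.edges[(b : ℕ)] ∈ G.edgeSet :=
        p.edges_subset_edgeSet (List.getElem_mem _)
      obtain ⟨i, hi, hiS⟩ := hmem _ hmea
      obtain ⟨j, hj, hjS⟩ := hmem _ hmeb
      have hijv : (i : ℕ) = (j : ℕ) := by
        rw [hi, hj]
        simpa using hab
      have hij : i = j := Fin.ext hijv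
      subst hij
      have hx : p.getVert a ∈ S i := hiS _ (by rw [hea]; exact Sym2.mem_mk_left _ _)
      have hy : p.getVert ((b : ℕ) + 1) ∈ S i := hjS _ (by rw [heb]; exact Sym2.mem_mk_right _ _)
      -- get a short walk from getVert a to getVert (b+1)
      have hq : ∃ q : G.Walk (p.getVert a) (p.getVert ((b : ℕ) + 1)), q.length ≤ 1 := by
        by_cases hxy : p.getVert (a : ℕ) = p.getVert ((b : ℕ) + 1)
        · exact ⟨Walk.nil.copy rfl hxy, by simp⟩
        · exact ⟨Walk.cons ((hS i) hx hy hxy) Walk.nil, by simp⟩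
      obtain ⟨q, hql⟩ := hq
      have := VSRCaux.length_le p hd a ((b : ℕ) + 1) q
      omega
  · intro e he
    obtain ⟨i, hi, -⟩ := hmem e he
    rw [← hi]
    exact i.isLt
end

section
/- For every finite connected chordal graph G, vsrc(G) ≤ |V(G)| − ω(G) + 1, where ω(G) is the clique number of G. -/
open SimpleGraph

/-- A cycle has a chord: an edge of the graph joining two (necessarily nonconsecutive)
vertices of the cycle which is not an edge of the cycle. -/
def HasChord {V : Type*} (G : SimpleGraph V) {v : V} (p : G.Walk v v) : Prop :=
  ∃ x y : V, x ∈ p.support ∧ y ∈ p.support ∧ G.Adj x y ∧ s(x, y) ∉ p.edges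

/-- A graph is chordal if every cycle of length at least 4 has a chord. -/
def IsChordal {V : Type*} (G : SimpleGraph V) : Prop :=
  ∀ (v : V) (p : G.Walk v v), p.IsCycle → 4 ≤ p.length → HasChord G p


lemma exists_shorter {V : Type*} {G : SimpleGraph V} {x y : V} (p : G.Walk x y) :
    ∀ (c d : V), c ∈ p.support → d ∈ p.support →
    G.Adj c d → s(c, d) ∉ p.edges →
    ∃ w : G.Walk x y, w.length < p.length ∧ ∀ z ∈ w.support, z ∈ p.support := by
  classical
  induction p with
  | nil =>
    intro c d hc hd hadj _
    simp only [Walk.support_nil, List.mem_singleton] at hc hd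
    subst hc; subst hd; exact absurd hadj (G.loopless.irrefl _)
  | @cons x x₁ y h q ih =>
    intro c d hc hd hadj hne
    simp only [Walk.support_cons, List.mem_cons] at hc hd
    simp only [Walk.edges_cons, List.mem_cons] at hne
    push_neg at hne
    obtain ⟨hne1, hne2⟩ := hne
    by_cases hcx : c = x
    · subst hcx
      rcases hd with rfl | hd
      · exact absurd hadj (G.loopless.irrefl _)
      · by_cases hdx1 : d = x₁
        · subst hdx1; exact absurd rfl hne1
        · have hlt : (q.dropUntil d hd).length < q.length := by
            have hspec := q.take_spec hd
            have : (q.takeUntil d hd).length + (q.dropUntil d hd).length = q.length := by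
              rw [← Walk.length_append, hspec]
            have hpos : 0 < (q.takeUntil d hd).length := by
              rcases Nat.eq_zero_or_pos (q.takeUntil d hd).length with h0 | h0
              · exact absurd (Walk.eq_of_length_eq_zero h0) (fun h => hdx1 h.symm)
              · exact h0
            omega
          refine ⟨Walk.cons hadj (q.dropUntil d hd), by simp [Walk.length_cons]; omega, ?_⟩
          intro z hz
          simp only [Walk.support_cons, List.mem_cons] at hz ⊢
          rcases hz with rfl | hz
          · exact Or.inl rfl
          · exact Or.inr (q.support_dropUntil_subset hd hz)
    · by_cases hdx : d = x
      · subst hdx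
        rcases hc with rfl | hc
        · exact absurd hadj (G.loopless.irrefl _)
        · by_cases hcx1 : c = x₁
          · subst hcx1; exact absurd (Sym2.eq_swap) hne1
          · have hlt : (q.dropUntil c hc).length < q.length := by
              have hspec := q.take_spec hc
              have : (q.takeUntil c hc).length + (q.dropUntil c hc).length = q.length := by
                rw [← Walk.length_append, hspec]
              have hpos : 0 < (q.takeUntil c hc).length := by
                rcases Nat.eq_zero_or_pos (q.takeUntil c hc).length with h0 | h0
                · exact absurd (Walk.eq_of_length_eq_zero h0) (fun h => hcx1 h.symm)
                · exact h0
              omega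
            refine ⟨Walk.cons hadj.symm (q.dropUntil c hc), by simp [Walk.length_cons]; omega, ?_⟩
            intro z hz
            simp only [Walk.support_cons, List.mem_cons] at hz ⊢
            rcases hz with rfl | hz
            · exact Or.inl rfl
            · exact Or.inr (q.support_dropUntil_subset hc hz)
      · rcases hc with rfl | hc
        · exact absurd rfl hcx
        rcases hd with rfl | hd
        · exact absurd rfl hdx
        obtain ⟨w', hw1, hw2⟩ := ih c d hc hd hadj hne2
        refine ⟨Walk.cons h w', by simp [Walk.length_cons]; omega, ?_⟩
        intro z hz
        simp only [Walk.support_cons, List.mem_cons] at hz ⊢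
        rcases hz with rfl | hz
        · exact Or.inl rfl
        · exact Or.inr (hw2 z hz)

/-- Reachability avoiding a set `S` (all vertices of the walk, including endpoints, avoid `S`). -/
def Reach {V : Type*} (G : SimpleGraph V) (S : Set V) (a c : V) : Prop :=
  ∃ w : G.Walk a c, ∀ z ∈ w.support, z ∉ S

lemma Reach.symm {V : Type*} {G : SimpleGraph V} {S : Set V} {a c : V}
    (h : Reach G S a c) : Reach G S c a := by
  obtain ⟨w, hw⟩ := h
  exact ⟨w.reverse, by simpa [Walk.support_reverse] using hw⟩

lemma Reach.trans {V : Type*} {G : SimpleGraph V} {S : Set V} {a b c : V}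
    (h1 : Reach G S a b) (h2 : Reach G S b c) : Reach G S a c := by
  obtain ⟨w1, hw1⟩ := h1
  obtain ⟨w2, hw2⟩ := h2
  refine ⟨w1.append w2, fun z hz => ?_⟩
  rw [Walk.mem_support_append_iff] at hz
  exact hz.elim (hw1 z) (hw2 z)

lemma Reach.notMem {V : Type*} {G : SimpleGraph V} {S : Set V} {a c : V}
    (h : Reach G S a c) : c ∉ S := by
  obtain ⟨w, hw⟩ := h
  exact hw c w.end_mem_support

lemma Reach.notMem_start {V : Type*} {G : SimpleGraph V} {S : Set V} {a c : V}
    (h : Reach G S a c) : a ∉ S := by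
  obtain ⟨w, hw⟩ := h
  exact hw a w.start_mem_support

lemma Reach.step {V : Type*} {G : SimpleGraph V} {S : Set V} {a c d : V}
    (h : Reach G S a c) (hadj : G.Adj c d) (hd : d ∉ S) : Reach G S a d :=
  h.trans ⟨hadj.toWalk, by
    intro z hz
    simp only [Walk.support_cons, Walk.support_nil, List.mem_cons, List.mem_singleton] at hz
    rcases hz with rfl | rfl | h'
    · exact h.notMem
    · exact hd
    · exact absurd h' (by simp)⟩

/-- every vertex on a witness walk for `Reach` is itself reached. -/
lemma Reach.mem_support {V : Type*} {G : SimpleGraph V} {S : Set V} {a c z : V}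
    (w : G.Walk a c) (hw : ∀ z ∈ w.support, z ∉ S) (_ha : a ∉ S) (hz : z ∈ w.support) :
    Reach G S a z := by
  classical
  exact ⟨w.takeUntil z hz, fun u hu => hw u (w.support_takeUntil_subset hz hu)⟩

/-- From a walk that meets `S` only possibly in `x`, and passes through `x ≠ a`,
we extract a neighbor of `x` reached from `a` avoiding `S`. -/
lemma exists_adj_reach {V : Type*} {G : SimpleGraph V} {S : Set V} {a b x : V}
    (w : G.Walk a b) (hS : ∀ z ∈ w.support, z ∈ S → z = x) (hx : x ∈ w.support)
    (hax : a ≠ x) : ∃ c, G.Adj x c ∧ Reach G S a c := by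
  classical
  set t := w.takeUntil x hx with ht
  have hcount : t.support.count x = 1 := w.count_support_takeUntil_eq_one hx
  obtain ⟨c, hadj, r, hrev⟩ := Walk.exists_eq_cons_of_ne (fun h => hax h.symm) t.reverse
  have hsupp : t.support.reverse = x :: r.support := by
    rw [← Walk.support_reverse, hrev, Walk.support_cons]
  have hxr : x ∉ r.support := by
    intro hmem
    have : (x :: r.support).count x ≥ 2 := by
      have h1 : 0 < r.support.count x := List.count_pos_iff.mpr hmem
      rw [List.count_cons_self]
      omega
    rw [← hsupp, List.count_reverse, hcount] at this
    omega
  have hrsub : ∀ z ∈ r.support, z ∈ w.support := by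
    intro z hz
    have : z ∈ t.support.reverse := by rw [hsupp]; exact List.mem_cons_of_mem _ hz
    rw [List.mem_reverse] at this
    exact w.support_takeUntil_subset hx this
  refine ⟨c, hadj, r.reverse, ?_⟩
  intro z hz
  rw [Walk.support_reverse, List.mem_reverse] at hz
  intro hzS
  have := hS z (hrsub z hz) hzS
  subst this
  exact hxr hz


lemma IsChordal.induce {V : Type*} {G : SimpleGraph V} (h : IsChordal G) (s : Set V) :
    IsChordal (G.induce s) := by
  intro v p hcyc hlen
  set f := SimpleGraph.Embedding.induce s (G := G)
  have hfinj : Function.Injective f := f.injective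
  have hmc : (p.map f.toHom).IsCycle := hcyc.map hfinj
  have hml : 4 ≤ (p.map f.toHom).length := by rwa [Walk.length_map]
  obtain ⟨x, y, hx, hy, hadj, hne⟩ := h _ (p.map f.toHom) hmc hml
  rw [Walk.support_map] at hx hy
  obtain ⟨x', hx', rfl⟩ := List.mem_map.mp hx
  obtain ⟨y', hy', rfl⟩ := List.mem_map.mp hy
  refine ⟨x', y', hx', hy', ?_, ?_⟩
  · exact hadj
  · intro hmem
    apply hne
    rw [Walk.edges_map]
    exact List.mem_map.mpr ⟨s(x', y'), hmem, by simp [Sym2.map_pair_eq]⟩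


lemma no_two_side_paths {V : Type*} {G : SimpleGraph V} (hch : IsChordal G) {x y : V}
    (hxy : ¬ G.Adj x y)
    (P : G.Walk x y) (Q : G.Walk y x) (hP : P.IsPath) (hQ : Q.IsPath)
    (hPl : 2 ≤ P.length) (hQl : 2 ≤ Q.length)
    (hint : ∀ z, z ∈ P.support → z ∈ Q.support → z = x ∨ z = y)
    (hcP : ∀ c d, c ∈ P.support → d ∈ P.support → G.Adj c d → s(c,d) ∈ P.edges)
    (hcQ : ∀ c d, c ∈ Q.support → d ∈ Q.support → G.Adj c d → s(c,d) ∈ Q.edges)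
    (hX : ∀ c d, c ∈ P.support → d ∈ Q.support → c ∉ Q.support → d ∉ P.support →
      ¬ G.Adj c d) :
    False := by
  classical
  set W : G.Walk x x := P.append Q with hW
  have hWlen : W.length = P.length + Q.length := Walk.length_append _ _
  have hWedges : W.edges = P.edges ++ Q.edges := Walk.edges_append _ _
  -- no common edges
  have hdisj_edges : ∀ e ∈ P.edges, e ∉ Q.edges := by
    intro e heP heQ
    induction e with
    | h u v =>
      have hu : u ∈ P.support := P.fst_mem_support_of_mem_edges heP
      have hv : v ∈ P.support := P.snd_mem_support_of_mem_edges heP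
      have hu' : u ∈ Q.support := Q.fst_mem_support_of_mem_edges heQ
      have hv' : v ∈ Q.support := Q.snd_mem_support_of_mem_edges heQ
      have hadj : G.Adj u v := P.adj_of_mem_edges heP
      rcases hint u hu hu' with rfl | rfl <;> rcases hint v hv hv' with rfl | rfl
      · exact hadj.ne rfl
      · exact hxy hadj
      · exact hxy hadj.symm
      · exact hadj.ne rfl
  have hcyc : W.IsCycle := by
    refine ⟨⟨⟨?_⟩, ?_⟩, ?_⟩
    · rw [hWedges]
      exact List.Nodup.append hP.edges_nodup hQ.edges_nodup
        (List.disjoint_right.mpr (fun e he he' => hdisj_edges e he' he))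
    · intro hnil
      have : W.length = 0 := by rw [hnil]; rfl
      omega
    · have htail : W.support.tail = P.support.tail ++ Q.support.tail :=
        Walk.tail_support_append _ _
      rw [htail]
      refine List.Nodup.append (hP.support_nodup.tail) (hQ.support_nodup.tail) ?_
      intro z hzP hzQ
      have hz1 : z ∈ P.support := List.mem_of_mem_tail hzP
      have hz2 : z ∈ Q.support := List.mem_of_mem_tail hzQ
      rcases hint z hz1 hz2 with rfl | rfl
      · have := hP.support_nodup
        rw [P.support_eq_cons] at this
        exact List.Nodup.notMem this hzP
      · have := hQ.support_nodup
        rw [Q.support_eq_cons] at this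
        exact List.Nodup.notMem this hzQ
  obtain ⟨c, d, hc, hd, hadj, hne⟩ := hch x W hcyc (by omega)
  rw [hW, Walk.mem_support_append_iff] at hc hd
  have hPcase : ∀ c' d', c' ∈ P.support → d' ∈ P.support → G.Adj c' d' →
      s(c', d') ∉ W.edges → False := by
    intro c' d' h1 h2 h3 h4
    exact h4 (by rw [hWedges]; exact List.mem_append_left _ (hcP c' d' h1 h2 h3))
  have hQcase : ∀ c' d', c' ∈ Q.support → d' ∈ Q.support → G.Adj c' d' →
      s(c', d') ∉ W.edges → False := by
    intro c' d' h1 h2 h3 h4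
    exact h4 (by rw [hWedges]; exact List.mem_append_right _ (hcQ c' d' h1 h2 h3))
  rcases hc with hcP' | hcQ' <;> rcases hd with hdP' | hdQ'
  · exact hPcase c d hcP' hdP' hadj hne
  · by_cases h1 : c ∈ Q.support
    · exact hQcase c d h1 hdQ' hadj hne
    · by_cases h2 : d ∈ P.support
      · exact hPcase c d hcP' h2 hadj hne
      · exact hX c d hcP' hdQ' h1 h2 hadj
  · by_cases h1 : d ∈ Q.support
    · exact hQcase c d hcQ' h1 hadj hne
    · by_cases h2 : c ∈ P.support
      · exact hPcase c d h2 hdP' hadj hne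
      · exact hX d c hdP' hcQ' h1 h2 hadj.symm
  · exact hQcase c d hcQ' hdQ' hadj hne

section helpers
variable {V : Type*} {G : SimpleGraph V}

lemma exists_min_path_in {x y : V} (T : Set V)
    (hne : ∃ R : G.Walk x y, ∀ z ∈ R.support, z ∈ T) :
    ∃ P : G.Walk x y, P.IsPath ∧ (∀ z ∈ P.support, z ∈ T) ∧
      ∀ (w : G.Walk x y), (∀ z ∈ w.support, z ∈ T) → P.length ≤ w.length := by
  classical
  set L : Set ℕ := {n | ∃ R : G.Walk x y, (∀ z ∈ R.support, z ∈ T) ∧ R.length = n} with hL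
  have hLne : L.Nonempty := ⟨hne.choose.length, hne.choose, hne.choose_spec, rfl⟩
  obtain ⟨R, hR, hlen⟩ := Nat.sInf_mem hLne
  refine ⟨R.bypass, R.bypass_isPath, fun z hz => hR z (R.support_bypass_subset hz), ?_⟩
  intro w hw
  have h1 : R.bypass.length ≤ R.length := R.length_bypass_le
  have h2 : sInf L ≤ w.length := Nat.sInf_le ⟨w, hw, rfl⟩
  omega

end helpers

/-- Reachability avoiding a set `S` (all vertices of the walk, including endpoints, avoid `S`). -/
lemma reach_walk {V : Type*} {G : SimpleGraph V} {S : Set V} {a c d : V}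
    (h1 : Reach G S a c) (h2 : Reach G S a d) :
    ∃ m : G.Walk c d, ∀ z ∈ m.support, Reach G S a z := by
  obtain ⟨w1, hw1⟩ := h1
  obtain ⟨w2, hw2⟩ := h2
  have ha : a ∉ S := hw1 a w1.start_mem_support
  refine ⟨w1.reverse.append w2, ?_⟩
  intro z hz
  rw [Walk.mem_support_append_iff] at hz
  rcases hz with hz | hz
  · rw [Walk.support_reverse, List.mem_reverse] at hz
    exact Reach.mem_support w1 hw1 ha hz
  · exact Reach.mem_support w2 hw2 ha hz

lemma exists_min_separator {V : Type*} [Fintype V] {G : SimpleGraph V} {a b : V}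
    (hne : a ≠ b) (hnadj : ¬ G.Adj a b) :
    ∃ S : Set V, a ∉ S ∧ b ∉ S ∧ ¬ Reach G S a b ∧ ∀ x ∈ S, Reach G (S \ {x}) a b := by
  classical
  set 𝒮 : Set (Set V) := {S | a ∉ S ∧ b ∉ S ∧ ¬ Reach G S a b} with h𝒮
  have h0 : ({z | z ≠ a ∧ z ≠ b} : Set V) ∈ 𝒮 := by
    refine ⟨by simp, by simp [hne.symm], ?_⟩
    rintro ⟨w, hw⟩
    cases w with
    | nil => exact hne rfl
    | cons h q =>
      rename_i v
      have hv : v ∈ (Walk.cons h q).support := by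
        simp [Walk.support_cons, Walk.start_mem_support]
      have := hw v hv
      simp only [Set.mem_setOf_eq, not_and, not_not, ne_eq] at this
      by_cases hva : v = a
      · subst hva; exact G.loopless.irrefl _ h
      · have hvb : v = b := this hva
        subst hvb; exact hnadj h
  set L : Set ℕ := {n | ∃ S ∈ 𝒮, S.ncard = n} with hL
  have hLne : L.Nonempty := ⟨_, _, h0, rfl⟩
  obtain ⟨S, hS𝒮, hScard⟩ := Nat.sInf_mem hLne
  refine ⟨S, hS𝒮.1, hS𝒮.2.1, hS𝒮.2.2, ?_⟩
  intro x hx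
  by_contra hre
  have hmem : S.ncard - 1 ∈ L := by
    refine ⟨S \ {x}, ⟨?_, ?_, hre⟩, ?_⟩
    · exact fun h => hS𝒮.1 h.1
    · exact fun h => hS𝒮.2.1 h.1
    · rw [Set.ncard_diff_singleton_of_mem hx]
  have hlt : S.ncard - 1 < S.ncard := by
    have : 0 < S.ncard := (Set.ncard_pos (Set.toFinite S)).mpr ⟨x, hx⟩
    omega
  have := Nat.sInf_le hmem
  omega

lemma separator_clique {V : Type*} {G : SimpleGraph V} (hch : IsChordal G) {a b : V}
    (S : Set V) (ha : a ∉ S) (hb : b ∉ S) (hsep : ¬ Reach G S a b)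
    (hmin : ∀ x ∈ S, Reach G (S \ {x}) a b)
    {x y : V} (hx : x ∈ S) (hy : y ∈ S) (hxyne : x ≠ y) : G.Adj x y := by
  classical
  by_contra hxy
  set A : Set V := {c | Reach G S a c} with hA
  set B : Set V := {c | Reach G S b c} with hB
  have hAB : ∀ z, z ∈ A → z ∈ B → False := by
    intro z h1 h2
    exact hsep (Reach.trans h1 (Reach.symm h2))
  have hAnotS : ∀ z ∈ A, z ∉ S := fun z hz => Reach.notMem hz
  have hBnotS : ∀ z ∈ B, z ∉ S := fun z hz => Reach.notMem hz
  have hnbr : ∀ s ∈ S, (∃ c ∈ A, G.Adj s c) ∧ (∃ c ∈ B, G.Adj s c) := by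
    intro s hs
    obtain ⟨w, hw⟩ := hmin s hs
    have hSw : ∀ z ∈ w.support, z ∈ S → z = s := by
      intro z hz hzS
      by_contra hzs
      exact hw z hz ⟨hzS, hzs⟩
    have hsw : s ∈ w.support := by
      by_contra hsw
      exact hsep ⟨w, fun z hz hzS => hsw ((hSw z hz hzS) ▸ hz)⟩
    have hsupr : ∀ z : V, z ∈ w.reverse.support ↔ z ∈ w.support := by
      intro z; rw [Walk.support_reverse, List.mem_reverse]
    constructor
    · obtain ⟨c, hadj, hre⟩ := exists_adj_reach w hSw hsw (fun h => ha (h ▸ hs))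
      exact ⟨c, hre, hadj⟩
    · obtain ⟨c, hadj, hre⟩ := exists_adj_reach w.reverse
        (fun z hz => hSw z ((hsupr z).mp hz)) ((hsupr s).mpr hsw) (fun h => hb (h ▸ hs))
      exact ⟨c, hre, hadj⟩
  obtain ⟨⟨a₁, ha₁A, hxa₁⟩, ⟨b₁, hb₁B, hxb₁⟩⟩ := hnbr x hx
  obtain ⟨⟨a₂, ha₂A, hya₂⟩, ⟨b₂, hb₂B, hyb₂⟩⟩ := hnbr y hy
  set TA : Set V := insert x (insert y A) with hTA
  set TB : Set V := insert y (insert x B) with hTB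
  have hRA : ∃ R : G.Walk x y, ∀ z ∈ R.support, z ∈ TA := by
    obtain ⟨m, hm⟩ := reach_walk ha₁A ha₂A
    refine ⟨Walk.cons hxa₁ (m.concat hya₂.symm), ?_⟩
    intro z hz
    rw [Walk.support_cons, List.mem_cons] at hz
    rcases hz with rfl | hz
    · exact Set.mem_insert _ _
    · rw [Walk.support_concat] at hz
      rw [List.mem_append, List.mem_singleton] at hz
      rcases hz with hz | rfl
      · exact Set.mem_insert_of_mem _ (Set.mem_insert_of_mem _ (hm z hz))
      · exact Set.mem_insert_of_mem _ (Set.mem_insert _ _)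
  have hRB : ∃ R : G.Walk y x, ∀ z ∈ R.support, z ∈ TB := by
    obtain ⟨m, hm⟩ := reach_walk hb₂B hb₁B
    refine ⟨Walk.cons hyb₂ (m.concat hxb₁.symm), ?_⟩
    intro z hz
    rw [Walk.support_cons, List.mem_cons] at hz
    rcases hz with rfl | hz
    · exact Set.mem_insert _ _
    · rw [Walk.support_concat] at hz
      rw [List.mem_append, List.mem_singleton] at hz
      rcases hz with hz | rfl
      · exact Set.mem_insert_of_mem _ (Set.mem_insert_of_mem _ (hm z hz))
      · exact Set.mem_insert_of_mem _ (Set.mem_insert _ _)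
  obtain ⟨P, hPpath, hPsub, hPmin⟩ := exists_min_path_in TA hRA
  obtain ⟨Q, hQpath, hQsub, hQmin⟩ := exists_min_path_in TB hRB
  have hPl : 2 ≤ P.length := by
    have h0 : P.length ≠ 0 := fun h => hxyne (Walk.eq_of_length_eq_zero h)
    have h1 : P.length ≠ 1 := fun h => hxy (Walk.adj_of_length_eq_one h)
    omega
  have hQl : 2 ≤ Q.length := by
    have h0 : Q.length ≠ 0 := fun h => hxyne (Walk.eq_of_length_eq_zero h).symm
    have h1 : Q.length ≠ 1 := fun h => hxy (Walk.adj_of_length_eq_one h).symm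
    omega
  have hmemTA : ∀ z ∈ TA, z = x ∨ z = y ∨ z ∈ A := by
    intro z hz
    rcases Set.mem_insert_iff.mp hz with rfl | hz
    · exact Or.inl rfl
    rcases Set.mem_insert_iff.mp hz with rfl | hz
    · exact Or.inr (Or.inl rfl)
    · exact Or.inr (Or.inr hz)
  have hmemTB : ∀ z ∈ TB, z = x ∨ z = y ∨ z ∈ B := by
    intro z hz
    rcases Set.mem_insert_iff.mp hz with rfl | hz
    · exact Or.inr (Or.inl rfl)
    rcases Set.mem_insert_iff.mp hz with rfl | hz
    · exact Or.inl rfl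
    · exact Or.inr (Or.inr hz)
  have hint : ∀ z, z ∈ P.support → z ∈ Q.support → z = x ∨ z = y := by
    intro z hzP hzQ
    rcases hmemTA z (hPsub z hzP) with rfl | rfl | hzA
    · exact Or.inl rfl
    · exact Or.inr rfl
    rcases hmemTB z (hQsub z hzQ) with rfl | rfl | hzB
    · exact Or.inl rfl
    · exact Or.inr rfl
    · exact absurd (hAB z hzA hzB) not_false
  have hcP : ∀ c d, c ∈ P.support → d ∈ P.support → G.Adj c d → s(c,d) ∈ P.edges := by
    intro c d hc hd hadj
    by_contra hne
    obtain ⟨w, hw1, hw2⟩ := exists_shorter P c d hc hd hadj hne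
    have := hPmin w (fun z hz => hPsub z (hw2 z hz))
    omega
  have hcQ : ∀ c d, c ∈ Q.support → d ∈ Q.support → G.Adj c d → s(c,d) ∈ Q.edges := by
    intro c d hc hd hadj
    by_contra hne
    obtain ⟨w, hw1, hw2⟩ := exists_shorter Q c d hc hd hadj hne
    have := hQmin w (fun z hz => hQsub z (hw2 z hz))
    omega
  have hX : ∀ c d, c ∈ P.support → d ∈ Q.support → c ∉ Q.support → d ∉ P.support →
      ¬ G.Adj c d := by
    intro c d hcP' hdQ' hcQ' hdP' hadj
    have hcA : c ∈ A := by
      rcases hmemTA c (hPsub c hcP') with rfl | rfl | h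
      · exact absurd Q.end_mem_support hcQ'
      · exact absurd Q.start_mem_support hcQ'
      · exact h
    have hdB : d ∈ B := by
      rcases hmemTB d (hQsub d hdQ') with rfl | rfl | h
      · exact absurd P.start_mem_support hdP'
      · exact absurd P.end_mem_support hdP'
      · exact h
    exact hAB d (Reach.step hcA hadj (hBnotS d hdB)) hdB
  exact no_two_side_paths hch hxy P Q hPpath hQpath hPl hQl hint hcP hcQ hX

lemma Reach.nil {V : Type*} {G : SimpleGraph V} {S : Set V} {a : V} (h : a ∉ S) :
    Reach G S a a :=
  ⟨Walk.nil, by simp [h]⟩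

universe u

lemma exists_simplicial_aux :
    ∀ (n : ℕ) (V : Type u) [Fintype V] (G : SimpleGraph V), Nat.card V ≤ n →
      IsChordal G → ∀ K : Set V, G.IsClique K → K ≠ Set.univ →
      ∃ v, v ∉ K ∧ ∀ x y, G.Adj v x → G.Adj v y → x ≠ y → G.Adj x y := by
  intro n
  induction n with
  | zero =>
    intro V _ G hcard hch K hK hKne
    exact absurd (Set.eq_univ_iff_forall.mpr fun x =>
      absurd (Nat.card_pos_iff.mpr ⟨⟨x⟩, inferInstance⟩) (by omega)) hKne
  | succ n ih =>
    intro V _ G hcard hch K hK hKne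
    classical
    obtain ⟨w0, hw0⟩ := Set.ne_univ_iff_exists_notMem K |>.mp hKne
    by_cases hcomp : ∀ c d : V, c ≠ d → G.Adj c d
    · exact ⟨w0, hw0, fun x y hx hy hne => hcomp x y hne⟩
    · push_neg at hcomp
      obtain ⟨a, b, hab, hnadj⟩ := hcomp
      obtain ⟨S, haS, hbS, hsep, hmin⟩ := exists_min_separator hab hnadj
      have hside : ∀ c d : V, c ∉ S → d ∉ S → ¬ Reach G S c d →
          (∀ x ∈ S, Reach G (S \ {x}) c d) →
          ∃ v : V, Reach G S c v ∧ (∀ x y, G.Adj v x → G.Adj v y → x ≠ y → G.Adj x y) := by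
        intro c d hc hd hsep' hmin'
        set C : Set V := {z | Reach G S c z} with hC
        set U : Set V := C ∪ S with hU
        have hcC : c ∈ C := Reach.nil hc
        have hdU : d ∉ U := by
          rintro (hdC | hdS)
          · exact hsep' hdC
          · exact hd hdS
        letI : Fintype ↥U := (Set.toFinite U).fintype
        have hcardU : Nat.card ↥U ≤ n := by
          have hUlt : U.ncard < Nat.card V := by
            rw [← Set.ncard_univ]
            exact Set.ncard_lt_ncard (Set.ssubset_univ_iff.mpr
              (Set.ne_univ_iff_exists_notMem _ |>.mpr ⟨d, hdU⟩)) Set.finite_univ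
          rw [Nat.card_coe_set_eq]
          omega
        have hchU : IsChordal (G.induce U) := hch.induce U
        have hKclique : (G.induce U).IsClique {z : ↥U | (z : V) ∈ S} := by
          intro z1 hz1 z2 hz2 hne
          have : G.Adj ↑z1 ↑z2 :=
            separator_clique hch S hc hd hsep' hmin' hz1 hz2
              (fun h => hne (Subtype.ext h))
          exact this
        have hKV : {z : ↥U | (z : V) ∈ S} ≠ Set.univ := by
          apply Set.ne_univ_iff_exists_notMem _ |>.mpr
          exact ⟨⟨c, Or.inl hcC⟩, hc⟩
        obtain ⟨v, hvK, hvsimp⟩ := ih ↥U (G.induce U) hcardU hchU _ hKclique hKV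
        have hvC : (v : V) ∈ C := by
          rcases v.2 with h | h
          · exact h
          · exact absurd h hvK
        have hclose : ∀ w, G.Adj ↑v w → w ∈ U := by
          intro w hw
          by_cases hwS : w ∈ S
          · exact Or.inr hwS
          · exact Or.inl (Reach.step hvC hw hwS)
        refine ⟨↑v, hvC, ?_⟩
        intro x y hvx hvy hne
        have hx : x ∈ U := hclose x hvx
        have hy : y ∈ U := hclose y hvy
        have : (G.induce U).Adj ⟨x, hx⟩ ⟨y, hy⟩ :=
          hvsimp ⟨x, hx⟩ ⟨y, hy⟩ hvx hvy (fun h => hne (congrArg Subtype.val h))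
        exact this
      obtain ⟨v, hvA, hvsimp⟩ := hside a b haS hbS hsep hmin
      obtain ⟨u, huB, husimp⟩ := hside b a hbS haS (fun h => hsep h.symm)
        (fun x hx => (hmin x hx).symm)
      have hvu : ¬ G.Adj v u := by
        intro h
        exact hsep ((hvA.step h (Reach.notMem huB)).trans huB.symm)
      by_cases hvK : v ∈ K
      · refine ⟨u, fun huK => ?_, husimp⟩
        have hne : v ≠ u := by rintro rfl; exact hsep (hvA.trans huB.symm)
        exact hvu (hK hvK huK hne)
      · exact ⟨v, hvK, hvsimp⟩
lemma exists_peo_aux :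
    ∀ (n : ℕ) (V : Type u) [Fintype V] (G : SimpleGraph V), Nat.card V ≤ n →
      IsChordal G → ∀ K : Set V, G.IsClique K →
      ∃ pos : V → ℕ, Function.Injective pos ∧
        (∀ v, pos v < Nat.card V - K.ncard →
          ∀ x y, G.Adj v x → G.Adj v y → pos v < pos x → pos v < pos y → x ≠ y → G.Adj x y) ∧
        (∀ v w, Nat.card V - K.ncard ≤ pos v → Nat.card V - K.ncard ≤ pos w → v ≠ w →
          G.Adj v w) := by
  intro n
  induction n with
  | zero =>
    intro V _ G hcard hch K hK
    have hVempty : IsEmpty V := by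
      rw [← Fintype.card_eq_zero_iff]
      have := Nat.card_eq_fintype_card (α := V)
      omega
    exact ⟨fun _ => 0, fun x => hVempty.elim x, fun v => hVempty.elim v,
      fun v => hVempty.elim v⟩
  | succ n ih =>
    intro V _ G hcard hch K hK
    classical
    by_cases hKuniv : K = Set.univ
    · refine ⟨fun v => (Fintype.equivFin V v : ℕ), fun x y h => ?_, ?_, ?_⟩
      · exact (Fintype.equivFin V).injective (Fin.ext h)
      · intro v hv
        rw [hKuniv, Set.ncard_univ] at hv
        omega
      · intro v w _ _ hne
        exact hK (by rw [hKuniv]; trivial) (by rw [hKuniv]; trivial) hne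
    · obtain ⟨v, hvK, hvsimp⟩ :=
        exists_simplicial_aux (Nat.card V) V G le_rfl hch K hK hKuniv
      set U : Set V := {v}ᶜ with hU
      letI : Fintype ↥U := (Set.toFinite U).fintype
      have hvU : v ∉ U := by simp [hU]
      have hcardU : Nat.card ↥U = Nat.card V - 1 := by
        rw [Nat.card_coe_set_eq, hU, Set.compl_eq_univ_diff,
          Set.ncard_diff_singleton_of_mem (Set.mem_univ v), Set.ncard_univ]
      have hVpos : 1 ≤ Nat.card V := by
        have := Nat.card_pos_iff.mpr ⟨⟨v⟩, inferInstance⟩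
        omega
      have hKU : K ⊆ U := by
        intro z hz
        simp only [hU, Set.mem_compl_iff, Set.mem_singleton_iff]
        rintro rfl
        exact hvK hz
      set K' : Set ↥U := {z : ↥U | (z : V) ∈ K} with hK'def
      have himg : Subtype.val '' K' = K := by
        ext z
        constructor
        · rintro ⟨⟨z', hz'⟩, hzK, rfl⟩
          exact hzK
        · intro hz
          exact ⟨⟨z, hKU hz⟩, hz, rfl⟩
      have hKcard : K'.ncard = K.ncard := by
        rw [← himg, Set.ncard_image_of_injective _ Subtype.val_injective]
      have hKle : K.ncard ≤ Nat.card V - 1 := by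
        rw [← hcardU, Nat.card_coe_set_eq]
        exact Set.ncard_le_ncard hKU (Set.toFinite U)
      have hK'clique : (G.induce U).IsClique K' := by
        intro z1 hz1 z2 hz2 hne
        exact hK hz1 hz2 (fun h => hne (Subtype.ext h))
      obtain ⟨pos', hinj', h1', h2'⟩ := ih ↥U (G.induce U)
        (by omega) (hch.induce U) K' hK'clique
      have key : Nat.card V - K.ncard = (Nat.card ↥U - K'.ncard) + 1 := by
        rw [hKcard, hcardU]
        omega
      set posf : V → ℕ := fun x => if hx : x = v then 0 else pos' ⟨x, hx⟩ + 1 with hposf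
      have hposv : posf v = 0 := dif_pos rfl
      have hposne : ∀ (x : V) (hx : ¬ x = v), posf x = pos' ⟨x, hx⟩ + 1 :=
        fun x hx => dif_neg hx
      refine ⟨posf, ?_, ?_, ?_⟩
      · intro x y h
        by_cases hx : x = v <;> by_cases hy : y = v
        · rw [hx, hy]
        · rw [hx, hposv, hposne y hy] at h
          omega
        · rw [hy, hposv, hposne x hx] at h
          omega
        · rw [hposne x hx, hposne y hy] at h
          have hh : pos' ⟨x, hx⟩ = pos' ⟨y, hy⟩ := by omega
          exact congrArg Subtype.val (hinj' hh)
      · intro z hz x y hadj1 hadj2 hlt1 hlt2 hne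
        by_cases hzv : z = v
        · subst hzv
          exact hvsimp x y hadj1 hadj2 hne
        · have hxv : ¬ x = v := by
            rintro rfl
            rw [hposv] at hlt1
            omega
          have hyv : ¬ y = v := by
            rintro rfl
            rw [hposv] at hlt2
            omega
          rw [hposne z hzv] at hz hlt1 hlt2
          rw [hposne x hxv] at hlt1
          rw [hposne y hyv] at hlt2
          have hadj1' : (G.induce U).Adj ⟨z, hzv⟩ ⟨x, hxv⟩ := hadj1
          have hadj2' : (G.induce U).Adj ⟨z, hzv⟩ ⟨y, hyv⟩ := hadj2
          exact h1' ⟨z, hzv⟩ (by omega) ⟨x, hxv⟩ ⟨y, hyv⟩ hadj1' hadj2'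
            (by omega) (by omega) (fun h => hne (congrArg Subtype.val h))
      · intro z w hz hw hne
        have hzv : ¬ z = v := by
          rintro rfl
          rw [hposv] at hz
          omega
        have hwv : ¬ w = v := by
          rintro rfl
          rw [hposv] at hw
          omega
        rw [hposne z hzv] at hz
        rw [hposne w hwv] at hw
        exact h2' ⟨z, hzv⟩ ⟨w, hwv⟩ (by omega) (by omega)
          (fun h => hne (congrArg Subtype.val h))
lemma shortest_second {V : Type*} {G : SimpleGraph V} (hconn : G.Connected) {u u' v : V}
    (h : G.Adj u u') (q : G.Walk u' v)
    (hlen : (Walk.cons h q).length = G.dist u v) :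
    ∀ x, x ∈ q.support → G.Adj u x → x = u' := by
  classical
  intro x hx hux
  have hspec := q.take_spec hx
  have hq : q.length = (q.takeUntil x hx).length + (q.dropUntil x hx).length := by
    rw [← Walk.length_append, hspec]
  have hdxv : G.dist x v ≤ (q.dropUntil x hx).length := dist_le _
  have hdux : G.dist u x ≤ 1 := by
    have := dist_le (Walk.cons hux Walk.nil)
    simpa using this
  have htri : G.dist u v ≤ G.dist u x + G.dist x v := hconn.dist_triangle
  rw [Walk.length_cons] at hlen
  have h0 : (q.takeUntil x hx).length = 0 := by omega
  exact (Walk.eq_of_length_eq_zero h0).symm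
theorem stmt_4 {V : Type*} [Fintype V] (G : SimpleGraph V)
    (hconn : G.Connected) (hchordal : IsChordal G) :
    ∃ c : Sym2 V → ℕ, IsVSRC G c ∧
      ∀ e ∈ G.edgeSet, c e < Fintype.card V - G.cliqueNum + 1 := by
  classical
  obtain ⟨Kfin, hKcl⟩ := G.exists_isNClique_cliqueNum
  have hKclique : G.IsClique (↑Kfin : Set V) := hKcl.1
  have hKcard : (↑Kfin : Set V).ncard = G.cliqueNum := by
    rw [Set.ncard_coe_finset]; exact hKcl.2
  obtain ⟨pos, hinj, h1, h2⟩ :=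
    exists_peo_aux (Nat.card V) V G le_rfl hchordal (↑Kfin) hKclique
  have hT : Nat.card V - (↑Kfin : Set V).ncard = Fintype.card V - G.cliqueNum := by
    rw [hKcard, Nat.card_eq_fintype_card]
  rw [hT] at h1 h2
  set T : ℕ := Fintype.card V - G.cliqueNum with hTdef
  set c : Sym2 V → ℕ := Sym2.lift ⟨fun a b => if min (pos a) (pos b) < T
    then min (pos a) (pos b) + 1 else 0, fun a b => by simp [min_comm]⟩ with hc
  have hcval : ∀ a b : V, c s(a, b) = if min (pos a) (pos b) < T
      then min (pos a) (pos b) + 1 else 0 := fun a b => by rw [hc, Sym2.lift_mk]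
  refine ⟨c, ?_, ?_⟩
  · intro u v p
    induction p with
    | nil => intro _ _; simp
    | @cons u u' v h q ihq =>
      intro hp hlen
      rw [Walk.cons_isPath_iff] at hp
      have huq : u ∉ q.support := hp.2
      have hql : q.length = G.dist u' v := by
        have hd1 : G.dist u u' ≤ 1 := by
          have := dist_le (Walk.cons h Walk.nil)
          simpa using this
        have htri : G.dist u v ≤ G.dist u u' + G.dist u' v := hconn.dist_triangle
        have hd2 : G.dist u' v ≤ q.length := dist_le q
        rw [Walk.length_cons] at hlen
        omega
      have ihn := ihq hp.1 hql
      rw [Walk.edges_cons, List.map_cons, List.nodup_cons]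
      refine ⟨?_, ihn⟩
      intro hmem
      obtain ⟨e, he, hce⟩ := List.mem_map.mp hmem
      revert he hce
      refine Sym2.ind (fun a b he hce => ?_) e
      have hab : G.Adj a b := q.adj_of_mem_edges he
      have haq : a ∈ q.support := q.fst_mem_support_of_mem_edges he
      have hbq : b ∈ q.support := q.snd_mem_support_of_mem_edges he
      have hsecond := shortest_second hconn h q hlen
      rw [hcval a b, hcval u u'] at hce
      by_cases hA : min (pos a) (pos b) < T <;> by_cases hB : min (pos u) (pos u') < T
      · -- both small: mins equal
        rw [if_pos hA, if_pos hB] at hce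
        have hmm : min (pos a) (pos b) = min (pos u) (pos u') := by omega
        rcases le_total (pos u) (pos u') with hle | hle
        · -- min is pos u; u would be a or b, impossible
          rw [min_eq_left hle] at hmm
          rcases min_choice (pos a) (pos b) with hm | hm <;> rw [hm] at hmm
          · exact huq (hinj hmm ▸ haq)
          · exact huq (hinj hmm ▸ hbq)
        · -- min is pos u'
          have hmin2 : min (pos u) (pos u') = pos u' := min_eq_right hle
          rw [hmin2] at hmm hB
          have huu' : u ≠ u' := h.ne
          have hposuu' : pos u' < pos u := by
            rcases lt_or_eq_of_le hle with hlt | heq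
            · exact hlt
            · exact absurd (hinj heq) (Ne.symm huu')
          rcases min_choice (pos a) (pos b) with hm | hm <;> rw [hm] at hmm
          · -- pos a = pos u' => a = u'
            have hau' : a = u' := hinj hmm
            subst hau'
            have hposab : pos a < pos b := by
              have : min (pos a) (pos b) ≤ pos b := min_le_right _ _
              rw [hm] at this
              rcases lt_or_eq_of_le this with hlt | heq
              · exact hlt
              · exact absurd (hinj heq) hab.ne
            have hub : G.Adj u b :=
              h1 a (by omega) u b h.symm hab hposuu' hposab
                (fun hub => huq (hub ▸ hbq))
            have := hsecond b hbq hub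
            exact hab.ne' this
          · -- pos b = pos u' => b = u'
            have hbu' : b = u' := hinj hmm
            subst hbu'
            have hposba : pos b < pos a := by
              have : min (pos a) (pos b) ≤ pos a := min_le_left _ _
              rw [hm] at this
              rcases lt_or_eq_of_le this with hlt | heq
              · exact hlt
              · exact absurd (hinj heq) hab.ne'
            have hua : G.Adj u a :=
              h1 b (by omega) u a h.symm hab.symm hposuu' hposba
                (fun hua => huq (hua ▸ haq))
            have := hsecond a haq hua
            exact hab.ne this
      · rw [if_pos hA, if_neg hB] at hce; omega
      · rw [if_neg hA, if_pos hB] at hce; omega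
      · -- both large: all in top clique
        push_neg at hA hB
        have hTa : T ≤ pos a := le_trans hA (min_le_left _ _)
        have hTb : T ≤ pos b := le_trans hA (min_le_right _ _)
        have hTu : T ≤ pos u := le_trans hB (min_le_left _ _)
        have hua : G.Adj u a := h2 u a hTu hTa (fun hEq => huq (hEq ▸ haq))
        have hub : G.Adj u b := h2 u b hTu hTb (fun hEq => huq (hEq ▸ hbq))
        have ha' := hsecond a haq hua
        have hb' := hsecond b hbq hub
        exact hab.ne (ha'.trans hb'.symm)
  · intro e he
    revert he
    refine Sym2.ind (fun a b he => ?_) e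
    rw [hcval a b]
    split <;> omega
end

section
/- For every finite simple graph G, the line graph L(G) satisfies vsrc(L(G)) ≤ |V(G)|. -/
open SimpleGraph

section Aux

variable {V : Type*} [Fintype V] (G : SimpleGraph V)

/-- Index of a vertex. -/
noncomputable def vIdx (v : V) : ℕ := (Fintype.equivFin V v : ℕ)

lemma vIdx_lt (v : V) : vIdx v < Fintype.card V := (Fintype.equivFin V v).isLt

lemma vIdx_inj : Function.Injective (vIdx (V := V)) := by
  intro a b h
  exact (Fintype.equivFin V).injective (Fin.ext h)

/-- Color an edge of the line graph by the minimal index of a common vertex. -/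
noncomputable def vsrcColor : Sym2 G.edgeSet → ℕ :=
  Sym2.lift ⟨fun e f =>
    sInf {n | ∃ v : V, vIdx v = n ∧ v ∈ (e : Sym2 V) ∧ v ∈ (f : Sym2 V)},
    fun e f => by
      have hset : {n | ∃ v : V, vIdx v = n ∧ v ∈ (e : Sym2 V) ∧ v ∈ (f : Sym2 V)} =
          {n | ∃ v : V, vIdx v = n ∧ v ∈ (f : Sym2 V) ∧ v ∈ (e : Sym2 V)} := by
        ext n
        constructor <;> rintro ⟨v, h1, h2, h3⟩ <;> exact ⟨v, h1, h3, h2⟩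
      dsimp only
      rw [hset]⟩

lemma vsrcColor_spec {e f : G.edgeSet} (h : ∃ v : V, v ∈ (e : Sym2 V) ∧ v ∈ (f : Sym2 V)) :
    ∃ v : V, vIdx v = vsrcColor G s(e, f) ∧ v ∈ (e : Sym2 V) ∧ v ∈ (f : Sym2 V) := by
  obtain ⟨v, hv1, hv2⟩ := h
  have hne : {n | ∃ v : V, vIdx v = n ∧ v ∈ (e : Sym2 V) ∧ v ∈ (f : Sym2 V)}.Nonempty :=
    ⟨vIdx v, v, rfl, hv1, hv2⟩
  have := Nat.sInf_mem hne
  exact this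

lemma vsrc_key (u v : G.edgeSet) (p : G.lineGraph.Walk u v) (hp : p.IsPath)
    (hd : p.length = G.lineGraph.dist u v) : (p.edges.map (vsrcColor G)).Nodup := by
  classical
  induction p with
  | nil => simp
  | @cons u w v h q ih =>
    rw [Walk.cons_isPath_iff] at hp
    obtain ⟨hq_path, hu_not⟩ := hp
    rw [Walk.length_cons] at hd
    -- q is a shortest path from w to v
    have hqlen : q.length = G.lineGraph.dist w v := by
      have h1 : G.lineGraph.dist w v ≤ q.length := dist_le q
      rcases lt_or_eq_of_le h1 with hlt | heq
      · exfalso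
        obtain ⟨r, hr⟩ := (Reachable.exists_walk_length_eq_dist ⟨q⟩ : ∃ r : G.lineGraph.Walk w v,
          r.length = G.lineGraph.dist w v)
        have h2 : G.lineGraph.dist u v ≤ (Walk.cons h r).length := dist_le _
        rw [Walk.length_cons, hr] at h2
        omega
      · omega
    rw [Walk.edges_cons, List.map_cons, List.nodup_cons]
    refine ⟨?_, ih hq_path hqlen⟩
    intro hmem
    obtain ⟨e, he, hce⟩ := List.mem_map.mp hmem
    obtain ⟨d, hdarts, rfl⟩ := List.mem_map.mp (by rwa [Walk.edges] at he :
      e ∈ q.darts.map SimpleGraph.Dart.edge)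
    -- common vertex of u and w
    have huw := h
    rw [lineGraph_adj_iff_exists] at huw
    obtain ⟨hune, hex⟩ := huw
    obtain ⟨a, ha_idx, ha_u, ha_w⟩ := vsrcColor_spec G hex
    -- common vertex of d.fst and d.snd
    have hdadj := d.adj
    rw [lineGraph_adj_iff_exists] at hdadj
    obtain ⟨hdne, hdex⟩ := hdadj
    obtain ⟨b, hb_idx, hb_fst, hb_snd⟩ := vsrcColor_spec G hdex
    have hedge : d.edge = s(d.fst, d.snd) := rfl
    rw [hedge] at hce
    have hab : a = b := vIdx_inj (by rw [ha_idx, hb_idx, hce])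
    subst hab
    -- d.snd is in q.support.tail, hence ≠ w and in q.support
    have hsnd_tail : d.snd ∈ q.support.tail := by
      rw [← Walk.map_snd_darts]
      exact List.mem_map.mpr ⟨d, hdarts, rfl⟩
    have hsupp_eq : q.support = w :: q.support.tail := q.support_eq_cons
    have hw_not_tail : w ∉ q.support.tail := by
      have := hq_path.support_nodup
      rw [hsupp_eq] at this
      exact (List.nodup_cons.mp this).1
    have hsnd_ne_w : d.snd ≠ w := fun hh => hw_not_tail (hh ▸ hsnd_tail)
    have hsnd_supp : d.snd ∈ q.support := by
      rw [hsupp_eq]; exact List.mem_cons_of_mem _ hsnd_tail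
    have hu_ne_snd : u ≠ d.snd := fun hh => hu_not (hh ▸ hsnd_supp)
    -- u is adjacent to d.snd in the line graph
    have hadj : G.lineGraph.Adj u d.snd := by
      rw [lineGraph_adj_iff_exists]
      exact ⟨hu_ne_snd, a, ha_u, hb_snd⟩
    -- split q at d.snd
    have hsplit := q.take_spec hsnd_supp
    have hlen_split : (q.takeUntil d.snd hsnd_supp).length +
        (q.dropUntil d.snd hsnd_supp).length = q.length := by
      have := congr_arg Walk.length hsplit
      rwa [Walk.length_append] at this
    have htake_pos : 1 ≤ (q.takeUntil d.snd hsnd_supp).length := by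
      by_contra hc
      push_neg at hc
      exact hsnd_ne_w (Walk.eq_of_length_eq_zero (p := q.takeUntil d.snd hsnd_supp) (by omega)).symm
    have hshort : G.lineGraph.dist u v ≤
        (Walk.cons hadj (q.dropUntil d.snd hsnd_supp)).length := dist_le _
    rw [Walk.length_cons] at hshort
    omega

end Aux

theorem stmt_5 {V : Type*} [Fintype V] (G : SimpleGraph V) :
    ∃ c : Sym2 G.edgeSet → ℕ, IsVSRC G.lineGraph c ∧
      ∀ e ∈ G.lineGraph.edgeSet, c e < Fintype.card V := by
  refine ⟨vsrcColor G, fun u v p hp hd => vsrc_key G u v p hp hd, ?_⟩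
  intro e he
  induction e with
  | _ e₁ e₂ =>
    rw [mem_edgeSet, lineGraph_adj_iff_exists] at he
    obtain ⟨a, ha_idx, _, _⟩ := vsrcColor_spec G he.2
    rw [← ha_idx]
    exact vIdx_lt a
end

section
/- Let G be a finite simple graph that is k-perfectly orientable: there exists an orientation of its edges (an assignment to each edge {u,v} of one of its endpoints as head) such that for every vertex v, the set of out-neighbors of v can be partitioned into at most k sets each inducing a clique in G. Then vsrc(G) ≤ k·|V(G)|. -/
open SimpleGraph

private lemma aux_cancel (k a b r1 r2 : ℕ) (h1 : r1 < k) (h2 : r2 < k)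
    (h : k * a + r1 = k * b + r2) : a = b ∧ r1 = r2 := by
  have hk : 0 < k := by omega
  have hd : (k * a + r1) / k = (k * b + r2) / k := by rw [h]
  rw [Nat.mul_add_div hk, Nat.mul_add_div hk, Nat.div_eq_of_lt h1, Nat.div_eq_of_lt h2,
    Nat.add_zero, Nat.add_zero] at hd
  subst hd
  exact ⟨rfl, Nat.add_left_cancel h⟩

/-- If `G` is `k`-perfectly orientable — there is an orientation (a choice `D e ∈ e` of a head
for each edge `e`) such that the out-neighbors of every vertex can be partitioned into at most
`k` sets each inducing a clique — then `vsrc(G) ≤ k·|V(G)|`. Here `u` is an out-neighbor of `v`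
if `G.Adj v u` and the head of the edge `s(v,u)` is `u`; the partition of the out-neighborhood
of `v` is given by the color classes of `f v`. -/
theorem stmt_6 {V : Type*} [Fintype V] (G : SimpleGraph V) (k : ℕ)
    (D : Sym2 V → V) (hD : ∀ e ∈ G.edgeSet, D e ∈ e)
    (f : V → V → ℕ)
    (hfk : ∀ v u : V, G.Adj v u → D s(v, u) = u → f v u < k)
    (hclique : ∀ (v : V) (i : ℕ),
      G.IsClique {u : V | G.Adj v u ∧ D s(v, u) = u ∧ f v u = i}) :
    ∃ c : Sym2 V → ℕ, IsVSRC G c ∧ ∀ e ∈ G.edgeSet, c e < k * Fintype.card V := by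
  classical
  set n := Fintype.card V with hn
  let idx : V → ℕ := fun v => (Fintype.equivFin V v : ℕ)
  have idx_lt : ∀ v, idx v < n := fun v => (Fintype.equivFin V v).isLt
  have idx_inj : Function.Injective idx := fun a b h => by
    have := Fin.val_injective h
    exact (Fintype.equivFin V).injective this
  let T : Sym2 V → V := fun e => if he : e ∈ G.edgeSet then Sym2.Mem.other (hD e he) else D e
  let c : Sym2 V → ℕ := fun e => k * idx (T e) + f (T e) (D e)
  have hspec : ∀ e (_ : e ∈ G.edgeSet),
      s(T e, D e) = e ∧ G.Adj (T e) (D e) ∧ f (T e) (D e) < k := by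
    intro e he
    have h1 : s(D e, Sym2.Mem.other (hD e he)) = e := Sym2.other_spec (hD e he)
    have hT : T e = Sym2.Mem.other (hD e he) := by simp [T, he]
    have h2 : s(T e, D e) = e := by rw [hT, Sym2.eq_swap]; exact h1
    have hadj : G.Adj (T e) (D e) := by
      rw [← SimpleGraph.mem_edgeSet, h2]; exact he
    refine ⟨h2, hadj, ?_⟩
    exact hfk (T e) (D e) hadj (by rw [h2])
  -- cancellation
  have hcancel : ∀ e1 e2, e1 ∈ G.edgeSet → e2 ∈ G.edgeSet → c e1 = c e2 →
      T e1 = T e2 ∧ f (T e1) (D e1) = f (T e2) (D e2) := by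
    intro e1 e2 h1 h2 hc
    obtain ⟨-, -, hf1⟩ := hspec e1 h1
    obtain ⟨-, -, hf2⟩ := hspec e2 h2
    have hcc : k * idx (T e1) + f (T e1) (D e1) = k * idx (T e2) + f (T e2) (D e2) := hc
    obtain ⟨hi, hf⟩ := aux_cancel k _ _ _ _ hf1 hf2 hcc
    exact ⟨idx_inj hi, hf⟩
  refine ⟨c, ?_, ?_⟩
  · intro u v p
    induction p with
    | nil => simp
    | @cons u w v hadj q ih =>
      intro hp hlen
      rw [SimpleGraph.Walk.cons_isPath_iff] at hp
      have hql : q.length = G.dist w v := by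
        have hle : G.dist w v ≤ q.length := SimpleGraph.dist_le q
        have hr : G.Reachable w v := ⟨q⟩
        obtain ⟨q', hq'⟩ := hr.exists_walk_length_eq_dist
        have h3 : G.dist u v ≤ (SimpleGraph.Walk.cons hadj q').length :=
          SimpleGraph.dist_le _
        simp only [SimpleGraph.Walk.length_cons] at h3 hlen
        omega
      have ihq := ih hp.1 hql
      rw [SimpleGraph.Walk.edges_cons, List.map_cons, List.nodup_cons]
      refine ⟨?_, ihq⟩
      intro hmem
      obtain ⟨e, heq, hce⟩ := List.mem_map.mp hmem
      have he1 : s(u, w) ∈ G.edgeSet := hadj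
      have he2 : e ∈ G.edgeSet := q.edges_subset_edgeSet heq
      obtain ⟨hT1, hadj1, -⟩ := hspec s(u, w) he1
      obtain ⟨hT2, hadj2, -⟩ := hspec e he2
      obtain ⟨hTeq, hfeq⟩ := hcancel s(u, w) e he1 he2 hce.symm
      -- T s(u,w) ∈ {u, w}
      rcases Sym2.eq_iff.mp hT1 with ⟨ht, hh⟩ | ⟨ht, hh⟩
      · -- T s(u,w) = u : then u ∈ e, but u ∉ q.support
        have hse : s(u, D e) = e := by rw [← hTeq, ht] at hT2; exact hT2
        have : u ∈ q.support :=
          q.fst_mem_support_of_mem_edges (by rw [hse]; exact heq)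
        exact hp.2 this
      · -- T s(u,w) = w, D s(u,w) = u
        have hTw : T e = w := by rw [← hTeq, ht]
        have hDe_adj : G.Adj w (D e) := hTw ▸ hadj2
        have hmem_u : u ∈ {x : V | G.Adj w x ∧ D s(w, x) = x ∧ f w x = f w u} := by
          refine ⟨hadj.symm, ?_, rfl⟩
          have hsw : s(w, u) = s(u, w) := Sym2.eq_swap
          rw [hsw, hh]
        have he_eq : s(w, D e) = e := by rw [← hTw]; exact hT2
        have hmem_h2 : D e ∈ {x : V | G.Adj w x ∧ D s(w, x) = x ∧ f w x = f w u} := by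
          refine ⟨hDe_adj, by rw [he_eq], ?_⟩
          have hff := hfeq
          rw [ht, hh, hTw] at hff
          exact hff.symm
        by_cases hueq : u = D e
        · have : u ∈ q.support := by
            refine q.snd_mem_support_of_mem_edges (t := w) (u := u) ?_
            rw [hueq, he_eq]; exact heq
          exact hp.2 this
        · have hu_h2 : G.Adj u (D e) := hclique w (f w u) hmem_u hmem_h2 hueq
          -- e must be the first edge of q
          cases q with
          | nil => simp at heq
          | @cons w x v hwx q' =>
            rw [SimpleGraph.Walk.edges_cons, List.mem_cons] at heq
            rcases heq with heq | heq
            · -- e = s(w, x), so D e = x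
              subst heq
              have hx : D s(w, x) = x := by
                rcases Sym2.eq_iff.mp he_eq with ⟨-, h⟩ | ⟨h, -⟩
                · exact h
                · exact absurd h hwx.ne
              have hdle : G.dist u v ≤ (SimpleGraph.Walk.cons (hx ▸ hu_h2) q').length :=
                SimpleGraph.dist_le _
              simp only [SimpleGraph.Walk.length_cons] at hdle hlen
              omega
            · -- e ∈ q'.edges : then w ∈ q'.support, contradiction
              have : w ∈ q'.support :=
                q'.fst_mem_support_of_mem_edges (by rw [he_eq]; exact heq)
              rw [SimpleGraph.Walk.cons_isPath_iff] at hp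
              exact hp.1.2 this
  · intro e he
    obtain ⟨-, -, hf⟩ := hspec e he
    have h1 : c e < k * (idx (T e) + 1) := by
      have : c e = k * idx (T e) + f (T e) (D e) := rfl
      rw [this, Nat.mul_add, Nat.mul_one]
      omega
    have h2 : k * (idx (T e) + 1) ≤ k * n :=
      Nat.mul_le_mul_left k (idx_lt (T e))
    omega
end

section
/- Let G be a finite simple graph admitting a very strong rainbow coloring with at most k colors. Then G is k-perfectly groupable: for every vertex v, the neighborhood of v can be partitioned into at most k sets each inducing a clique in G. Equivalently, for any VSRC c and any vertex v, for each color the set of neighbors u of v with c({v,u}) equal to that color is a clique. -/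
open SimpleGraph

lemma vsrc_clique {V : Type*} (G : SimpleGraph V) (c : Sym2 V → ℕ) (hc : IsVSRC G c)
    (v : V) (i : ℕ) : G.IsClique {u : V | G.Adj v u ∧ c s(v, u) = i} := by
  intro u hu w hw huw
  by_contra hadj
  have h1 : G.Adj u v := hu.1.symm
  have h2 : G.Adj v w := hw.1
  -- the walk u - v - w
  let p : G.Walk u w := Walk.cons h1 (Walk.cons h2 Walk.nil)
  have hlen : p.length = 2 := rfl
  have hdle : G.dist u w ≤ 2 := by
    have := SimpleGraph.dist_le p
    simpa [hlen] using this
  have hne01 : G.dist u w ≠ 0 := by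
    intro h
    have hr : G.Reachable u w := ⟨p⟩
    exact huw ((SimpleGraph.Reachable.dist_eq_zero_iff hr).mp h)
  have hne1 : G.dist u w ≠ 1 := by
    intro h
    exact hadj ((SimpleGraph.dist_eq_one_iff_adj).mp h)
  have hd : G.dist u w = 2 := by omega
  have hpath : p.IsPath := by
    constructor
    · constructor
      simp [p, Walk.edges]
      exact ⟨fun h => absurd h (G.ne_of_adj h1), huw⟩
    · simp [p, Walk.support]
      refine ⟨⟨G.ne_of_adj h1, huw⟩, G.ne_of_adj h2⟩
  have hnd := hc u w p hpath (by omega)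
  have : (p.edges.map c) = [c s(u, v), c s(v, w)] := rfl
  rw [this] at hnd
  simp at hnd
  apply hnd
  rw [Sym2.eq_swap]
  rw [hu.2, hw.2]

/-- If `G` admits a very strong rainbow coloring with at most `k` colors then `G` is
`k`-perfectly groupable: the neighborhood of every vertex can be partitioned into at most `k`
sets each inducing a clique.  Moreover, for any VSRC `c`, any vertex `v` and any color `i`,
the set of neighbors `u` of `v` with `c s(v,u) = i` is a clique. -/
theorem stmt_7 {V : Type*} [Fintype V] (G : SimpleGraph V) (k : ℕ)
    (c : Sym2 V → ℕ) (hc : IsVSRC G c) (hk : ∀ e ∈ G.edgeSet, c e < k) :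
    (∀ v : V, ∃ f : V → ℕ, (∀ u : V, G.Adj v u → f u < k) ∧
      ∀ i : ℕ, G.IsClique {u : V | G.Adj v u ∧ f u = i}) ∧
    (∀ (v : V) (i : ℕ), G.IsClique {u : V | G.Adj v u ∧ c s(v, u) = i}) := by
  refine ⟨fun v => ⟨fun u => c s(v, u), fun u hu => hk _ hu, fun i => vsrc_clique G c hc v i⟩,
    fun v i => vsrc_clique G c hc v i⟩
end

section
/- Let G be a finite connected simple graph admitting a very strong rainbow coloring with at most k colors, and suppose every clique of G has at most t vertices, where k ≥ 1 and t ≥ 2. Then every vertex of G has degree at most k·t, and |V(G)| ≤ (k·t)^k. -/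
open SimpleGraph

private lemma sumpow_le (D n : ℕ) : ∑ d ∈ Finset.range (n + 1), D ^ d ≤ (D + 1) ^ n := by
  induction n with
  | zero => simp
  | succ n ih =>
    rw [Finset.sum_range_succ']
    have h1 : ∑ i ∈ Finset.range (n + 1), D ^ (i + 1)
        = D * ∑ i ∈ Finset.range (n + 1), D ^ i := by
      rw [Finset.mul_sum]; exact Finset.sum_congr rfl fun i _ => by ring
    have h2 : 1 ≤ (D + 1) ^ n := Nat.one_le_pow _ _ (by omega)
    rw [h1]
    calc D * ∑ i ∈ Finset.range (n + 1), D ^ i + D ^ 0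
        ≤ D * (D + 1) ^ n + 1 := by
          simpa using Nat.add_le_add_right (Nat.mul_le_mul_left D ih) 1
      _ ≤ (D + 1) ^ (n + 1) := by rw [pow_succ]; nlinarith

theorem stmt_10 {V : Type*} [Fintype V] [DecidableEq V] (G : SimpleGraph V)
    [DecidableRel G.Adj] (hconn : G.Connected) (k t : ℕ) (hk : 1 ≤ k) (ht : 2 ≤ t)
    (c : Sym2 V → ℕ) (hc : IsVSRC G c) (hck : ∀ e ∈ G.edgeSet, c e < k)
    (hclique : ∀ s : Finset V, G.IsClique (s : Set V) → s.card ≤ t) :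
    (∀ v : V, G.degree v ≤ k * t) ∧ Fintype.card V ≤ (k * t) ^ k := by
  -- same-color neighbors are adjacent
  have key : ∀ v u w : V, G.Adj v u → G.Adj v w → u ≠ w →
      c s(v, u) = c s(v, w) → G.Adj u w := by
    intro v u w huv hvw huw hcol
    by_contra hadj
    set p : G.Walk u w := Walk.cons huv.symm (Walk.cons hvw Walk.nil) with hp
    have hpath : p.IsPath := by
      rw [Walk.isPath_def]
      simp [hp, Walk.support_cons, List.nodup_cons, huv.ne', hvw.ne, huw]
    have hd : G.dist u w = 2 := by
      have h2 : G.dist u w ≤ 2 := by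
        have := G.dist_le p
        simpa [hp] using this
      have h0 : G.dist u w ≠ 0 := by
        rw [dist_ne_zero_iff_ne_and_reachable]
        exact ⟨huw, (huv.symm.toWalk.append hvw.toWalk).reachable⟩
      have h1 : G.dist u w ≠ 1 := fun h => hadj (dist_eq_one_iff_adj.1 h)
      omega
    have := hc u w p hpath (by simp [hp, hd])
    simp only [hp, Walk.edges_cons, Walk.edges_nil, List.map_cons, List.map_nil,
      List.nodup_cons] at this
    exact this.1 (by rw [List.mem_singleton, Sym2.eq_swap]; exact hcol)
  -- degree bound
  have hdeg : ∀ v : V, G.degree v ≤ k * (t - 1) := by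
    intro v
    set fib : ℕ → Finset V := fun i =>
      (G.neighborFinset v).filter (fun u => c s(v, u) = i) with hfib
    have hfibcard : ∀ i, (fib i).card ≤ t - 1 := by
      intro i
      have hcl : G.IsClique ((insert v (fib i) : Finset V) : Set V) := by
        intro x hx y hy hxy
        simp only [Finset.coe_insert, Set.mem_insert_iff, Finset.mem_coe, hfib,
          Finset.mem_filter, mem_neighborFinset] at hx hy
        rcases hx with rfl | ⟨hx1, hx2⟩
        · rcases hy with rfl | ⟨hy1, _⟩
          · exact absurd rfl hxy
          · exact hy1
        · rcases hy with rfl | ⟨hy1, hy2⟩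
          · exact hx1.symm
          · exact key v x y hx1 hy1 hxy (hx2.trans hy2.symm)
      have := hclique _ hcl
      have hv : v ∉ fib i := by
        simp [hfib, mem_neighborFinset, G.irrefl]
      rw [Finset.card_insert_of_notMem hv] at this
      omega
    have hsub : G.neighborFinset v ⊆ (Finset.range k).biUnion fib := by
      intro u hu
      rw [mem_neighborFinset] at hu
      refine Finset.mem_biUnion.2 ⟨c s(v, u), Finset.mem_range.2 ?_, ?_⟩
      · exact hck _ (G.mem_edgeSet.2 hu)
      · simp [hfib, mem_neighborFinset, hu]
    calc G.degree v = (G.neighborFinset v).card := (G.card_neighborFinset_eq_degree v).symm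
      _ ≤ ((Finset.range k).biUnion fib).card := Finset.card_le_card hsub
      _ ≤ ∑ i ∈ Finset.range k, (fib i).card := Finset.card_biUnion_le
      _ ≤ ∑ _i ∈ Finset.range k, (t - 1) := Finset.sum_le_sum fun i _ => hfibcard i
      _ = k * (t - 1) := by simp [Finset.sum_const, Nat.smul_one_eq_cast, mul_comm]
  refine ⟨fun v => (hdeg v).trans (Nat.mul_le_mul_left k (by omega)), ?_⟩
  -- distance bound
  have hdist : ∀ u v : V, G.dist u v ≤ k := by
    intro u v
    obtain ⟨p, hp, hl⟩ := hconn.exists_path_of_dist u v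
    have hn := hc u v p hp hl
    have hsub : (p.edges.map c).toFinset ⊆ Finset.range k := by
      intro x hx
      simp only [List.mem_toFinset, List.mem_map] at hx
      obtain ⟨e, he, rfl⟩ := hx
      exact Finset.mem_range.2 (hck e (p.edges_subset_edgeSet he))
    have := Finset.card_le_card hsub
    rw [List.toFinset_card_of_nodup hn, Finset.card_range, List.length_map,
      Walk.length_edges] at this
    omega
  have : Nonempty V := hconn.nonempty
  obtain ⟨v0⟩ := this
  set S : ℕ → Finset V := fun d => Finset.univ.filter (fun u => G.dist v0 u = d) with hS
  -- level sets grow by at most the degree factor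
  have hball : ∀ d, (S d).card ≤ (k * (t - 1)) ^ d := by
    intro d
    induction d with
    | zero =>
      have : S 0 ⊆ {v0} := by
        intro u hu
        simp only [hS, Finset.mem_filter] at hu
        have := hu.2
        rw [Connected.dist_eq_zero_iff hconn] at this
        simp [this]
      simpa using Finset.card_le_card this
    | succ d ih =>
      have hsub : S (d + 1) ⊆ (S d).biUnion (fun w => G.neighborFinset w) := by
        intro u hu
        simp only [hS, Finset.mem_filter] at hu
        have hdu : G.dist u v0 = d + 1 := by rw [SimpleGraph.dist_comm]; exact hu.2
        obtain ⟨p, hl⟩ := exists_walk_of_dist_ne_zero (by omega : G.dist u v0 ≠ 0)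
        cases p with
        | nil => simp at hdu
        | @cons _ w _ h q =>
          have hql : q.length = d := by
            simp only [Walk.length_cons] at hl; omega
          have hwle : G.dist w v0 ≤ d := hql ▸ G.dist_le q
          have htri : G.dist u v0 ≤ G.dist u w + G.dist w v0 :=
            hconn.dist_triangle
          have huw1 : G.dist u w ≤ 1 := by
            have := G.dist_le h.toWalk
            simpa using this
          have hwd : G.dist w v0 = d := by omega
          refine Finset.mem_biUnion.2 ⟨w, ?_, ?_⟩
          · simp only [hS, Finset.mem_filter]
            exact ⟨Finset.mem_univ _, by rw [SimpleGraph.dist_comm]; exact hwd⟩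
          · rw [mem_neighborFinset]; exact h.symm
      calc (S (d + 1)).card ≤ ((S d).biUnion (fun w => G.neighborFinset w)).card :=
            Finset.card_le_card hsub
        _ ≤ ∑ w ∈ S d, (G.neighborFinset w).card := Finset.card_biUnion_le
        _ ≤ ∑ _w ∈ S d, k * (t - 1) := Finset.sum_le_sum fun w _ => by
            rw [G.card_neighborFinset_eq_degree]; exact hdeg w
        _ = (S d).card * (k * (t - 1)) := by simp [Finset.sum_const, mul_comm]
        _ ≤ (k * (t - 1)) ^ d * (k * (t - 1)) := Nat.mul_le_mul_right _ ih
        _ = (k * (t - 1)) ^ (d + 1) := (pow_succ _ _).symm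
  have hcover : (Finset.univ : Finset V) ⊆ (Finset.range (k + 1)).biUnion S := by
    intro u _
    refine Finset.mem_biUnion.2 ⟨G.dist v0 u, Finset.mem_range.2 ?_, ?_⟩
    · exact Nat.lt_succ_of_le (hdist v0 u)
    · simp [hS]
  calc Fintype.card V = (Finset.univ : Finset V).card := rfl
    _ ≤ ((Finset.range (k + 1)).biUnion S).card := Finset.card_le_card hcover
    _ ≤ ∑ d ∈ Finset.range (k + 1), (S d).card := Finset.card_biUnion_le
    _ ≤ ∑ d ∈ Finset.range (k + 1), (k * (t - 1)) ^ d :=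
        Finset.sum_le_sum fun d _ => hball d
    _ ≤ (k * (t - 1) + 1) ^ k := sumpow_le _ _
    _ ≤ (k * t) ^ k := Nat.pow_le_pow_left (by
        calc k * (t - 1) + 1 ≤ k * (t - 1) + k := by omega
          _ = k * (t - 1 + 1) := by ring
          _ = k * t := by rw [Nat.sub_add_cancel (by omega)]) k
end

section
/- Let G be a finite connected simple graph, let c be a very strong rainbow coloring of G, and let e1 and e2 be two distinct bridges of G. Then c(e1) ≠ c(e2). In other words, any VSRC of a connected graph assigns pairwise distinct colors to the bridges. -/
open SimpleGraph

theorem stmt_12 {V : Type*} [Fintype V] (G : SimpleGraph V) (hconn : G.Connected)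
    (c : Sym2 V → ℕ) (hc : IsVSRC G c) (e₁ e₂ : Sym2 V)
    (h₁ : G.IsBridge e₁) (h₂ : G.IsBridge e₂) (hne : e₁ ≠ e₂) :
    c e₁ ≠ c e₂ := by
  induction e₁ using Sym2.ind with | _ x y =>
  induction e₂ using Sym2.ind with | _ u v =>
  obtain ⟨hadj₁, hnr₁⟩ := And.intro (h₁.reachable_iff_adj.mp (hconn.preconnected x y)) (isBridge_iff.mp h₁)
  obtain ⟨hadj₂, hnr₂⟩ := And.intro (h₂.reachable_iff_adj.mp (hconn.preconnected u v)) (isBridge_iff.mp h₂)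
  set G1 := G \ fromEdgeSet {s(x, y)} with hG1
  set G2 := G \ fromEdgeSet {s(u, v)} with hG2
  -- e₂'s endpoints are adjacent in G1
  have huv1 : G1.Adj u v := by
    rw [hG1, sdiff_adj, fromEdgeSet_adj]
    exact ⟨hadj₂, fun h => hne h.1.symm⟩
  have hxy2 : G2.Adj x y := by
    rw [hG2, sdiff_adj, fromEdgeSet_adj]
    exact ⟨hadj₁, fun h => hne h.1⟩
  -- choose a ∈ {x, y} not G1-reachable to u
  have ha : ∃ a, (a = x ∨ a = y) ∧ ¬ G1.Reachable a u := by
    by_cases h : G1.Reachable x u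
    · refine ⟨y, Or.inr rfl, fun h' => hnr₁ (h.trans h'.symm)⟩
    · exact ⟨x, Or.inl rfl, h⟩
  obtain ⟨a, ha', hau⟩ := ha
  -- choose b ∈ {u, v} not G2-reachable from a
  have hb : ∃ b, (b = u ∨ b = v) ∧ ¬ G2.Reachable a b := by
    by_cases h : G2.Reachable a u
    · refine ⟨v, Or.inr rfl, fun h' => hnr₂ (h.symm.trans h')⟩
    · exact ⟨u, Or.inl rfl, h⟩
  obtain ⟨b, hb', hab⟩ := hb
  -- a is not G1-reachable to b
  have hab1 : ¬ G1.Reachable a b := by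
    intro h
    apply hau
    rcases hb' with rfl | rfl
    · exact h
    · exact h.trans huv1.symm.reachable
  -- every G-walk from a to b uses both edges
  have H1 : ∀ w : G.Walk a b, s(x, y) ∈ w.edges := by
    intro w
    by_contra hmem
    exact hab1 ⟨w.toDeleteEdge _ hmem⟩
  have H2 : ∀ w : G.Walk a b, s(u, v) ∈ w.edges := by
    intro w
    by_contra hmem
    exact hab ⟨w.toDeleteEdge _ hmem⟩
  obtain ⟨p, hp, hlen⟩ := hconn.exists_path_of_dist a b
  have hnd := hc a b p hp hlen
  intro hcc
  exact hne (List.inj_on_of_nodup_map hnd (H1 p) (H2 p) hcc)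
end

section
/- Let G be a finite connected cactus graph and let C be a cycle in G. For each vertex v of C, let S(v,C) be the set of vertices reachable from v in the graph obtained from G by deleting all edges of C. Then the sets S(v,C) over all vertices v of C form a partition of the vertex set of G: every vertex of G belongs to S(v,C) for exactly one vertex v of C. -/
open SimpleGraph

/-- A cactus graph: every edge belongs to at most one cycle, i.e. any two cycles sharing an
edge have the same edge set. -/
def IsCactus {V : Type*} (G : SimpleGraph V) : Prop :=
  ∀ (u v : V) (p : G.Walk u u) (q : G.Walk v v), p.IsCycle → q.IsCycle →
    (∃ e, e ∈ p.edges ∧ e ∈ q.edges) → ∀ e, e ∈ p.edges ↔ e ∈ q.edges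

namespace CactusAux

variable {V : Type*} {G : SimpleGraph V}

lemma pos_length_of_ne {u v : V} (q : G.Walk u v) (h : u ≠ v) : 0 < q.length := by
  cases q with
  | nil => exact absurd rfl h
  | cons _ _ => simp

lemma closed_end_mem_tail {u : V} (p : G.Walk u u) (hp : p ≠ SimpleGraph.Walk.nil) :
    u ∈ p.support.tail := by
  cases p with
  | nil => exact absurd rfl hp
  | cons h q => simpa using q.end_mem_support

/-- From a cycle at `a`, extract a path from `a` to any other vertex `b` on the cycle. -/
lemma arc2 {a b : V} (D : G.Walk a a) (hD : D.IsCycle) (hb : b ∈ D.support) (hab : b ≠ a) :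
    ∃ r : G.Walk a b, r.IsPath ∧ ¬r.Nil ∧
      (∀ e ∈ r.edges, e ∈ D.edges) ∧ (∀ x ∈ r.support, x ∈ D.support) := by
  classical
  cases D with
  | nil => exact absurd rfl hD.ne_nil
  | @cons _ a' _ hadj q =>
    have hq_path : q.IsPath := SimpleGraph.Walk.IsPath.mk' (by simpa using hD.support_nodup)
    have hbq : b ∈ q.support := by
      rcases (by simpa using hb : b = a ∨ b ∈ q.support) with h | h
      · exact absurd h hab
      · exact h
    have hnd := hq_path.support_nodup
    rw [← q.take_spec hbq, SimpleGraph.Walk.support_append] at hnd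
    have hdisj := List.disjoint_of_nodup_append hnd
    have hamem : a ∈ (q.dropUntil b hbq).support.tail :=
      SimpleGraph.Walk.end_mem_tail_support_of_ne hab _
    have hanot : a ∉ (q.takeUntil b hbq).support := fun h => hdisj h hamem
    refine ⟨SimpleGraph.Walk.cons hadj (q.takeUntil b hbq),
      (hq_path.takeUntil hbq).cons hanot, SimpleGraph.Walk.not_nil_cons, ?_, ?_⟩
    · intro e he
      rcases (by simpa using he : e = s(a, a') ∨ e ∈ (q.takeUntil b hbq).edges) with h | h
      · simp [h]
      · have := q.edges_takeUntil_subset hbq h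
        simp [this]
    · intro x hx
      rcases (by simpa using hx : x = a ∨ x ∈ (q.takeUntil b hbq).support) with h | h
      · simp [h]
      · have := q.support_takeUntil_subset hbq h
        simp [this]

/-- From a cycle `C` and two distinct vertices on it, extract a connecting path
along the cycle. -/
lemma arc {w a b : V} (C : G.Walk w w) (hC : C.IsCycle) (ha : a ∈ C.support)
    (hb : b ∈ C.support) (hab : b ≠ a) :
    ∃ r : G.Walk a b, r.IsPath ∧ ¬r.Nil ∧
      (∀ e ∈ r.edges, e ∈ C.edges) ∧ (∀ x ∈ r.support, x ∈ C.support) := by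
  classical
  have hbt : b ∈ C.support.tail := by
    rcases (by rw [C.support_eq_cons] at hb; exact List.mem_cons.mp hb : b = w ∨ b ∈ C.support.tail) with
      h | h
    · subst h
      exact closed_end_mem_tail C hC.ne_nil
    · exact h
  have hbD : b ∈ (C.rotate a ha).support := by
    refine List.mem_of_mem_tail ?_
    exact ((C.support_rotate a ha).mem_iff).mpr hbt
  obtain ⟨r, hr1, hr2, hr3, hr4⟩ := arc2 (C.rotate a ha) (hC.rotate ha) hbD hab
  refine ⟨r, hr1, hr2, fun e he => ?_, fun x hx => ?_⟩
  · exact ((C.rotate_edges a ha).mem_iff).mp (hr3 e he)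
  · have := hr4 x hx
    rcases (by rw [(C.rotate a ha).support_eq_cons] at this; exact List.mem_cons.mp this :
        x = a ∨ x ∈ (C.rotate a ha).support.tail) with h | h
    · subst h; exact ha
    · have : x ∈ C.support.tail := ((C.support_rotate a ha).mem_iff).mp h
      rw [C.support_eq_cons]
      exact List.mem_cons_of_mem _ this

lemma key {w : V} (hcactus : IsCactus G) (C : G.Walk w w) (hC : C.IsCycle) (n : ℕ) :
    ∀ (v₁ v₂ : V) (p : (G.deleteEdges {e | e ∈ C.edges}).Walk v₁ v₂), p.IsPath →
      p.length ≤ n → v₁ ∈ C.support → v₂ ∈ C.support → v₁ = v₂ := by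
  classical
  induction n with
  | zero =>
    intro v₁ v₂ p _ hlen _ _
    cases p with
    | nil => rfl
    | cons _ _ => simp at hlen
  | succ n ih =>
    intro v₁ v₂ p hp hlen h1 h2
    by_contra hne
    by_cases hmid : ∃ u, u ∈ p.support ∧ u ∈ C.support ∧ u ≠ v₁ ∧ u ≠ v₂
    · obtain ⟨u, hup, huC, hu1, hu2⟩ := hmid
      have hspec := congrArg SimpleGraph.Walk.length (p.take_spec hup)
      rw [SimpleGraph.Walk.length_append] at hspec
      have hdrop : 0 < (p.dropUntil u hup).length := pos_length_of_ne _ hu2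
      have hlt : (p.takeUntil u hup).length ≤ n := by omega
      exact hu1 ((ih v₁ u (p.takeUntil u hup) (hp.takeUntil hup) hlt h1 huC).symm)
    · push_neg at hmid
      have hmid' : ∀ x, x ∈ p.support → x ∈ C.support → x = v₁ ∨ x = v₂ := by
        intro x hx hxC
        by_cases h : x = v₁
        · exact Or.inl h
        · exact Or.inr (hmid x hx hxC h)
      -- edges of p avoid C's edges
      have hpE : ∀ e ∈ p.edges, e ∈ G.edgeSet ∧ e ∉ C.edges := by
        intro e he
        have := p.edges_subset_edgeSet he
        rw [SimpleGraph.edgeSet_deleteEdges] at this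
        exact ⟨this.1, this.2⟩
      -- the arc along C from v₂ to v₁
      obtain ⟨r, hr_path, hr_nil, hr_edges, hr_supp⟩ := arc C hC h2 h1 hne
      -- transfer p into G
      set pt := p.transfer G (fun e he => (hpE e he).1) with hpt
      have hpt_edges : pt.edges = p.edges := p.edges_transfer _
      have hpt_supp : pt.support = p.support := p.support_transfer _
      set D := pt.append r with hD
      have hDcyc : D.IsCycle := by
        rw [SimpleGraph.Walk.isCycle_def]
        refine ⟨⟨?_⟩, ?_, ?_⟩
        · rw [hD, SimpleGraph.Walk.edges_append, hpt_edges]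
          refine List.Nodup.append hp.isTrail.edges_nodup hr_path.isTrail.edges_nodup ?_
          intro e he1 he2
          exact (hpE e he1).2 (hr_edges e he2)
        · intro h
          have := congrArg SimpleGraph.Walk.length h
          rw [hD, SimpleGraph.Walk.length_append] at this
          simp only [SimpleGraph.Walk.length_nil] at this
          have hrpos := pos_length_of_ne r (fun h => hne h.symm)
          omega
        · rw [hD, SimpleGraph.Walk.tail_support_append, hpt_supp]
          refine List.Nodup.append (hp.support_nodup.tail) (hr_path.support_nodup.tail) ?_
          intro x hx1 hx2
          have hxp : x ∈ p.support := List.mem_of_mem_tail hx1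
          have hxC : x ∈ C.support := hr_supp x (List.mem_of_mem_tail hx2)
          rcases hmid' x hxp hxC with h | h
          · subst h
            have := hp.support_nodup
            rw [p.support_eq_cons] at this
            exact (List.nodup_cons.mp this).1 hx1
          · subst h
            have := hr_path.support_nodup
            rw [r.support_eq_cons] at this
            exact (List.nodup_cons.mp this).1 hx2
      -- D and C share an edge of r
      obtain ⟨e, her⟩ : ∃ e, e ∈ r.edges := by
        refine List.exists_mem_of_length_pos ?_
        rw [SimpleGraph.Walk.length_edges]
        exact pos_length_of_ne r (fun h => hne h.symm)
      have heD : e ∈ D.edges := by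
        rw [hD, SimpleGraph.Walk.edges_append]
        exact List.mem_append_right _ her
      have hiff := hcactus v₁ w D C hDcyc hC ⟨e, heD, hr_edges e her⟩
      obtain ⟨f, hf⟩ : ∃ f, f ∈ p.edges := by
        refine List.exists_mem_of_length_pos ?_
        rw [SimpleGraph.Walk.length_edges]
        exact pos_length_of_ne p hne
      have hfD : f ∈ D.edges := by
        rw [hD, SimpleGraph.Walk.edges_append, hpt_edges]
        exact List.mem_append_left _ hf
      exact (hpE f hf).2 ((hiff f).mp hfD)

end CactusAux

theorem stmt_13 {V : Type*} [Fintype V] (G : SimpleGraph V)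
    (hconn : G.Connected) (hcactus : IsCactus G)
    (w : V) (C : G.Walk w w) (hC : C.IsCycle) :
    ∀ x : V, ∃! v : V, v ∈ C.support ∧
      (G.deleteEdges {e | e ∈ C.edges}).Reachable v x := by
  classical
  set H := G.deleteEdges {e | e ∈ C.edges} with hH
  -- existence
  have hstep : ∀ {x y : V}, G.Adj x y →
      (∃ v ∈ C.support, H.Reachable v x) → ∃ v ∈ C.support, H.Reachable v y := by
    intro x y hxy ⟨v, hv, hr⟩
    by_cases he : s(x, y) ∈ C.edges
    · exact ⟨y, C.snd_mem_support_of_mem_edges he, Reachable.refl y⟩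
    · exact ⟨v, hv, hr.trans (SimpleGraph.Adj.reachable
        (SimpleGraph.deleteEdges_adj.mpr ⟨hxy, he⟩))⟩
  have hwalk : ∀ {a b : V} (_ : G.Walk a b), (∃ v ∈ C.support, H.Reachable v a) →
      ∃ v ∈ C.support, H.Reachable v b := by
    intro a b q
    induction q with
    | nil => exact id
    | cons h q ih => exact fun hx => ih (hstep h hx)
  intro x
  obtain ⟨q⟩ := hconn w x
  obtain ⟨v, hv, hr⟩ := hwalk q ⟨w, C.start_mem_support, Reachable.refl w⟩
  refine ⟨v, ⟨hv, hr⟩, ?_⟩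
  rintro y ⟨hy, hry⟩
  obtain ⟨p⟩ := hry.trans hr.symm
  exact CactusAux.key hcactus C hC p.toPath.1.length y v p.toPath.1 p.toPath.2
    le_rfl hy hv
end

section
/- Let G be a finite connected cactus graph, let C be a cycle in G, and let u be a vertex of G. Then there exists a unique vertex g on C, namely g = g(u,C), such that every path in G from u to any vertex of C passes through g. -/
open SimpleGraph

namespace CactusAux

variable {V : Type*} {G : SimpleGraph V}

/-- A walk with distinct endpoints has an edge. -/
lemma exists_edge_of_ne {a b : V} (p : G.Walk a b) (h : a ≠ b) :
    ∃ e, e ∈ p.edges := by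
  cases p with
  | nil => exact absurd rfl h
  | cons h' q => exact ⟨_, by rw [SimpleGraph.Walk.edges_cons]; exact List.mem_cons_self⟩

/-- In a nonempty closed walk, every support vertex lies in the support tail. -/
lemma mem_tail_of_mem_support_closed {w z : V} (c : G.Walk w w)
    (hc : ¬ c.Nil) (hz : z ∈ c.support) : z ∈ c.support.tail := by
  rw [SimpleGraph.Walk.support_eq_cons] at hz
  rcases List.mem_cons.mp hz with h | h
  · subst h
    have hlen : c.length ≠ 0 := fun h => hc (SimpleGraph.Walk.nil_iff_length_eq.mpr h)
    have hd : c.darts ≠ [] := by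
      intro h
      have := SimpleGraph.Walk.length_darts c
      rw [h] at this
      simp at this
      exact hlen this.symm
    have h1 : (c.darts.getLast hd).snd = z := by
      rw [SimpleGraph.Walk.getLast_darts_eq_lastDart]; rfl
    have h2 : (c.darts.getLast hd).snd ∈ c.support.tail := by
      rw [← SimpleGraph.Walk.map_snd_darts]
      exact List.mem_map_of_mem (List.getLast_mem hd)
    rwa [h1] at h2
  · exact h

/-- An initial segment of a cycle that stops strictly before returning to the start
is a path. -/
lemma isPath_takeUntil_cycle [DecidableEq V] {x g : V}
    {c : G.Walk x x} (hc : c.IsCycle) (hg : g ∈ c.support) (hne : g ≠ x) :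
    (c.takeUntil g hg).IsPath := by
  set A := c.takeUntil g hg with hA
  set B := c.dropUntil g hg with hB
  have hspec : A.append B = c := c.take_spec hg
  have hsup : c.support = A.support ++ B.support.tail := by
    conv_lhs => rw [← hspec]
    exact SimpleGraph.Walk.support_append _ _
  have htail : c.support.tail = A.support.tail ++ B.support.tail := by
    have h1 : c.support = x :: c.support.tail := SimpleGraph.Walk.support_eq_cons c
    have h2 : A.support = x :: A.support.tail := SimpleGraph.Walk.support_eq_cons A
    rw [h2] at hsup
    rw [h1] at hsup
    simpa using congrArg List.tail hsup
  have hnodup : (A.support.tail ++ B.support.tail).Nodup := by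
    rw [← htail]; exact hc.support_nodup
  rw [List.nodup_append] at hnodup
  obtain ⟨hAnd, hBnd, hdisj⟩ := hnodup
  have hxB : x ∈ B.support.tail := by
    have : x ∈ B.support := SimpleGraph.Walk.end_mem_support B
    rw [SimpleGraph.Walk.support_eq_cons B] at this
    rcases List.mem_cons.mp this with h | h
    · exact absurd h.symm hne
    · exact h
  have hxA : x ∉ A.support.tail := fun h => hdisj x h x hxB rfl
  apply SimpleGraph.Walk.IsPath.mk'
  rw [SimpleGraph.Walk.support_eq_cons A]
  exact List.nodup_cons.mpr ⟨hxA, hAnd⟩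

/-- Every edge of a walk meeting `C.support` in at most the single vertex `g` is not
an edge of `C`. -/
lemma edges_disjoint {a b w g : V} {p : G.Walk a b} {C : G.Walk w w}
    (h : ∀ z ∈ p.support, z ∈ C.support → z = g) :
    ∀ e ∈ p.edges, e ∉ C.edges := by
  intro e hep heC
  induction e using Sym2.ind with
  | _ x y =>
    have hx : x ∈ p.support := SimpleGraph.Walk.fst_mem_support_of_mem_edges p hep
    have hy : y ∈ p.support := SimpleGraph.Walk.snd_mem_support_of_mem_edges p hep
    have hxC : x ∈ C.support := SimpleGraph.Walk.fst_mem_support_of_mem_edges C heC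
    have hyC : y ∈ C.support := SimpleGraph.Walk.snd_mem_support_of_mem_edges C heC
    have hadj : G.Adj x y := SimpleGraph.Walk.adj_of_mem_edges p hep
    have := (h x hx hxC).trans (h y hy hyC).symm
    exact G.ne_of_adj hadj this

/-- From any path from `u` ending on the support of `C`, extract a path to a vertex `g` of
`C` that meets `C` only in `g`, with support inside the original path. -/
lemma exists_clean_path [DecidableEq V] {w u : V} (C : G.Walk w w) :
    ∀ (n : ℕ) (x : V), x ∈ C.support → ∀ q : G.Walk u x, q.IsPath → q.length ≤ n →
      ∃ g, g ∈ C.support ∧ ∃ p : G.Walk u g, p.IsPath ∧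
        (∀ z ∈ p.support, z ∈ C.support → z = g) ∧ ∀ z ∈ p.support, z ∈ q.support := by
  intro n
  induction n with
  | zero =>
    intro x hx q hq hlen
    have hux : u = x := SimpleGraph.Walk.eq_of_length_eq_zero (Nat.le_zero.mp hlen)
    subst hux
    have hqnil : q = SimpleGraph.Walk.nil := SimpleGraph.Walk.nil_iff_eq_nil.mp (SimpleGraph.Walk.length_eq_zero_iff.mp
      (Nat.le_zero.mp hlen))
    subst hqnil
    exact ⟨u, hx, SimpleGraph.Walk.nil, SimpleGraph.Walk.IsPath.nil,
      by simp, by simp⟩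
  | succ n ih =>
    intro x hx q hq hlen
    by_cases hclean : ∀ z ∈ q.support, z ∈ C.support → z = x
    · exact ⟨x, hx, q, hq, hclean, fun z hz => hz⟩
    · push_neg at hclean
      obtain ⟨z, hzq, hzC, hzx⟩ := hclean
      have hdroplen : 1 ≤ (q.dropUntil z hzq).length := by
        by_contra h
        push_neg at h
        exact hzx (SimpleGraph.Walk.eq_of_length_eq_zero (Nat.lt_one_iff.mp h))
      have hlt : (q.takeUntil z hzq).length ≤ n := by
        have hspec := q.take_spec hzq
        have := congrArg SimpleGraph.Walk.length hspec
        rw [SimpleGraph.Walk.length_append] at this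
        omega
      obtain ⟨g, hg, p, hp, hpc, hsub⟩ := ih z hzC (q.takeUntil z hzq)
        (hq.takeUntil hzq) hlt
      exact ⟨g, hg, p, hp, hpc, fun a ha =>
        q.support_takeUntil_subset hzq (hsub a ha)⟩

/-- Core lemma: in a cactus graph, if `p` is a path from `u` to `g ∈ C` meeting `C` only
in `g`, then any path from `u` meeting `C` only in its final vertex passes through `g`. -/
lemma gate_core [DecidableEq V] (hcactus : IsCactus G) {w u : V} {C : G.Walk w w}
    (hC : C.IsCycle) {g : V} (hg : g ∈ C.support) {p : G.Walk u g} (hp : p.IsPath)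
    (hpc : ∀ z ∈ p.support, z ∈ C.support → z = g)
    {x : V} (hx : x ∈ C.support) {q : G.Walk u x} (hq : q.IsPath)
    (hqc : ∀ z ∈ q.support, z ∈ C.support → z = x) :
    g ∈ q.support := by
  by_contra hgq
  have hgx : g ≠ x := fun h => hgq (h ▸ q.end_mem_support)
  -- The bypass path from g to x through p and q
  set P := (p.reverse.append q).bypass with hPdef
  have hPpath : P.IsPath := SimpleGraph.Walk.bypass_isPath _
  have hPsub : ∀ z ∈ P.support, z ∈ p.support ∨ z ∈ q.support := by
    intro z hz
    have := SimpleGraph.Walk.support_bypass_subset _ hz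
    rw [SimpleGraph.Walk.mem_support_append_iff, SimpleGraph.Walk.support_reverse,
      List.mem_reverse] at this
    exact this
  have hPe : ∀ e ∈ P.edges, e ∈ p.edges ∨ e ∈ q.edges := by
    intro e he
    have := SimpleGraph.Walk.edges_bypass_subset _ he
    rw [SimpleGraph.Walk.edges_append, List.mem_append, SimpleGraph.Walk.edges_reverse,
      List.mem_reverse] at this
    exact this
  have hpCe := edges_disjoint hpc
  have hqCe := edges_disjoint hqc
  have hPeC : ∀ e ∈ P.edges, e ∉ C.edges := by
    intro e he heC
    rcases hPe e he with h | h
    · exact hpCe e h heC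
    · exact hqCe e h heC
  have hPC : ∀ z ∈ P.support, z ∈ C.support → z = g ∨ z = x := by
    intro z hz hzC
    rcases hPsub z hz with h | h
    · exact Or.inl (hpc z h hzC)
    · exact Or.inr (hqc z h hzC)
  -- The arc of C from x to g
  set C' := C.rotate x hx with hC'def
  have hC'cyc : C'.IsCycle := hC.rotate hx
  have hgtail : g ∈ C.support.tail := mem_tail_of_mem_support_closed C hC.not_nil hg
  have hg' : g ∈ C'.support := by
    have : g ∈ C'.support.tail :=
      (SimpleGraph.Walk.support_rotate C x hx).mem_iff.mpr hgtail
    exact List.mem_of_mem_tail this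
  have hC'sub : ∀ z ∈ C'.support, z ∈ C.support := by
    intro z hz
    rw [SimpleGraph.Walk.support_eq_cons C'] at hz
    rcases List.mem_cons.mp hz with h | h
    · exact h ▸ hx
    · exact List.mem_of_mem_tail ((SimpleGraph.Walk.support_rotate C x hx).mem_iff.mp h)
  have hC'e : ∀ e, e ∈ C'.edges ↔ e ∈ C.edges :=
    fun e => (SimpleGraph.Walk.rotate_edges C x hx).mem_iff
  set A := C'.takeUntil g hg' with hAdef
  have hApath : A.IsPath := isPath_takeUntil_cycle hC'cyc hg' hgx
  have hAe : ∀ e ∈ A.edges, e ∈ C.edges :=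
    fun e he => (hC'e e).mp (SimpleGraph.Walk.edges_takeUntil_subset _ _ he)
  have hAsub : ∀ z ∈ A.support, z ∈ C.support :=
    fun z hz => hC'sub z (SimpleGraph.Walk.support_takeUntil_subset _ _ hz)
  -- The combined cycle
  set D := P.append A with hDdef
  have hgP : g ∉ P.support.tail := by
    have := hPpath.support_nodup
    rw [SimpleGraph.Walk.support_eq_cons P] at this
    exact (List.nodup_cons.mp this).1
  have hxA : x ∉ A.support.tail := by
    have := hApath.support_nodup
    rw [SimpleGraph.Walk.support_eq_cons A] at this
    exact (List.nodup_cons.mp this).1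
  have hDcyc : D.IsCycle := by
    rw [SimpleGraph.Walk.isCycle_def]
    refine ⟨?_, ?_, ?_⟩
    · rw [SimpleGraph.Walk.isTrail_def, SimpleGraph.Walk.edges_append, List.nodup_append]
      refine ⟨hPpath.isTrail.edges_nodup, hApath.isTrail.edges_nodup, ?_⟩
      intro e heP e' heA hee
      rw [← hee] at heA
      exact hPeC e heP (hAe e heA)
    · intro h
      have := congrArg SimpleGraph.Walk.length h
      rw [SimpleGraph.Walk.length_append, SimpleGraph.Walk.length_nil] at this
      have hP0 : P.length = 0 := by omega
      exact hgx (SimpleGraph.Walk.eq_of_length_eq_zero hP0)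
    · rw [SimpleGraph.Walk.tail_support_append, List.nodup_append]
      have hPnd : P.support.tail.Nodup := by
        have := hPpath.support_nodup
        rw [SimpleGraph.Walk.support_eq_cons P] at this
        exact (List.nodup_cons.mp this).2
      have hAnd : A.support.tail.Nodup := by
        have := hApath.support_nodup
        rw [SimpleGraph.Walk.support_eq_cons A] at this
        exact (List.nodup_cons.mp this).2
      refine ⟨hPnd, hAnd, ?_⟩
      intro z hzP z' hzA hzz
      rw [← hzz] at hzA
      have hz1 : z ∈ P.support := List.mem_of_mem_tail hzP
      have hz2 : z ∈ A.support := List.mem_of_mem_tail hzA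
      rcases hPC z hz1 (hAsub z hz2) with h | h
      · exact hgP (h ▸ hzP)
      · exact hxA (h ▸ hzA)
  obtain ⟨eA, heA⟩ := exists_edge_of_ne A hgx.symm
  obtain ⟨eP, heP⟩ := exists_edge_of_ne P hgx
  have hshare : ∃ e, e ∈ D.edges ∧ e ∈ C.edges :=
    ⟨eA, by rw [SimpleGraph.Walk.edges_append]; exact List.mem_append_right _ heA,
      hAe eA heA⟩
  have hsame := hcactus g w D C hDcyc hC hshare
  have hePC : eP ∈ C.edges := (hsame eP).mp
    (by rw [SimpleGraph.Walk.edges_append]; exact List.mem_append_left _ heP)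
  exact hPeC eP heP hePC

end CactusAux

theorem stmt_14 {V : Type*} [Fintype V] (G : SimpleGraph V)
    (hconn : G.Connected) (hcactus : IsCactus G)
    (w : V) (C : G.Walk w w) (hC : C.IsCycle) (u : V) :
    ∃! g : V, g ∈ C.support ∧
      ∀ x : V, x ∈ C.support → ∀ q : G.Walk u x, q.IsPath → g ∈ q.support := by
  classical
  obtain ⟨q0, hq0⟩ : ∃ q : G.Walk u w, q.IsPath := by
    obtain ⟨r⟩ := hconn.preconnected u w
    exact ⟨r.bypass, r.bypass_isPath⟩
  obtain ⟨g, hg, p, hp, hpc, -⟩ :=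
    CactusAux.exists_clean_path C q0.length w C.start_mem_support q0 hq0 le_rfl
  have key : ∀ x : V, x ∈ C.support → ∀ q : G.Walk u x, q.IsPath → g ∈ q.support := by
    intro x hx q hq
    obtain ⟨g', hg', p', hp', hpc', hsub⟩ :=
      CactusAux.exists_clean_path C q.length x hx q hq le_rfl
    exact hsub g (CactusAux.gate_core hcactus hC hg hp hpc hg' hp' hpc')
  refine ⟨g, ⟨hg, key⟩, ?_⟩
  rintro g' ⟨hg', hkey'⟩
  obtain ⟨q, hq⟩ : ∃ q : G.Walk u g, q.IsPath := by
    obtain ⟨r⟩ := hconn.preconnected u g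
    exact ⟨r.bypass, r.bypass_isPath⟩
  have hg'q : g' ∈ q.support := hkey' g hg q hq
  have hgq1 : g ∈ (q.takeUntil g' hg'q).support :=
    key g' hg' (q.takeUntil g' hg'q) (hq.takeUntil hg'q)
  have hnodup := hq.support_nodup
  have hsup : q.support = (q.takeUntil g' hg'q).support
      ++ (q.dropUntil g' hg'q).support.tail := by
    conv_lhs => rw [← q.take_spec hg'q]
    exact SimpleGraph.Walk.support_append _ _
  rw [hsup, List.nodup_append] at hnodup
  have hdisj := hnodup.2.2
  have hgdrop : g ∈ (q.dropUntil g' hg'q).support :=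
    SimpleGraph.Walk.end_mem_support _
  rw [SimpleGraph.Walk.support_eq_cons] at hgdrop
  rcases List.mem_cons.mp hgdrop with h | h
  · exact h.symm
  · exact absurd h (fun h' => hdisj g hgq1 g h' rfl)
end

section
/- Let G be a finite connected cactus graph, let C be a cycle of even length in G, and let uv be an edge of C. Then for every vertex x of G, either there is a path from x to u of length dist(x,u) that contains the edge uv, or there is a path from x to v of length dist(x,v) that contains the edge uv. -/
open SimpleGraph

private lemma prefix_dist {V : Type*} [DecidableEq V] {G : SimpleGraph V} (hconn : G.Connected)
    {x u : V} (p : G.Walk x u) (hp : p.length = G.dist x u) {y : V} (hy : y ∈ p.support) :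
    (p.takeUntil y hy).length = G.dist x y ∧ (p.dropUntil y hy).length = G.dist y u := by
  have hsplit : (p.takeUntil y hy).length + (p.dropUntil y hy).length = p.length := by
    rw [← SimpleGraph.Walk.length_append, SimpleGraph.Walk.take_spec]
  have h1 := SimpleGraph.dist_le (p.takeUntil y hy)
  have h2 := SimpleGraph.dist_le (p.dropUntil y hy)
  have h3 := hconn.dist_triangle (u := x) (v := y) (w := u)
  omega

theorem stmt_15 {V : Type*} [Fintype V] (G : SimpleGraph V)
    (hconn : G.Connected) (hcactus : IsCactus G)
    (w : V) (C : G.Walk w w) (hC : C.IsCycle) (heven : Even C.length)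
    (u v : V) (huv : s(u, v) ∈ C.edges) (x : V) :
    (∃ q : G.Walk x u, q.IsPath ∧ q.length = G.dist x u ∧ s(u, v) ∈ q.edges) ∨
    (∃ q : G.Walk x v, q.IsPath ∧ q.length = G.dist x v ∧ s(u, v) ∈ q.edges) := by
  classical
  have hadj : G.Adj u v := C.adj_of_mem_edges huv
  have hduv : G.dist u v = 1 := SimpleGraph.dist_eq_one_iff_adj.mpr hadj
  have hdvu : G.dist v u = 1 := by rw [SimpleGraph.dist_comm]; exact hduv
  have tri1 := hconn.dist_triangle (u := x) (v := u) (w := v)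
  have tri2 := hconn.dist_triangle (u := x) (v := v) (w := u)
  rcases Nat.lt_trichotomy (G.dist x u) (G.dist x v) with hlt | heq | hgt
  · -- dist x v = dist x u + 1
    right
    obtain ⟨p, hpl⟩ := hconn.exists_walk_length_eq_dist x u
    refine ⟨p.concat hadj, ?_, ?_, ?_⟩ <;>
      [skip; skip; simp [SimpleGraph.Walk.edges_concat]]
    · apply SimpleGraph.Walk.isPath_of_length_eq_dist
      rw [SimpleGraph.Walk.length_concat]; omega
    · rw [SimpleGraph.Walk.length_concat]; omega
  · -- contradiction case
    exfalso
    obtain ⟨p, hp, hpl⟩ := hconn.exists_path_of_dist x u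
    obtain ⟨q, hq, hql⟩ := hconn.exists_path_of_dist x v
    -- u is not on q, v is not on p
    have hunq : u ∉ q.support := by
      intro h
      obtain ⟨h1, h2⟩ := prefix_dist hconn q hql h
      have hsum : (q.takeUntil u h).length + (q.dropUntil u h).length = q.length := by
        rw [← SimpleGraph.Walk.length_append, SimpleGraph.Walk.take_spec]
      omega
    have hvnp : v ∉ p.support := by
      intro h
      obtain ⟨h1, h2⟩ := prefix_dist hconn p hpl h
      have hsum : (p.takeUntil v h).length + (p.dropUntil v h).length = p.length := by
        rw [← SimpleGraph.Walk.length_append, SimpleGraph.Walk.take_spec]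
      omega
    -- choose common vertex y of maximal distance from x
    set S : Finset V := p.support.toFinset ∩ q.support.toFinset with hS
    have hxS : x ∈ S := by
      simp [hS, List.mem_toFinset, p.start_mem_support, q.start_mem_support]
    obtain ⟨y, hyS, hymax⟩ := S.exists_max_image (fun z => G.dist x z) ⟨x, hxS⟩
    have hyp : y ∈ p.support := by
      have := Finset.mem_inter.mp hyS; simpa using List.mem_toFinset.mp this.1
    have hyq : y ∈ q.support := by
      have := Finset.mem_inter.mp hyS; simpa using List.mem_toFinset.mp this.2
    obtain ⟨htp, hdp⟩ := prefix_dist hconn p hpl hyp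
    obtain ⟨htq, hdq⟩ := prefix_dist hconn q hql hyq
    have hsump : (p.takeUntil y hyp).length + (p.dropUntil y hyp).length = p.length := by
      rw [← SimpleGraph.Walk.length_append, SimpleGraph.Walk.take_spec]
    have hsumq : (q.takeUntil y hyq).length + (q.dropUntil y hyq).length = q.length := by
      rw [← SimpleGraph.Walk.length_append, SimpleGraph.Walk.take_spec]
    set p₂ := p.dropUntil y hyp with hp₂
    set q₂ := q.dropUntil y hyq with hq₂
    have hp₂path : p₂.IsPath := hp.dropUntil hyp
    have hq₂path : q₂.IsPath := hq.dropUntil hyq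
    have hlen2 : q₂.length = p₂.length := by omega
    -- any common vertex of p₂ and q₂ equals y
    have hdisj : ∀ z, z ∈ p₂.support → z ∈ q₂.support → z = y := by
      intro z hz1 hz2
      by_contra hzy
      have hzp : z ∈ p.support := SimpleGraph.Walk.support_dropUntil_subset p hyp hz1
      have hzq : z ∈ q.support := SimpleGraph.Walk.support_dropUntil_subset q hyq hz2
      have hzS : z ∈ S := by
        simp [hS, List.mem_toFinset, hzp, hzq]
      have hle : G.dist x z ≤ G.dist x y := hymax z hzS
      obtain ⟨ht2, hd2⟩ := prefix_dist hconn q₂ hdq hz2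
      have hsum2 : (q₂.takeUntil z hz2).length + (q₂.dropUntil z hz2).length = q₂.length := by
        rw [← SimpleGraph.Walk.length_append, SimpleGraph.Walk.take_spec]
      have htri := hconn.dist_triangle (u := x) (v := z) (w := v)
      have hyz : G.dist y z ≠ 0 := by
        intro h0
        exact hzy (((hconn y z).dist_eq_zero_iff).mp h0).symm
      omega
    -- build the odd cycle through uv
    set P : G.Walk u v := p₂.reverse.append q₂ with hP
    have hPpath : P.IsPath := by
      rw [SimpleGraph.Walk.isPath_def, SimpleGraph.Walk.support_append]
      refine List.Nodup.append ?_ ?_ ?_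
      · exact (hp₂path.reverse).support_nodup
      · exact (hq₂path.support_nodup).sublist (List.tail_sublist _)
      · intro z hz1 hz2
        rw [SimpleGraph.Walk.support_reverse, List.mem_reverse] at hz1
        have hz2' : z ∈ q₂.support := by
          rw [q₂.support_eq_cons]; exact List.mem_cons_of_mem _ hz2
        have hzy : z = y := hdisj z hz1 hz2'
        have : y ∉ q₂.support.tail := by
          have := hq₂path.support_nodup
          rw [q₂.support_eq_cons, List.nodup_cons] at this
          exact this.1
        exact this (hzy ▸ hz2)
    have hPedge : s(v, u) ∉ P.edges := by
      intro h
      rw [hP, SimpleGraph.Walk.edges_append, List.mem_append] at h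
      rcases h with h | h
      · rw [SimpleGraph.Walk.edges_reverse, List.mem_reverse] at h
        exact hvnp (SimpleGraph.Walk.support_dropUntil_subset p hyp
          (p₂.fst_mem_support_of_mem_edges h))
      · exact hunq (SimpleGraph.Walk.support_dropUntil_subset q hyq
          (q₂.snd_mem_support_of_mem_edges h))
    set D : G.Walk v v := SimpleGraph.Walk.cons hadj.symm P with hD
    have hDcyc : D.IsCycle := (SimpleGraph.Walk.cons_isCycle_iff P hadj.symm).mpr ⟨hPpath, hPedge⟩
    have hshare : s(u, v) ∈ D.edges := by
      rw [hD, SimpleGraph.Walk.edges_cons]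
      rw [Sym2.eq_swap]
      exact List.mem_cons_self
    have hiff := hcactus w v C D hC hDcyc ⟨s(u, v), huv, hshare⟩
    have hperm : C.edges.Perm D.edges :=
      (List.perm_ext_iff_of_nodup hC.edges_nodup hDcyc.edges_nodup).mpr hiff
    have hlenCD : C.length = D.length := by
      rw [← SimpleGraph.Walk.length_edges, ← SimpleGraph.Walk.length_edges, hperm.length_eq]
    have hDlen : D.length = p₂.length + q₂.length + 1 := by
      rw [hD, SimpleGraph.Walk.length_cons, hP, SimpleGraph.Walk.length_append,
        SimpleGraph.Walk.length_reverse]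
    obtain ⟨k, hk⟩ := heven
    omega
  · -- dist x u = dist x v + 1
    left
    obtain ⟨p, hpl⟩ := hconn.exists_walk_length_eq_dist x v
    refine ⟨p.concat hadj.symm, ?_, ?_, ?_⟩
    · apply SimpleGraph.Walk.isPath_of_length_eq_dist
      rw [SimpleGraph.Walk.length_concat]; omega
    · rw [SimpleGraph.Walk.length_concat]; omega
    · simp [SimpleGraph.Walk.edges_concat, Sym2.eq_swap]
end

section
/- Let G be a finite connected cactus graph, let C be a cycle of odd length in G, and let uv be an edge of C. Let w = vopp(uv) be the unique vertex of C equidistant in G from u and v, and let S(w,C) be the set of vertices reachable from w in the graph obtained from G by deleting all edges of C. Then for every vertex x of G not in S(w,C), either there is a path from x to u of length dist(x,u) that contains the edge uv, or there is a path from x to v of length dist(x,v) that contains the edge uv. -/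
open SimpleGraph

lemma dist_split_aux {V : Type*} [DecidableEq V] {G : SimpleGraph V} (hconn : G.Connected)
    {y u t : V} (p : G.Walk y u) (hp : p.length = G.dist y u) (ht : t ∈ p.support) :
    (p.takeUntil t ht).length = G.dist y t ∧ (p.dropUntil t ht).length = G.dist t u := by
  have hsum : (p.takeUntil t ht).length + (p.dropUntil t ht).length = p.length := by
    conv_rhs => rw [← p.take_spec ht]
    rw [SimpleGraph.Walk.length_append]
  have h1 := G.dist_le (p.takeUntil t ht)
  have h2 := G.dist_le (p.dropUntil t ht)
  have h3 := hconn.dist_triangle (u := y) (v := t) (w := u)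
  omega

lemma dist_add_of_mem {V : Type*} [DecidableEq V] {G : SimpleGraph V} (hconn : G.Connected)
    {y u t : V} (p : G.Walk y u) (hp : p.length = G.dist y u) (ht : t ∈ p.support) :
    G.dist y t + G.dist t u = G.dist y u := by
  obtain ⟨h1, h2⟩ := dist_split_aux hconn p hp ht
  have hsum : (p.takeUntil t ht).length + (p.dropUntil t ht).length = p.length := by
    conv_rhs => rw [← p.take_spec ht]
    rw [SimpleGraph.Walk.length_append]
  omega

lemma key_lemma {V : Type*} [Fintype V] [DecidableEq V] {G : SimpleGraph V}
    (hconn : G.Connected) (hcactus : IsCactus G)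
    {w₀ : V} {C : G.Walk w₀ w₀} (hC : C.IsCycle)
    {u v : V} (huv : s(u, v) ∈ C.edges)
    (y : V) (hy : G.dist y u = G.dist y v) :
    ∃ D : G.Walk u v, D.IsPath ∧
      (∀ e, e ∈ D.edges ↔ (e ∈ C.edges ∧ e ≠ s(u, v))) ∧
      (G.deleteEdges {e | e ∈ C.edges}).Reachable y (D.getVert (D.length / 2)) := by
  have huv' : G.Adj u v := C.adj_of_mem_edges huv
  have hne : u ≠ v := huv'.ne
  obtain ⟨P, hP, hPl⟩ := hconn.exists_path_of_dist y u
  obtain ⟨Q, hQ, hQl⟩ := hconn.exists_path_of_dist y v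
  have hduv : G.dist u v ≠ 0 := fun h => hne (hconn.dist_eq_zero_iff.mp h)
  have hdvu : G.dist v u ≠ 0 := fun h => hne (hconn.dist_eq_zero_iff.mp h).symm
  have hvP : v ∉ P.support := by
    intro hmem
    have := dist_add_of_mem hconn P hPl hmem
    omega
  have huQ : u ∉ Q.support := by
    intro hmem
    have := dist_add_of_mem hconn Q hQl hmem
    omega
  -- choose z : common vertex of P and Q maximizing dist from y
  set s : Finset V := Finset.univ.filter (fun t => t ∈ P.support ∧ t ∈ Q.support) with hs_def
  have hsne : s.Nonempty := ⟨y, by simp [hs_def]⟩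
  obtain ⟨z, hzs, hzmax'⟩ := s.exists_max_image (G.dist y) hsne
  rw [hs_def, Finset.mem_filter] at hzs
  have hzP : z ∈ P.support := hzs.2.1
  have hzQ : z ∈ Q.support := hzs.2.2
  have hzmax : ∀ t, t ∈ P.support → t ∈ Q.support → G.dist y t ≤ G.dist y z := fun t h1 h2 =>
    hzmax' t (by simp [hs_def, h1, h2])
  set A := P.dropUntil z hzP with hA_def
  set B := Q.dropUntil z hzQ with hB_def
  set T := P.takeUntil z hzP with hT_def
  have hA_len : A.length = G.dist z u := (dist_split_aux hconn P hPl hzP).2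
  have hB_len : B.length = G.dist z v := (dist_split_aux hconn Q hQl hzQ).2
  have hzu : G.dist y z + G.dist z u = G.dist y u := dist_add_of_mem hconn P hPl hzP
  have hzv : G.dist y z + G.dist z v = G.dist y v := dist_add_of_mem hconn Q hQl hzQ
  have hAB_len : A.length = B.length := by omega
  have hAsub : A.support ⊆ P.support := P.support_dropUntil_subset hzP
  have hBsub : B.support ⊆ Q.support := Q.support_dropUntil_subset hzQ
  have hPB : ∀ t, t ∈ P.support → t ∈ B.support → t = z := by
    intro t h1 h2
    have h2Q : t ∈ Q.support := hBsub h2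
    have e1 : G.dist y t + G.dist t u = G.dist y u := dist_add_of_mem hconn P hPl h1
    have e2 : G.dist y t + G.dist t v = G.dist y v := dist_add_of_mem hconn Q hQl h2Q
    have e3 : G.dist z t + G.dist t v = G.dist z v := dist_add_of_mem hconn B hB_len h2
    have e4 : G.dist y t ≤ G.dist y z := hzmax t h1 h2Q
    have e5 : G.dist z t = 0 := by omega
    exact (hconn.dist_eq_zero_iff.mp e5).symm
  have huvP : s(u, v) ∉ P.edges := fun h => hvP (P.snd_mem_support_of_mem_edges h)
  have huvQ : s(u, v) ∉ Q.edges := fun h => huQ (Q.fst_mem_support_of_mem_edges h)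
  have huvA : s(u, v) ∉ A.edges := fun h => huvP (P.edges_dropUntil_subset hzP h)
  have huvB : s(u, v) ∉ B.edges := fun h => huvQ (Q.edges_dropUntil_subset hzQ h)
  have hPBe : ∀ e, e ∈ P.edges → e ∈ B.edges → False := by
    intro e
    induction e using Sym2.ind with
    | _ a b =>
      intro he1 he2
      have ha : a = z := hPB a (P.fst_mem_support_of_mem_edges he1)
        (B.fst_mem_support_of_mem_edges he2)
      have hb : b = z := hPB b (P.snd_mem_support_of_mem_edges he1)
        (B.snd_mem_support_of_mem_edges he2)
      exact (P.adj_of_mem_edges he1).ne (ha.trans hb.symm)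
  -- trail decompositions
  have hPsplit : T.edges ++ A.edges = P.edges := by
    rw [← SimpleGraph.Walk.edges_append]
    exact congrArg SimpleGraph.Walk.edges (P.take_spec hzP)
  have hPed : (T.edges ++ A.edges).Nodup := by rw [hPsplit]; exact hP.isTrail.edges_nodup
  obtain ⟨hTe, hAe, hTAdisj⟩ := List.nodup_append.mp hPed
  have hQsplit : (Q.takeUntil z hzQ).edges ++ B.edges = Q.edges := by
    rw [← SimpleGraph.Walk.edges_append]
    exact congrArg SimpleGraph.Walk.edges (Q.take_spec hzQ)
  have hQed : ((Q.takeUntil z hzQ).edges ++ B.edges).Nodup := by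
    rw [hQsplit]; exact hQ.isTrail.edges_nodup
  have hBe : B.edges.Nodup := (List.nodup_append.mp hQed).2.1
  have hApath : A.IsPath := hP.dropUntil hzP
  have hBpath : B.IsPath := hQ.dropUntil hzQ
  have hzA : z ∉ A.support.tail := by
    have h := hApath.support_nodup
    rw [A.support_eq_cons] at h
    exact (List.nodup_cons.mp h).1
  have hzB : z ∉ B.support.tail := by
    have h := hBpath.support_nodup
    rw [B.support_eq_cons] at h
    exact (List.nodup_cons.mp h).1
  -- the cycle R
  set R : G.Walk z z := A.append (SimpleGraph.Walk.cons huv' B.reverse) with hR_def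
  have hRe : ∀ e, e ∈ R.edges ↔ (e ∈ A.edges ∨ e = s(u, v) ∨ e ∈ B.edges) := by
    intro e
    rw [hR_def]
    simp [SimpleGraph.Walk.edges_append, SimpleGraph.Walk.edges_cons,
      SimpleGraph.Walk.edges_reverse, List.mem_append, List.mem_reverse]
  have hRtrail : R.IsTrail := by
    rw [SimpleGraph.Walk.isTrail_def, hR_def]
    rw [SimpleGraph.Walk.edges_append, SimpleGraph.Walk.edges_cons,
      SimpleGraph.Walk.edges_reverse, List.nodup_append]
    refine ⟨hAe, ?_, ?_⟩
    · rw [List.nodup_cons]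
      exact ⟨fun h => huvB (List.mem_reverse.mp h), List.nodup_reverse.mpr hBe⟩
    · intro e he1 e' he2 hee
      subst hee
      rcases List.mem_cons.mp he2 with rfl | he2
      · exact huvA he1
      · exact hPBe e (P.edges_dropUntil_subset hzP he1) (List.mem_reverse.mp he2)
  have huvR : s(u, v) ∈ R.edges := (hRe _).mpr (Or.inr (Or.inl rfl))
  have hRne : R ≠ SimpleGraph.Walk.nil := by
    intro h
    rw [h] at huvR
    simp at huvR
  have hRsupp : R.support.tail = A.support.tail ++ B.support.reverse := by
    rw [hR_def, SimpleGraph.Walk.support_append, SimpleGraph.Walk.support_cons,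
      List.tail_cons, SimpleGraph.Walk.support_reverse, A.support_eq_cons]
    simp
  have hRcyc : R.IsCycle := by
    rw [SimpleGraph.Walk.isCycle_def]
    refine ⟨hRtrail, hRne, ?_⟩
    rw [hRsupp, List.nodup_append]
    refine ⟨?_, List.nodup_reverse.mpr hBpath.support_nodup, ?_⟩
    · have h := hApath.support_nodup
      rw [A.support_eq_cons] at h
      exact (List.nodup_cons.mp h).2
    · intro t h1 t' h2 htt
      subst htt
      have h1' : t ∈ A.support := List.mem_of_mem_tail h1
      have h2' : t ∈ B.support := List.mem_reverse.mp h2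
      have := hPB t (hAsub h1') h2'
      exact hzA (this ▸ h1)
  have hCRe : ∀ e, e ∈ R.edges ↔ e ∈ C.edges :=
    hcactus z w₀ R C hRcyc hC ⟨s(u, v), huvR, huv⟩
  -- the path D
  set D : G.Walk u v := A.reverse.append B with hD_def
  have hDe : ∀ e, e ∈ D.edges ↔ (e ∈ A.edges ∨ e ∈ B.edges) := by
    intro e
    rw [hD_def]
    simp [SimpleGraph.Walk.edges_append, SimpleGraph.Walk.edges_reverse, List.mem_append,
      List.mem_reverse]
  have hDpath : D.IsPath := by
    rw [SimpleGraph.Walk.isPath_def, hD_def, SimpleGraph.Walk.support_append,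
      SimpleGraph.Walk.support_reverse, List.nodup_append]
    refine ⟨List.nodup_reverse.mpr hApath.support_nodup, ?_, ?_⟩
    · have h := hBpath.support_nodup
      rw [B.support_eq_cons] at h
      exact (List.nodup_cons.mp h).2
    · intro t h1 t' h2 htt
      subst htt
      have h1' : t ∈ A.support := List.mem_reverse.mp h1
      have h2' : t ∈ B.support := List.mem_of_mem_tail h2
      have := hPB t (hAsub h1') h2'
      exact hzB (this ▸ h2)
  have hDC : ∀ e, e ∈ D.edges ↔ (e ∈ C.edges ∧ e ≠ s(u, v)) := by
    intro e
    rw [hDe]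
    constructor
    · rintro (h | h)
      · exact ⟨(hCRe e).mp ((hRe e).mpr (Or.inl h)), fun hh => huvA (hh ▸ h)⟩
      · exact ⟨(hCRe e).mp ((hRe e).mpr (Or.inr (Or.inr h))), fun hh => huvB (hh ▸ h)⟩
    · rintro ⟨h1, h2⟩
      rcases (hRe e).mp ((hCRe e).mpr h1) with h | h | h
      · exact Or.inl h
      · exact absurd h h2
      · exact Or.inr h
  have hDlen : D.length = A.length + B.length := by
    rw [hD_def, SimpleGraph.Walk.length_append, SimpleGraph.Walk.length_reverse]
  have hgv : D.getVert (D.length / 2) = z := by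
    have h2 : D.length / 2 = A.length := by omega
    rw [h2, hD_def, SimpleGraph.Walk.getVert_append]
    simp [SimpleGraph.Walk.length_reverse]
  refine ⟨D, hDpath, hDC, ?_⟩
  rw [hgv]
  have hTC : ∀ e ∈ T.edges, ¬ e ∈ {e | e ∈ C.edges} := by
    intro e heT heC
    simp only [Set.mem_setOf_eq] at heC
    rcases (hRe e).mp ((hCRe e).mpr heC) with h | h | h
    · exact hTAdisj e heT e h rfl
    · subst h
      exact huvP (P.edges_takeUntil_subset hzP heT)
    · exact hPBe e (P.edges_takeUntil_subset hzP heT) h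
  exact ⟨T.toDeleteEdges _ hTC⟩

/-- Two paths with the same endpoints and the same edge sets are equal. -/
lemma path_eq_of_edges_eq {V : Type*} {G : SimpleGraph V} {a b : V} (p : G.Walk a b) :
    ∀ q : G.Walk a b, p.IsPath → q.IsPath →
      (∀ e, e ∈ p.edges ↔ e ∈ q.edges) → p = q := by
  induction p with
  | nil =>
    intro q _ hq h
    have he : q.edges = [] := List.eq_nil_iff_forall_not_mem.mpr
      (fun e he => by simpa using (h e).mpr he)
    have hl : q.length = 0 := by
      have := q.length_edges
      rw [he] at this
      simpa using this.symm
    exact (SimpleGraph.Walk.nil_iff_eq_nil.mp (SimpleGraph.Walk.length_eq_zero_iff.mp hl)).symm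
  | cons hadj p ih =>
    rename_i a c b
    intro q hp hq hiff
    cases q with
    | nil =>
      exfalso
      have := (hiff s(a, c)).mp (by simp)
      simp at this
    | cons hadj' q' =>
      rename_i c'
      have h1 : s(a, c) ∈ (SimpleGraph.Walk.cons hadj' q').edges := (hiff _).mp (by simp)
      rw [SimpleGraph.Walk.edges_cons, List.mem_cons] at h1
      have hanq' : a ∉ q'.support := ((SimpleGraph.Walk.cons_isPath_iff _ _).mp hq).2
      have hcc : c = c' := by
        rcases h1 with h1 | h1
        · exact Sym2.congr_right.mp h1.symm |>.symm
        · exact absurd (q'.fst_mem_support_of_mem_edges h1) hanq'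
      subst hcc
      have hanp : a ∉ p.support := ((SimpleGraph.Walk.cons_isPath_iff _ _).mp hp).2
      have hiff' : ∀ e, e ∈ p.edges ↔ e ∈ q'.edges := by
        intro e
        constructor
        · intro hep
          have := (hiff e).mp (by simp [hep])
          rw [SimpleGraph.Walk.edges_cons, List.mem_cons] at this
          rcases this with h | h
          · subst h; exact absurd (p.fst_mem_support_of_mem_edges hep) hanp
          · exact h
        · intro heq
          have := (hiff e).mpr (by simp [heq])
          rw [SimpleGraph.Walk.edges_cons, List.mem_cons] at this
          rcases this with h | h
          · subst h; exact absurd (q'.fst_mem_support_of_mem_edges heq) hanq'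
          · exact h
      rw [ih q' ((SimpleGraph.Walk.cons_isPath_iff _ _).mp hp).1
        ((SimpleGraph.Walk.cons_isPath_iff _ _).mp hq).1 hiff']


theorem stmt_16 {V : Type*} [Fintype V] (G : SimpleGraph V)
    (hconn : G.Connected) (hcactus : IsCactus G)
    (w₀ : V) (C : G.Walk w₀ w₀) (hC : C.IsCycle) (hodd : Odd C.length)
    (u v : V) (huv : s(u, v) ∈ C.edges)
    (w : V) (hw : w ∈ C.support) (hwdist : G.dist w u = G.dist w v)
    (x : V) (hx : ¬ (G.deleteEdges {e | e ∈ C.edges}).Reachable w x) :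
    (∃ q : G.Walk x u, q.IsPath ∧ q.length = G.dist x u ∧ s(u, v) ∈ q.edges) ∨
    (∃ q : G.Walk x v, q.IsPath ∧ q.length = G.dist x v ∧ s(u, v) ∈ q.edges) := by
  classical
  have huv' : G.Adj u v := C.adj_of_mem_edges huv
  by_cases hd : G.dist x u = G.dist x v
  · exfalso
    obtain ⟨D, hD, hDe, hrx⟩ := key_lemma hconn hcactus hC huv x hd
    obtain ⟨D', hD', hDe', hrw⟩ := key_lemma hconn hcactus hC huv w hwdist
    have hDD : D = D' := path_eq_of_edges_eq D D' hD hD' (fun e => by rw [hDe e, hDe' e])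
    rw [hDD] at hrx
    exact hx (hrw.trans hrx.symm)
  · have hle : G.dist u v ≤ 1 := by simpa using G.dist_le huv'.toWalk
    have hle' : G.dist v u ≤ 1 := by simpa using G.dist_le huv'.symm.toWalk
    have h1 : G.dist x v ≤ G.dist x u + 1 := by
      have := hconn.dist_triangle (u := x) (v := u) (w := v)
      omega
    have h2 : G.dist x u ≤ G.dist x v + 1 := by
      have := hconn.dist_triangle (u := x) (v := v) (w := u)
      omega
    rcases Nat.lt_or_ge (G.dist x u) (G.dist x v) with hlt | hge
    · obtain ⟨p, hp, hpl⟩ := hconn.exists_path_of_dist x u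
      have hql : (p.concat huv').length = G.dist x v := by
        rw [SimpleGraph.Walk.length_concat]
        omega
      exact Or.inr ⟨p.concat huv', (p.concat huv').isPath_of_length_eq_dist hql, hql,
        by simp [SimpleGraph.Walk.edges_concat]⟩
    · have hlt' : G.dist x v < G.dist x u := lt_of_le_of_ne hge (fun h => hd h.symm)
      obtain ⟨p, hp, hpl⟩ := hconn.exists_path_of_dist x v
      have hql : (p.concat huv'.symm).length = G.dist x u := by
        rw [SimpleGraph.Walk.length_concat]
        omega
      refine Or.inl ⟨p.concat huv'.symm, (p.concat huv'.symm).isPath_of_length_eq_dist hql, hql,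
        ?_⟩
      rw [Sym2.eq_swap]
      simp [SimpleGraph.Walk.edges_concat]
end

section
/- Let G be a finite connected cactus graph, let c be a very strong rainbow coloring of G, let e1 be a bridge of G, and let e2 be an edge lying on a cycle of even length in G. Then c(e1) ≠ c(e2). -/
open SimpleGraph

section Aux

variable {V : Type*} {G : SimpleGraph V}

private lemma dist_split [DecidableEq V] (hconn : G.Connected) {b x w : V}
    (P : G.Walk b x) (hP : P.length = G.dist b x) (hw : w ∈ P.support) :
    G.dist b w + G.dist w x = G.dist b x ∧
      (P.takeUntil w hw).length = G.dist b w ∧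
      (P.dropUntil w hw).length = G.dist w x := by
  have h1 := SimpleGraph.dist_le (P.takeUntil w hw)
  have h2 := SimpleGraph.dist_le (P.dropUntil w hw)
  have h3 : (P.takeUntil w hw).length + (P.dropUntil w hw).length = P.length := by
    rw [← Walk.length_append, Walk.take_spec]
  have h4 : G.dist b x ≤ G.dist b w + G.dist w x := hconn.dist_triangle
  omega

/-- Adjacent vertices on an even cycle in a cactus have different distances from any vertex. -/
private lemma key_neq (hconn : G.Connected) (hcactus : IsCactus G)
    {x y w : V} (hxy : G.Adj x y) (C : G.Walk w w) (hC : C.IsCycle) (hCeven : Even C.length)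
    (hmem : s(x, y) ∈ C.edges) (b : V) : G.dist b x ≠ G.dist b y := by
  classical
  intro heq
  obtain ⟨P, hPp, hPl⟩ := hconn.exists_path_of_dist b x
  obtain ⟨Q, hQp, hQl⟩ := hconn.exists_path_of_dist b y
  have hnonempty : (P.support.toFinset ∩ Q.support.toFinset).Nonempty :=
    ⟨b, by simp⟩
  obtain ⟨m, hm, hmax⟩ := Finset.exists_max_image _ (G.dist b) hnonempty
  rw [Finset.mem_inter, List.mem_toFinset, List.mem_toFinset] at hm
  have hmax' : ∀ z, z ∈ P.support → z ∈ Q.support → G.dist b z ≤ G.dist b m := by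
    intro z h1 h2
    exact hmax z (by rw [Finset.mem_inter, List.mem_toFinset, List.mem_toFinset]; exact ⟨h1, h2⟩)
  obtain ⟨hPsum, hPt, hPd⟩ := dist_split hconn P hPl hm.1
  obtain ⟨hQsum, hQt, hQd⟩ := dist_split hconn Q hQl hm.2
  set P₂ := P.dropUntil m hm.1 with hP₂def
  set Q₂ := Q.dropUntil m hm.2 with hQ₂def
  have hxny : x ≠ y := hxy.ne
  have hL : P₂.length = Q₂.length := by omega
  have hLpos : 0 < P₂.length := by
    by_contra h
    have h0 : P₂.length = 0 := by omega
    have h0' : Q₂.length = 0 := by omega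
    exact hxny ((Walk.eq_of_length_eq_zero h0).symm.trans (Walk.eq_of_length_eq_zero h0'))
  have honly : ∀ z, z ∈ P₂.support → z ∈ Q₂.support → z = m := by
    intro z hzP hzQ
    have hzP' : z ∈ P.support := Walk.support_dropUntil_subset P hm.1 hzP
    have hzQ' : z ∈ Q.support := Walk.support_dropUntil_subset Q hm.2 hzQ
    have hzle := hmax' z hzP' hzQ'
    obtain ⟨hsum2, -, -⟩ := dist_split hconn P₂ hPd hzP
    have htri : G.dist b x ≤ G.dist b z + G.dist z x := hconn.dist_triangle
    have hz0 : G.dist m z = 0 := by omega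
    exact (hconn.dist_eq_zero_iff.mp hz0).symm
  have hxQ : x ∉ Q₂.support := by
    intro hx
    have := hmax' x P.end_mem_support (Walk.support_dropUntil_subset Q hm.2 hx)
    omega
  have hyP : y ∉ P₂.support := by
    intro hy
    have := hmax' y (Walk.support_dropUntil_subset P hm.1 hy) Q.end_mem_support
    omega
  have hP₂p : P₂.IsPath := hPp.dropUntil hm.1
  have hQ₂p : Q₂.IsPath := hQp.dropUntil hm.2
  set R : G.Walk y x := Q₂.reverse.append P₂ with hRdef
  have hRpath : R.IsPath := by
    rw [Walk.isPath_def, Walk.support_append, List.nodup_append]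
    refine ⟨hQ₂p.reverse.support_nodup, ?_, ?_⟩
    · exact hP₂p.support_nodup.sublist (List.tail_sublist _)
    · intro z hz1 z' hz2 hzz'
      subst hzz'
      rw [Walk.support_reverse, List.mem_reverse] at hz1
      have hz2' : z ∈ P₂.support := List.mem_of_mem_tail hz2
      have hzm : z = m := honly z hz2' hz1
      subst hzm
      have : P₂.support = z :: P₂.support.tail := P₂.support_eq_cons
      have hnd := hP₂p.support_nodup
      rw [this, List.nodup_cons] at hnd
      exact hnd.1 hz2
  have hmR : s(x, y) ∉ R.edges := by
    rw [hRdef, Walk.edges_append, List.mem_append]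
    rintro (h | h)
    · rw [Walk.edges_reverse, List.mem_reverse] at h
      exact hxQ (Q₂.fst_mem_support_of_mem_edges h)
    · exact hyP (Walk.snd_mem_support_of_mem_edges P₂ h)
  have hD : (Walk.cons hxy R).IsCycle := (Walk.cons_isCycle_iff R hxy).mpr ⟨hRpath, hmR⟩
  have hiff := hcactus x w (Walk.cons hxy R) C hD hC
    ⟨s(x, y), by simp, hmem⟩
  have hperm : List.Perm (Walk.cons hxy R).edges C.edges :=
    (List.perm_ext_iff_of_nodup hD.isTrail.edges_nodup hC.isTrail.edges_nodup).mpr hiff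
  have hlen : (Walk.cons hxy R).length = C.length := by
    have h := hperm.length_eq
    rwa [Walk.length_edges, Walk.length_edges] at h
  have hlen2 : (Walk.cons hxy R).length = Q₂.length + P₂.length + 1 := by
    simp [hRdef, Walk.length_cons, Walk.length_append, Walk.length_reverse]
  obtain ⟨k, hk⟩ := hCeven
  omega

/-- Every vertex is reachable from one endpoint of an edge after deleting it. -/
private lemma side_lemma {a b : V} (hab : G.Adj a b) :
    ∀ {u v : V} (_ : G.Walk u v),
      ((G \ fromEdgeSet {s(a, b)}).Reachable a u ∨ (G \ fromEdgeSet {s(a, b)}).Reachable b u) →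
      ((G \ fromEdgeSet {s(a, b)}).Reachable a v ∨ (G \ fromEdgeSet {s(a, b)}).Reachable b v) := by
  intro u v W
  induction W with
  | nil => exact id
  | @cons u u' v h p ih =>
    intro hu
    apply ih
    by_cases he : s(u, u') = s(a, b)
    · rw [Sym2.eq_iff] at he
      rcases he with ⟨rfl, rfl⟩ | ⟨rfl, rfl⟩
      · exact Or.inr (Reachable.refl _)
      · exact Or.inl (Reachable.refl _)
    · have hadj : (G \ fromEdgeSet {s(a, b)}).Adj u u' := by
        rw [sdiff_adj]
        refine ⟨h, ?_⟩
        intro hcon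
        have hm := ((fromEdgeSet_adj _).mp hcon).1
        simp only [Set.mem_singleton_iff] at hm
        exact he hm
      exact hu.imp (fun hr => hr.trans hadj.reachable) (fun hr => hr.trans hadj.reachable)

private lemma bridge_dist (hconn : G.Connected) {a b v : V}
    (hab : G.Adj a b) (hbr : G.IsBridge s(a, b))
    (hv : (G \ fromEdgeSet {s(a, b)}).Reachable b v) :
    G.dist a v = 1 + G.dist b v := by
  classical
  have h1 : G.dist a b = 1 := SimpleGraph.dist_eq_one_iff_adj.mpr hab
  have hle : G.dist a v ≤ G.dist a b + G.dist b v := hconn.dist_triangle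
  obtain ⟨P, hPp, hPl⟩ := hconn.exists_path_of_dist a v
  have hmem : s(a, b) ∈ P.edges := by
    by_contra hnot
    have hP' : (G \ fromEdgeSet {s(a, b)}).Reachable a v := by
      refine ⟨P.transfer _ fun e ep => ?_⟩
      simp only [edgeSet_sdiff, edgeSet_fromEdgeSet, edgeSet_sdiff_sdiff_isDiag, Set.mem_diff,
        Set.mem_singleton_iff]
      exact ⟨P.edges_subset_edgeSet ep, fun h' => hnot (h' ▸ ep)⟩
    exact (isBridge_iff.mp hbr) (hP'.trans hv.symm)
  have hb : b ∈ P.support := Walk.snd_mem_support_of_mem_edges P hmem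
  obtain ⟨hsum, -, -⟩ := dist_split hconn P hPl hb
  omega

private lemma main_aux (hconn : G.Connected) {c : Sym2 V → ℕ} (hc : IsVSRC G c)
    {a b x y : V} (hab : G.Adj a b) (hbr : G.IsBridge s(a, b)) (hxy : G.Adj x y)
    (hne : s(a, b) ≠ s(x, y))
    (hsx : (G \ fromEdgeSet {s(a, b)}).Reachable b x)
    (hdist : G.dist b x = G.dist b y + 1) :
    c s(a, b) ≠ c s(x, y) := by
  classical
  obtain ⟨Q, hQp, hQl⟩ := hconn.exists_path_of_dist b y
  have dax := bridge_dist hconn hab hbr hsx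
  set W : G.Walk a x := Walk.cons hab (Q.concat hxy.symm) with hW
  have hWl : W.length = G.dist a x := by
    rw [hW, Walk.length_cons, Walk.length_concat, hQl, dax, hdist]
    omega
  have hWp := W.isPath_of_length_eq_dist hWl
  have hnodup := hc a x W hWp hWl
  have h1 : s(a, b) ∈ W.edges := by simp [hW]
  have h2 : s(x, y) ∈ W.edges := by
    simp [hW, Walk.edges_concat, Sym2.eq_swap]
  intro hcc
  exact hne (List.inj_on_of_nodup_map hnodup h1 h2 hcc)

private lemma final_aux (hconn : G.Connected) (hcactus : IsCactus G)
    {c : Sym2 V → ℕ} (hc : IsVSRC G c)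
    {a b x y w : V} (hab : G.Adj a b) (hbr : G.IsBridge s(a, b)) (hxy : G.Adj x y)
    (C : G.Walk w w) (hC : C.IsCycle) (hCeven : Even C.length) (he₂ : s(x, y) ∈ C.edges)
    (hsx : (G \ fromEdgeSet {s(a, b)}).Reachable b x) :
    c s(a, b) ≠ c s(x, y) := by
  have hnotC : s(a, b) ∉ C.edges :=
    hbr.notMem_edges_of_isCycle hC
  have hne : s(a, b) ≠ s(x, y) := fun h => hnotC (h ▸ he₂)
  have hadjxy : (G \ fromEdgeSet {s(a, b)}).Adj x y := by
    rw [sdiff_adj]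
    refine ⟨hxy, ?_⟩
    intro hcon
    have hm := ((fromEdgeSet_adj _).mp hcon).1
    simp only [Set.mem_singleton_iff] at hm
    exact hne hm.symm
  have hsy : (G \ fromEdgeSet {s(a, b)}).Reachable b y := hsx.trans hadjxy.reachable
  have hneq := key_neq hconn hcactus hxy C hC hCeven he₂ b
  have ht1 : G.dist b x ≤ G.dist b y + G.dist y x := hconn.dist_triangle
  have ht2 : G.dist b y ≤ G.dist b x + G.dist x y := hconn.dist_triangle
  have hd1 : G.dist y x = 1 := SimpleGraph.dist_eq_one_iff_adj.mpr hxy.symm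
  have hd2 : G.dist x y = 1 := SimpleGraph.dist_eq_one_iff_adj.mpr hxy
  rcases Nat.lt_or_ge (G.dist b y) (G.dist b x) with h | h
  · exact main_aux hconn hc hab hbr hxy hne hsx (by omega)
  · have hne' : s(a, b) ≠ s(y, x) := by
      rwa [show s(y, x) = s(x, y) from Sym2.eq_swap]
    have hC' : s(y, x) ∈ C.edges := by
      rwa [show s(y, x) = s(x, y) from Sym2.eq_swap]
    have h := main_aux hconn hc hab hbr hxy.symm hne' hsy (by omega)
    rwa [show s(y, x) = s(x, y) from Sym2.eq_swap] at h

end Aux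

theorem stmt_17 {V : Type*} [Fintype V] (G : SimpleGraph V)
    (hconn : G.Connected) (hcactus : IsCactus G)
    (c : Sym2 V → ℕ) (hc : IsVSRC G c)
    (e₁ e₂ : Sym2 V) (h₁ : G.IsBridge e₁)
    (h₂ : ∃ (w : V) (C : G.Walk w w), C.IsCycle ∧ Even C.length ∧ e₂ ∈ C.edges) :
    c e₁ ≠ c e₂ := by
  classical
  obtain ⟨w, C, hC, hCeven, he₂⟩ := h₂
  revert h₁
  induction e₁ using Sym2.ind with
  | _ a b =>
  intro h₁
  revert he₂
  induction e₂ using Sym2.ind with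
  | _ x y =>
  intro he₂
  have hab : G.Adj a b := h₁.reachable_iff_adj.mp (hconn.preconnected a b)
  have hxy : G.Adj x y := C.adj_of_mem_edges he₂
  obtain ⟨Wbx⟩ := hconn.preconnected b x
  have hside := side_lemma hab Wbx (Or.inr (Reachable.refl b))
  rcases hside with hax | hbx
  · have h₁' : G.IsBridge s(b, a) := by
      rwa [show s(b, a) = s(a, b) from Sym2.eq_swap]
    have hax' : (G \ fromEdgeSet {s(b, a)}).Reachable a x := by
      rwa [show s(b, a) = s(a, b) from Sym2.eq_swap]
    have h := final_aux hconn hcactus hc hab.symm h₁' hxy C hC hCeven he₂ hax'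
    rwa [show s(b, a) = s(a, b) from Sym2.eq_swap] at h
  · exact final_aux hconn hcactus hc hab h₁ hxy C hC hCeven he₂ hbx
end

section
/- Let G be a finite connected cactus graph and let c be a very strong rainbow coloring of G. Let C1 and C2 be two cycles of even length in G with distinct edge sets, let e1 be an edge of C1, and let e2 be an edge of C2. Then c(e1) ≠ c(e2). -/
open SimpleGraph

section Aux

variable {V : Type*} [DecidableEq V] {G : SimpleGraph V}

/-- Splitting a geodesic walk at a vertex on it. -/
lemma geo_split (hconn : G.Connected) {u v : V} (p : G.Walk u v)
    (hp : p.length = G.dist u v) {w : V} (hw : w ∈ p.support) :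
    G.dist u w + G.dist w v = G.dist u v ∧
    (p.takeUntil w hw).length = G.dist u w ∧
    (p.dropUntil w hw).length = G.dist w v := by
  have h1 := G.dist_le (p.takeUntil w hw)
  have h2 := G.dist_le (p.dropUntil w hw)
  have h3 : (p.takeUntil w hw).length + (p.dropUntil w hw).length = p.length := by
    rw [← SimpleGraph.Walk.length_append, SimpleGraph.Walk.take_spec]
  have h4 := hconn.dist_triangle (u := u) (v := w) (w := v)
  omega

/-- A walk whose length equals the distance between its endpoints is a path. -/
lemma isPath_of_length_eq_dist (hconn : G.Connected) {u v : V} (p : G.Walk u v)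
    (hp : p.length = G.dist u v) : p.IsPath := by
  induction p with
  | nil => simp
  | @cons u w v h q ih =>
    have hq1 : G.dist w v ≤ q.length := G.dist_le q
    have huw : G.dist u w ≤ 1 := by
      have := G.dist_le (SimpleGraph.Walk.cons h SimpleGraph.Walk.nil)
      simpa using this
    have htri := hconn.dist_triangle (u := u) (v := w) (w := v)
    have hlen : (SimpleGraph.Walk.cons h q).length = q.length + 1 := by simp
    have hq : q.length = G.dist w v := by omega
    have hqp := ih hq
    rw [SimpleGraph.Walk.cons_isPath_iff]
    refine ⟨hqp, fun hu => ?_⟩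
    have := (geo_split hconn q hq hu).1
    have htri2 := hconn.dist_triangle (u := w) (v := u) (w := v)
    omega

/-- In a cactus, the two endpoints of an edge lying on an even cycle are never equidistant
from any vertex. -/
lemma claimA (hconn : G.Connected) (hcactus : IsCactus G) {w : V} (C : G.Walk w w)
    (hC : C.IsCycle) (heven : Even C.length) {x y z : V} (hxy : s(x, y) ∈ C.edges) :
    G.dist z x ≠ G.dist z y := by
  intro heq
  have hadj : G.Adj x y := C.adj_of_mem_edges hxy
  have hne : x ≠ y := hadj.ne
  obtain ⟨P, hP⟩ := (hconn.preconnected z x).exists_walk_length_eq_dist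
  obtain ⟨Q, hQ⟩ := (hconn.preconnected z y).exists_walk_length_eq_dist
  have hPp : P.IsPath := isPath_of_length_eq_dist hconn P hP
  have hQp : Q.IsPath := isPath_of_length_eq_dist hconn Q hQ
  classical
  -- the set of common vertices
  let T : Finset V := P.support.toFinset ∩ Q.support.toFinset
  have hzT : z ∈ T := by
    simp [T, List.mem_toFinset, SimpleGraph.Walk.start_mem_support]
  obtain ⟨w0, hw0T, hw0max⟩ := T.exists_max_image (fun v => G.dist z v) ⟨z, hzT⟩
  have hw0P : w0 ∈ P.support := by
    simp only [T, Finset.mem_inter, List.mem_toFinset] at hw0T; exact hw0T.1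
  have hw0Q : w0 ∈ Q.support := by
    simp only [T, Finset.mem_inter, List.mem_toFinset] at hw0T; exact hw0T.2
  obtain ⟨hsplitP, _, hP'len⟩ := geo_split hconn P hP hw0P
  obtain ⟨hsplitQ, _, hQ'len⟩ := geo_split hconn Q hQ hw0Q
  set P' := P.dropUntil w0 hw0P with hPdef
  set Q' := Q.dropUntil w0 hw0Q with hQdef
  have hP'p : P'.IsPath := hPp.dropUntil hw0P
  have hQ'p : Q'.IsPath := hQp.dropUntil hw0Q
  -- any common vertex of P' and Q' is w0
  have hcommon : ∀ v, v ∈ P'.support → v ∈ Q'.support → v = w0 := by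
    intro v hvP' hvQ'
    have hvP : v ∈ P.support := SimpleGraph.Walk.support_dropUntil_subset P hw0P hvP'
    have hvQ : v ∈ Q.support := SimpleGraph.Walk.support_dropUntil_subset Q hw0Q hvQ'
    have hvT : v ∈ T := by
      simp only [T, Finset.mem_inter, List.mem_toFinset]; exact ⟨hvP, hvQ⟩
    have hvle : G.dist z v ≤ G.dist z w0 := hw0max v hvT
    obtain ⟨hsplitPv, _, _⟩ := geo_split hconn P hP hvP
    obtain ⟨hsplitP'v, htake, _⟩ := geo_split hconn P' hP'len hvP'
    have hzero : G.dist w0 v = 0 := by omega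
    have : (P'.takeUntil v hvP').length = 0 := by omega
    exact (SimpleGraph.Walk.eq_of_length_eq_zero this).symm
  have hxQ : x ∉ Q.support := by
    intro hx
    obtain ⟨hs, _, _⟩ := geo_split hconn Q hQ hx
    have hxy0 : G.dist x y = 0 := by omega
    have : (Q.dropUntil x hx).length = 0 := by
      obtain ⟨_, _, h3⟩ := geo_split hconn Q hQ hx; omega
    exact hne (SimpleGraph.Walk.eq_of_length_eq_zero this)
  have hyP : y ∉ P.support := by
    intro hy
    obtain ⟨hs, _, _⟩ := geo_split hconn P hP hy
    have : (P.dropUntil y hy).length = 0 := by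
      obtain ⟨_, _, h3⟩ := geo_split hconn P hP hy; omega
    exact hne (SimpleGraph.Walk.eq_of_length_eq_zero this).symm
  -- build the cycle
  have hR : (Q'.reverse.append P').IsPath := by
    rw [SimpleGraph.Walk.isPath_def, SimpleGraph.Walk.support_append, List.nodup_append]
    refine ⟨hQ'p.reverse.support_nodup, ?_, ?_⟩
    · have := hP'p.support_nodup
      have hcons := P'.support_eq_cons
      rw [hcons] at this
      exact this.of_cons
    · intro a haQ b haP hab
      subst hab
      have haQ' : a ∈ Q'.support := by
        rwa [SimpleGraph.Walk.support_reverse, List.mem_reverse] at haQ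
      have haP' : a ∈ P'.support := List.mem_of_mem_tail haP
      have : a = w0 := hcommon a haP' haQ'
      subst this
      have := hP'p.support_nodup
      have hcons := P'.support_eq_cons
      rw [hcons] at this
      exact this.notMem haP
  have hRe : s(x, y) ∉ (Q'.reverse.append P').edges := by
    intro hmem
    rw [SimpleGraph.Walk.edges_append, List.mem_append] at hmem
    rcases hmem with hmem | hmem
    · rw [SimpleGraph.Walk.edges_reverse, List.mem_reverse] at hmem
      exact hxQ (SimpleGraph.Walk.support_dropUntil_subset Q hw0Q
        (Q'.fst_mem_support_of_mem_edges hmem))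
    · exact hyP (SimpleGraph.Walk.support_dropUntil_subset P hw0P
        (P'.snd_mem_support_of_mem_edges hmem))
  have hZ : (SimpleGraph.Walk.cons hadj (Q'.reverse.append P')).IsCycle := by
    rw [SimpleGraph.Walk.cons_isCycle_iff]
    exact ⟨hR, hRe⟩
  set Z := SimpleGraph.Walk.cons hadj (Q'.reverse.append P') with hZdef
  have hshare : ∃ e, e ∈ Z.edges ∧ e ∈ C.edges := by
    refine ⟨s(x, y), ?_, hxy⟩
    simp [hZdef]
  have hiff := hcactus x w Z C hZ hC hshare
  have hZn : Z.edges.Nodup := hZ.isCircuit.isTrail.edges_nodup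
  have hCn : C.edges.Nodup := hC.isCircuit.isTrail.edges_nodup
  have hperm : Z.edges.Perm C.edges := (List.perm_ext_iff_of_nodup hZn hCn).2 hiff
  have hlen : Z.length = C.length := by
    rw [← SimpleGraph.Walk.length_edges, ← SimpleGraph.Walk.length_edges]
    exact hperm.length_eq
  have hZlen : Z.length = Q'.length + P'.length + 1 := by
    simp [hZdef, SimpleGraph.Walk.length_append]
  obtain ⟨t, ht⟩ := heven
  omega

end Aux

section Key

variable {V : Type*} [DecidableEq V] {G : SimpleGraph V}

lemma key (hconn : G.Connected) (hcactus : IsCactus G)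
    (c : Sym2 V → ℕ) (hc : IsVSRC G c)
    {w₁ w₂ : V} (C₁ : G.Walk w₁ w₁) (C₂ : G.Walk w₂ w₂)
    (hC₁ : C₁.IsCycle) (hC₂ : C₂.IsCycle)
    (heven₁ : Even C₁.length) (heven₂ : Even C₂.length)
    (hdisj : ∀ e, e ∈ C₁.edges → e ∉ C₂.edges)
    {a₁ b₁ a₂ b₂ : V}
    (he₁ : s(a₁, b₁) ∈ C₁.edges) (he₂ : s(a₂, b₂) ∈ C₂.edges)
    (hmax1 : G.dist a₁ a₂ ≤ G.dist a₁ b₂)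
    (hmax2 : G.dist b₁ b₂ ≤ G.dist a₁ b₂)
    (hmax3 : G.dist b₁ a₂ ≤ G.dist a₁ b₂) :
    c s(a₁, b₁) ≠ c s(a₂, b₂) := by
  have h₁ : G.Adj a₁ b₁ := C₁.adj_of_mem_edges he₁
  have h₂ : G.Adj a₂ b₂ := C₂.adj_of_mem_edges he₂
  have hene : s(a₁, b₁) ≠ s(a₂, b₂) := fun h => hdisj _ he₁ (h ▸ he₂)
  have hd1 : G.dist a₁ b₁ ≤ 1 := by
    have := G.dist_le (SimpleGraph.Walk.cons h₁ SimpleGraph.Walk.nil); simpa using this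
  have hd2 : G.dist a₂ b₂ ≤ 1 := by
    have := G.dist_le (SimpleGraph.Walk.cons h₂ SimpleGraph.Walk.nil); simpa using this
  -- d(b₁,b₂) = d(a₁,b₂) - 1
  have hA1 : G.dist b₂ a₁ ≠ G.dist b₂ b₁ :=
    claimA hconn hcactus C₁ hC₁ heven₁ he₁ (z := b₂)
  have hbb : G.dist b₁ b₂ + 1 = G.dist a₁ b₂ := by
    have t1 := hconn.dist_triangle (u := a₁) (v := b₁) (w := b₂)
    have t2 : G.dist b₂ a₁ = G.dist a₁ b₂ := G.dist_comm ..
    have t3 : G.dist b₂ b₁ = G.dist b₁ b₂ := G.dist_comm ..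
    omega
  -- d(a₁,a₂) = d(a₁,b₂) - 1
  have hA2 : G.dist a₁ a₂ ≠ G.dist a₁ b₂ :=
    claimA hconn hcactus C₂ hC₂ heven₂ he₂ (z := a₁)
  have haa : G.dist a₁ a₂ + 1 = G.dist a₁ b₂ := by
    have t1 := hconn.dist_triangle (u := a₁) (v := a₂) (w := b₂)
    omega
  -- d(b₁,a₂) is either d(a₁,b₂) or d(a₁,b₂) - 2
  have hA3 : G.dist b₁ a₂ ≠ G.dist b₁ b₂ :=
    claimA hconn hcactus C₂ hC₂ heven₂ he₂ (z := b₁)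
  have hcases : G.dist b₁ a₂ = G.dist a₁ b₂ ∨ G.dist b₁ a₂ + 2 = G.dist a₁ b₂ := by
    have t1 := hconn.dist_triangle (u := b₁) (v := a₂) (w := b₂)
    have t2 := hconn.dist_triangle (u := b₁) (v := b₂) (w := a₂)
    have t3 : G.dist b₂ a₂ = G.dist a₂ b₂ := G.dist_comm ..
    omega
  rcases hcases with hbad | hgood
  · -- "bad" case: derive a contradiction via an impossible cycle
    exfalso
    obtain ⟨P, hP⟩ := (hconn.preconnected a₁ a₂).exists_walk_length_eq_dist
    obtain ⟨Q, hQ⟩ := (hconn.preconnected b₁ b₂).exists_walk_length_eq_dist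
    have hPp : P.IsPath := isPath_of_length_eq_dist hconn P hP
    have hQp : Q.IsPath := isPath_of_length_eq_dist hconn Q hQ
    -- P and Q are vertex-disjoint
    have hdisjPQ : ∀ v, v ∈ P.support → v ∈ Q.support → False := by
      intro v hvP hvQ
      obtain ⟨hsP, _, _⟩ := geo_split hconn P hP hvP
      obtain ⟨hsQ, _, _⟩ := geo_split hconn Q hQ hvQ
      have t1 := hconn.dist_triangle (u := a₁) (v := v) (w := b₂)
      have t2 := hconn.dist_triangle (u := b₁) (v := v) (w := a₂)
      omega
    have hR : (Q.append (SimpleGraph.Walk.cons h₂.symm P.reverse)).IsPath := by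
      rw [SimpleGraph.Walk.isPath_def, SimpleGraph.Walk.support_append,
        SimpleGraph.Walk.support_cons, List.tail_cons, List.nodup_append]
      refine ⟨hQp.support_nodup, hPp.reverse.support_nodup, ?_⟩
      intro a haQ b haP hab
      subst hab
      rw [SimpleGraph.Walk.support_reverse, List.mem_reverse] at haP
      exact hdisjPQ a haP haQ
    have hRe : s(a₁, b₁) ∉ (Q.append (SimpleGraph.Walk.cons h₂.symm P.reverse)).edges := by
      intro hmem
      rw [SimpleGraph.Walk.edges_append, SimpleGraph.Walk.edges_cons, List.mem_append,
        List.mem_cons] at hmem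
      rcases hmem with hmem | hmem | hmem
      · exact hdisjPQ a₁ P.start_mem_support (Q.fst_mem_support_of_mem_edges hmem)
      · exact hene (by rw [hmem, Sym2.eq_swap])
      · rw [SimpleGraph.Walk.edges_reverse, List.mem_reverse] at hmem
        exact hdisjPQ b₁ (P.snd_mem_support_of_mem_edges hmem) Q.start_mem_support
    have hZ : (SimpleGraph.Walk.cons h₁
        (Q.append (SimpleGraph.Walk.cons h₂.symm P.reverse))).IsCycle := by
      rw [SimpleGraph.Walk.cons_isCycle_iff]
      exact ⟨hR, hRe⟩
    set Z := SimpleGraph.Walk.cons h₁ (Q.append (SimpleGraph.Walk.cons h₂.symm P.reverse))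
      with hZdef
    have hshare : ∃ e, e ∈ Z.edges ∧ e ∈ C₁.edges := by
      refine ⟨s(a₁, b₁), ?_, he₁⟩
      simp [hZdef]
    have hiff := hcactus a₁ w₁ Z C₁ hZ hC₁ hshare
    have he₂Z : s(a₂, b₂) ∈ Z.edges := by
      rw [hZdef]
      rw [SimpleGraph.Walk.edges_cons, SimpleGraph.Walk.edges_append,
        SimpleGraph.Walk.edges_cons]
      simp [Sym2.eq_swap]
    exact hdisj _ ((hiff _).1 he₂Z) he₂
  · -- "good" case: build a geodesic through both edges
    obtain ⟨g, hg⟩ := (hconn.preconnected b₁ a₂).exists_walk_length_eq_dist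
    set W := SimpleGraph.Walk.cons h₁ (g.append (SimpleGraph.Walk.cons h₂ SimpleGraph.Walk.nil))
      with hWdef
    have hWlen : W.length = G.dist a₁ b₂ := by
      simp only [hWdef, SimpleGraph.Walk.length_cons, SimpleGraph.Walk.length_append,
        SimpleGraph.Walk.length_nil]
      omega
    have hWp : W.IsPath := isPath_of_length_eq_dist hconn W hWlen
    have hnodup := hc a₁ b₂ W hWp hWlen
    have hm₁ : s(a₁, b₁) ∈ W.edges := by simp [hWdef]
    have hm₂ : s(a₂, b₂) ∈ W.edges := by simp [hWdef]
    intro hceq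
    exact hene (List.inj_on_of_nodup_map hnodup hm₁ hm₂ hceq)

end Key

theorem stmt_18 {V : Type*} [Fintype V] (G : SimpleGraph V)
    (hconn : G.Connected) (hcactus : IsCactus G)
    (c : Sym2 V → ℕ) (hc : IsVSRC G c)
    (w₁ w₂ : V) (C₁ : G.Walk w₁ w₁) (C₂ : G.Walk w₂ w₂)
    (hC₁ : C₁.IsCycle) (hC₂ : C₂.IsCycle)
    (heven₁ : Even C₁.length) (heven₂ : Even C₂.length)
    (hdistinct : {e : Sym2 V | e ∈ C₁.edges} ≠ {e : Sym2 V | e ∈ C₂.edges})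
    (e₁ e₂ : Sym2 V) (he₁ : e₁ ∈ C₁.edges) (he₂ : e₂ ∈ C₂.edges) :
    c e₁ ≠ c e₂ := by
  classical
  have hdisj : ∀ e, e ∈ C₁.edges → e ∉ C₂.edges := fun e he he' =>
    hdistinct (Set.ext (hcactus w₁ w₂ C₁ C₂ hC₁ hC₂ ⟨e, he, he'⟩))
  revert he₁
  induction e₁ using Sym2.ind with
  | _ a₁ b₁ =>
  intro he₁
  revert he₂
  induction e₂ using Sym2.ind with
  | _ a₂ b₂ =>
  intro he₂
  have he₁' : s(b₁, a₁) ∈ C₁.edges := by rwa [Sym2.eq_swap]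
  have he₂' : s(b₂, a₂) ∈ C₂.edges := by rwa [Sym2.eq_swap]
  have hfour :
      (G.dist a₁ a₂ ≤ G.dist a₁ b₂ ∧ G.dist b₁ b₂ ≤ G.dist a₁ b₂ ∧
        G.dist b₁ a₂ ≤ G.dist a₁ b₂) ∨
      (G.dist a₁ b₂ ≤ G.dist a₁ a₂ ∧ G.dist b₁ a₂ ≤ G.dist a₁ a₂ ∧
        G.dist b₁ b₂ ≤ G.dist a₁ a₂) ∨
      (G.dist b₁ a₂ ≤ G.dist b₁ b₂ ∧ G.dist a₁ b₂ ≤ G.dist b₁ b₂ ∧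
        G.dist a₁ a₂ ≤ G.dist b₁ b₂) ∨
      (G.dist b₁ b₂ ≤ G.dist b₁ a₂ ∧ G.dist a₁ a₂ ≤ G.dist b₁ a₂ ∧
        G.dist a₁ b₂ ≤ G.dist b₁ a₂) := by
    omega
  rcases hfour with ⟨m1, m2, m3⟩ | ⟨m1, m2, m3⟩ | ⟨m1, m2, m3⟩ | ⟨m1, m2, m3⟩
  · exact key hconn hcactus c hc C₁ C₂ hC₁ hC₂ heven₁ heven₂ hdisj he₁ he₂ m1 m2 m3
  · rw [show s(a₂, b₂) = s(b₂, a₂) from Sym2.eq_swap]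
    exact key hconn hcactus c hc C₁ C₂ hC₁ hC₂ heven₁ heven₂ hdisj he₁ he₂' m1 m2 m3
  · rw [show s(a₁, b₁) = s(b₁, a₁) from Sym2.eq_swap]
    exact key hconn hcactus c hc C₁ C₂ hC₁ hC₂ heven₁ heven₂ hdisj he₁' he₂ m1 m2 m3
  · rw [show s(a₁, b₁) = s(b₁, a₁) from Sym2.eq_swap,
      show s(a₂, b₂) = s(b₂, a₂) from Sym2.eq_swap]
    exact key hconn hcactus c hc C₁ C₂ hC₁ hC₂ heven₁ heven₂ hdisj he₁' he₂' m1 m2 m3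
end

section
/- Let G be a finite connected cactus graph, let C be a cycle of odd length in G, and let e1 = uv be an edge of C. Let w = vopp(e1) be the unique vertex of C equidistant in G from u and v, and let e2 be any edge of G both of whose endpoints lie in S(w,C), the set of vertices reachable from w in the graph obtained from G by deleting all edges of C. Then e1 and e2 are not conflicting: no shortest path in G (a path whose length equals the distance between its endpoints) contains both e1 and e2. -/
open SimpleGraph

section Aux

open SimpleGraph.Walk

variable {V : Type*} {G : SimpleGraph V}

/-- The middle part of a shortest walk realizes the distance between its endpoints. -/
private lemma mid_shortest (hconn : G.Connected) {a s t b : V}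
    (A : G.Walk a s) (B : G.Walk s t) (D : G.Walk t b)
    (h : (A.append (B.append D)).length = G.dist a b) : B.length = G.dist s t := by
  obtain ⟨B', hB'⟩ := hconn.exists_walk_length_eq_dist s t
  have h1 : G.dist s t ≤ B.length := dist_le B
  have h2 : G.dist a b ≤ (A.append (B'.append D)).length := dist_le _
  simp only [Walk.length_append] at h h2
  omega

/-- Any closed walk's support is contained in its support tail. -/
private lemma mem_tail_of_closed {v x : V} (c : G.Walk v v) (hc : c ≠ Walk.nil)
    (hx : x ∈ c.support) : x ∈ c.support.tail := by
  cases c with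
  | nil => exact absurd rfl hc
  | cons h q =>
    rw [Walk.support_cons, List.tail_cons]
    rw [Walk.support_cons, List.mem_cons] at hx
    rcases hx with rfl | hx
    · exact q.end_mem_support
    · exact hx

/-- A cycle splits as an initial edge followed by a path. -/
private lemma cycle_tail_path {x : V} {c : G.Walk x x} (hc : c.IsCycle) :
    ∃ (m : V) (hadj : G.Adj x m) (rest : G.Walk m x), c = Walk.cons hadj rest ∧ rest.IsPath := by
  cases c with
  | nil => exact absurd rfl hc.ne_nil
  | cons hadj rest =>
    refine ⟨_, hadj, rest, rfl, Walk.IsPath.mk' ?_⟩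
    have := hc.support_nodup
    rwa [Walk.support_cons, List.tail_cons] at this

/-- Key separation lemma: in a cactus, two vertices of a cycle `C` which are joined by
a path avoiding the edges of `C` must be equal. -/
private lemma cactus_sep (hcactus : IsCactus G) {w₀ : V} {C : G.Walk w₀ w₀} (hC : C.IsCycle) :
    ∀ n {c1 c2 : V} (p : (G.deleteEdges {e | e ∈ C.edges}).Walk c1 c2),
      p.IsPath → p.length = n → c1 ∈ C.support → c2 ∈ C.support → c1 = c2 := by
  intro n
  induction n using Nat.strong_induction_on with
  | _ n IH =>
  intro c1 c2 p hp hlen h1 h2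
  classical
  by_contra hne
  by_cases hmid : ∃ t, t ∈ p.support ∧ t ∈ C.support ∧ t ≠ c1 ∧ t ≠ c2
  · obtain ⟨t, ht, htC, ht1, ht2⟩ := hmid
    have hspec := p.take_spec ht
    have hlt : (p.takeUntil t ht).length < n := by
      have hlen2 := congrArg Walk.length hspec
      rw [Walk.length_append] at hlen2
      have hd : (p.dropUntil t ht).length ≠ 0 :=
        fun h0 => ht2 (Walk.eq_of_length_eq_zero h0)
      omega
    exact ht1 ((IH _ hlt (p.takeUntil t ht) (hp.takeUntil ht) rfl h1 htC).symm)
  · push_neg at hmid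
    -- p's edges lie in G but avoid the edges of C
    have hpedges : ∀ e ∈ p.edges, e ∈ G.edgeSet ∧ e ∉ C.edges := by
      intro e he
      have h' := p.edges_subset_edgeSet he
      rw [edgeSet_deleteEdges] at h'
      exact ⟨h'.1, h'.2⟩
    have hptrans : ∀ e ∈ p.edges, e ∈ G.edgeSet := fun e he => (hpedges e he).1
    set pG : G.Walk c1 c2 := p.transfer G hptrans with hpGdef
    have hpG_edges : pG.edges = p.edges := p.edges_transfer hptrans
    have hpG_support : pG.support = p.support := p.support_transfer hptrans
    have hpGpath : pG.IsPath := hp.transfer hptrans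
    -- rotate C so that it starts and ends at c2
    have hC2 : (C.rotate c2 h2).IsCycle := hC.rotate h2
    have hC2edges : ∀ e, e ∈ (C.rotate c2 h2).edges ↔ e ∈ C.edges :=
      fun e => (C.rotate_edges c2 h2).mem_iff
    have hC2tail : ∀ t, t ∈ (C.rotate c2 h2).support.tail ↔ t ∈ C.support.tail :=
      fun t => (Walk.support_rotate C c2 h2).mem_iff
    have hc1tail : c1 ∈ (C.rotate c2 h2).support.tail :=
      (hC2tail c1).mpr (mem_tail_of_closed C hC.ne_nil h1)
    obtain ⟨m, hadj, rest, hrest_eq, hrest_path⟩ := cycle_tail_path hC2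
    have hrest_sup : rest.support = (C.rotate c2 h2).support.tail := by
      rw [hrest_eq, Walk.support_cons, List.tail_cons]
    have hc1rest : c1 ∈ rest.support := hrest_sup ▸ hc1tail
    set arc : G.Walk c1 c2 := rest.dropUntil c1 hc1rest with harcdef
    have harc_path : arc.IsPath := hrest_path.dropUntil hc1rest
    have harc_edges : ∀ e ∈ arc.edges, e ∈ C.edges := by
      intro e he
      have h' : e ∈ rest.edges := rest.edges_dropUntil_subset hc1rest he
      have h'' : e ∈ (C.rotate c2 h2).edges := by
        rw [hrest_eq, Walk.edges_cons]; exact List.mem_cons_of_mem _ h'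
      exact (hC2edges e).mp h''
    have harc_sup : ∀ t ∈ arc.support, t ∈ C.support := by
      intro t ht
      have h' : t ∈ rest.support := rest.support_dropUntil_subset hc1rest ht
      have h'' : t ∈ C.support.tail := (hC2tail t).mp (hrest_sup ▸ h')
      rw [C.support_eq_cons]; exact List.mem_cons_of_mem _ h''
    -- build the second cycle
    set D : G.Walk c1 c1 := arc.append pG.reverse with hDdef
    have hplen : p.length ≠ 0 := fun h0 => hne (Walk.eq_of_length_eq_zero h0)
    have harclen : arc.length ≠ 0 := fun h0 => hne (Walk.eq_of_length_eq_zero h0)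
    have hD_ne_nil : D ≠ Walk.nil := by
      intro h0
      have := congrArg Walk.length h0
      rw [hDdef, Walk.length_append, Walk.length_reverse] at this
      simp only [Walk.length_nil] at this
      omega
    have hD_edges_nodup : D.edges.Nodup := by
      rw [hDdef, Walk.edges_append]
      refine List.Nodup.append harc_path.isTrail.edges_nodup
        hpGpath.reverse.isTrail.edges_nodup ?_
      intro e he1 he2
      have hC' : e ∈ C.edges := harc_edges e he1
      have hp' : e ∈ p.edges := by
        rw [Walk.edges_reverse, List.mem_reverse, hpG_edges] at he2
        exact he2
      exact (hpedges e hp').2 hC'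
    have hD_tail_nodup : D.support.tail.Nodup := by
      have hsup : D.support.tail = arc.support.tail ++ pG.reverse.support.tail := by
        rw [hDdef, Walk.support_append, arc.support_eq_cons, List.cons_append, List.tail_cons]
        rfl
      rw [hsup]
      have harcN : arc.support.Nodup := harc_path.support_nodup
      have hpgN : pG.reverse.support.Nodup := hpGpath.reverse.support_nodup
      refine List.Nodup.append ?_ ?_ ?_
      · exact (arc.support_eq_cons ▸ harcN).of_cons
      · exact (pG.reverse.support_eq_cons ▸ hpgN).of_cons
      · intro t ht1 ht2
        have htC : t ∈ C.support := harc_sup t (arc.support_eq_cons ▸ List.mem_cons_of_mem _ ht1)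
        have htnc1 : t ≠ c1 := by
          intro h0
          have := arc.support_eq_cons ▸ harcN
          rw [List.nodup_cons] at this
          exact this.1 (h0 ▸ ht1)
        have htnc2 : t ≠ c2 := by
          intro h0
          have := pG.reverse.support_eq_cons ▸ hpgN
          rw [List.nodup_cons] at this
          exact this.1 (h0 ▸ ht2)
        have htp : t ∈ p.support := by
          have : t ∈ pG.reverse.support := pG.reverse.support_eq_cons ▸ List.mem_cons_of_mem _ ht2
          rw [Walk.support_reverse, List.mem_reverse, hpG_support] at this
          exact this
        exact htnc2 (hmid t htp htC htnc1)
    have hD : D.IsCycle := ⟨⟨⟨hD_edges_nodup⟩, hD_ne_nil⟩, hD_tail_nodup⟩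
    -- a shared edge between C and D
    have harc_edges_ne : arc.edges ≠ [] := by
      intro h0
      have := arc.length_edges
      rw [h0] at this
      simp at this
      omega
    obtain ⟨f, hf⟩ := List.exists_mem_of_ne_nil _ harc_edges_ne
    have hfD : f ∈ D.edges := by
      rw [hDdef, Walk.edges_append, List.mem_append]; exact Or.inl hf
    have hiff := hcactus w₀ c1 C D hC hD ⟨f, harc_edges f hf, hfD⟩
    -- an edge of p lies in D hence in C: contradiction
    have hpedges_ne : p.edges ≠ [] := by
      intro h0
      have := p.length_edges
      rw [h0] at this
      simp at this
      omega
    obtain ⟨g, hg⟩ := List.exists_mem_of_ne_nil _ hpedges_ne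
    have hgD : g ∈ D.edges := by
      rw [hDdef, Walk.edges_append, List.mem_append, Walk.edges_reverse, List.mem_reverse,
        hpG_edges]
      exact Or.inr hg
    exact (hpedges g hg).2 ((hiff g).mpr hgD)

/-- Two vertices of `C` reachable from each other away from `C`'s edges coincide. -/
private lemma reach_eq (hcactus : IsCactus G) {w₀ : V} {C : G.Walk w₀ w₀} (hC : C.IsCycle)
    {w z : V} (hw : w ∈ C.support) (hz : z ∈ C.support)
    (hr : (G.deleteEdges {e | e ∈ C.edges}).Reachable w z) : w = z := by
  classical
  obtain ⟨pw⟩ := hr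
  exact cactus_sep hcactus hC pw.toPath.1.length pw.toPath.1 pw.toPath.2 rfl hw hz

/-- Cut-vertex lemma: any walk from a vertex in the off-cycle component of `w`
to a vertex of `C` other than `w` must pass through `w`. -/
private lemma cut_vertex (hcactus : IsCactus G) {w₀ : V} {C : G.Walk w₀ w₀} (hC : C.IsCycle)
    {w : V} (hwC : w ∈ C.support) :
    ∀ {x t : V} (P : G.Walk x t), (G.deleteEdges {e | e ∈ C.edges}).Reachable w x →
      t ∈ C.support → t ≠ w → w ∈ P.support := by
  intro x t P
  induction P with
  | nil =>
    intro hr ht hne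
    exact absurd (reach_eq hcactus hC hwC ht hr) (fun h => hne h.symm)
  | @cons x y t h P ih =>
    intro hr ht hne
    by_cases hce : s(x, y) ∈ C.edges
    · have hxC : x ∈ C.support := C.fst_mem_support_of_mem_edges hce
      have hwx : w = x := reach_eq hcactus hC hwC hxC hr
      rw [Walk.support_cons]
      exact hwx ▸ List.mem_cons_self
    · have hr' : (G.deleteEdges {e | e ∈ C.edges}).Reachable w y :=
        hr.trans (Adj.reachable (SimpleGraph.deleteEdges_adj.mpr ⟨h, hce⟩))
      rw [Walk.support_cons]
      exact List.mem_cons_of_mem _ (ih hr' ht hne)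

/-- A dart in a walk splits the walk. -/
private lemma dart_decomp : ∀ {a b : V} (q : G.Walk a b) (d : G.Dart), d ∈ q.darts →
    ∃ (q1 : G.Walk a d.fst) (q2 : G.Walk d.snd b), q = q1.append (Walk.cons d.adj q2) := by
  intro a b q
  induction q with
  | nil => intro d hd; simp [Walk.darts_nil] at hd
  | cons h p ih =>
    intro d hd
    rw [Walk.darts_cons, List.mem_cons] at hd
    rcases hd with rfl | hd
    · exact ⟨Walk.nil, p, rfl⟩
    · obtain ⟨q1, q2, hq⟩ := ih d hd
      exact ⟨Walk.cons h q1, q2, by rw [Walk.cons_append, hq]⟩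

private lemma main_aux_s19 (hconn : G.Connected) (hcactus : IsCactus G) {w₀ : V} {C : G.Walk w₀ w₀}
    (hC : C.IsCycle) {w u v : V} (hwC : w ∈ C.support)
    (hu : u ∈ C.support) (hv : v ∈ C.support) (hwu : w ≠ u) (hwv : w ≠ v)
    (hwdist : G.dist w u = G.dist w v)
    {e₂ : Sym2 V} (hne : e₂ ≠ s(u, v))
    (hend : ∀ x ∈ e₂, (G.deleteEdges {e | e ∈ C.edges}).Reachable w x)
    {a b : V} {q : G.Walk a b} (hlen : q.length = G.dist a b)
    (h : G.Adj u v) {q1 : G.Walk a u} {q2 : G.Walk v b}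
    (hq : q = q1.append (Walk.cons h q2)) (he₂q : e₂ ∈ q.edges) : False := by
  classical
  have he₂d : e₂ ∈ q.darts.map SimpleGraph.Dart.edge := he₂q
  obtain ⟨d, hd, hde⟩ := List.mem_map.mp he₂d
  have hfx : d.fst ∈ e₂ := by rw [← hde]; exact Sym2.mem_mk_left _ _
  have hfy : d.snd ∈ e₂ := by rw [← hde]; exact Sym2.mem_mk_right _ _
  subst hq
  rw [Walk.darts_append, List.mem_append, Walk.darts_cons, List.mem_cons] at hd
  rcases hd with hd1 | hd2 | hd3
  · -- e₂'s dart is in q1 : a → u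
    have hx : d.fst ∈ q1.support := Walk.dart_fst_mem_support_of_mem_darts _ hd1
    have hrx : (G.deleteEdges {e | e ∈ C.edges}).Reachable w d.fst := hend d.fst hfx
    have hwq1 : w ∈ q1.support := q1.support_dropUntil_subset hx
      (cut_vertex hcactus hC hwC (q1.dropUntil d.fst hx) hrx hu (fun hh => hwu hh.symm))
    have hspec := q1.take_spec hwq1
    set t1 := q1.takeUntil w hwq1 with ht1def
    set d1 := q1.dropUntil w hwq1 with hd1def
    have e1 : d1.length = G.dist w u := by
      refine mid_shortest hconn t1 d1 (Walk.cons h q2) ?_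
      rw [Walk.append_assoc, hspec]
      exact hlen
    have e2 : (d1.append (Walk.cons h Walk.nil)).length = G.dist w v := by
      refine mid_shortest hconn t1 (d1.append (Walk.cons h Walk.nil)) q2 ?_
      rw [← Walk.append_assoc d1, Walk.cons_append, Walk.nil_append, Walk.append_assoc, hspec]
      exact hlen
    rw [Walk.length_append, Walk.length_cons, Walk.length_nil] at e2
    omega
  · -- e₂'s dart is the edge uv itself
    subst hd2
    exact hne (hde.symm)
  · -- e₂'s dart is in q2 : v → b
    have hy : d.snd ∈ q2.support := Walk.dart_snd_mem_support_of_mem_darts _ hd3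
    have hry : (G.deleteEdges {e | e ∈ C.edges}).Reachable w d.snd := hend d.snd hfy
    have hwtk : w ∈ (q2.takeUntil d.snd hy).support := by
      have hwrev : w ∈ (q2.takeUntil d.snd hy).reverse.support :=
        cut_vertex hcactus hC hwC (q2.takeUntil d.snd hy).reverse hry hv
          (fun hh => hwv hh.symm)
      rw [Walk.support_reverse, List.mem_reverse] at hwrev
      exact hwrev
    have hwq2 : w ∈ q2.support := q2.support_takeUntil_subset hy hwtk
    have hspec := q2.take_spec hwq2
    set t2 := q2.takeUntil w hwq2 with ht2def
    set d2 := q2.dropUntil w hwq2 with hd2def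
    have e1 : (Walk.cons h t2).length = G.dist u w := by
      refine mid_shortest hconn q1 (Walk.cons h t2) d2 ?_
      rw [Walk.cons_append, hspec]
      exact hlen
    have e2 : t2.length = G.dist v w := by
      refine mid_shortest hconn (q1.append (Walk.cons h Walk.nil)) t2 d2 ?_
      rw [← Walk.append_assoc, Walk.cons_append, Walk.nil_append, hspec]
      exact hlen
    rw [Walk.length_cons] at e1
    have hcomm1 : G.dist u w = G.dist w u := SimpleGraph.dist_comm
    have hcomm2 : G.dist v w = G.dist w v := SimpleGraph.dist_comm
    omega

end Aux

theorem stmt_19 {V : Type*} [Fintype V] (G : SimpleGraph V)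
    (hconn : G.Connected) (hcactus : IsCactus G)
    (w₀ : V) (C : G.Walk w₀ w₀) (hC : C.IsCycle) (hodd : Odd C.length)
    (u v : V) (huv : s(u, v) ∈ C.edges)
    (w : V) (hw : w ∈ C.support) (hwdist : G.dist w u = G.dist w v)
    (e₂ : Sym2 V) (he₂ : e₂ ∈ G.edgeSet)
    (hend : ∀ x ∈ e₂, (G.deleteEdges {e | e ∈ C.edges}).Reachable w x) :
    ∀ (a b : V) (q : G.Walk a b), q.IsPath → q.length = G.dist a b →
      ¬(s(u, v) ∈ q.edges ∧ e₂ ∈ q.edges) := by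
  intro a b q hq hlen ⟨h1, h2⟩
  have hadj : G.Adj u v := G.mem_edgeSet.mp (C.edges_subset_edgeSet huv)
  have hune : u ≠ v := hadj.ne
  have huC : u ∈ C.support := C.fst_mem_support_of_mem_edges huv
  have hvC : v ∈ C.support := C.snd_mem_support_of_mem_edges huv
  have hduv : 0 < G.dist u v := hconn.pos_dist_of_ne hune
  have hwu : w ≠ u := by
    intro hh
    rw [hh, SimpleGraph.dist_self] at hwdist
    have h0 : G.dist u v = 0 := hwdist.symm
    rw [hconn.dist_eq_zero_iff] at h0
    exact hune h0
  have hwv : w ≠ v := by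
    intro hh
    rw [hh, SimpleGraph.dist_self] at hwdist
    have hcomm : G.dist v u = G.dist u v := SimpleGraph.dist_comm
    have h0 : G.dist u v = 0 := by omega
    rw [hconn.dist_eq_zero_iff] at h0
    exact hune h0
  have hne2 : e₂ ≠ s(u, v) := by
    intro hh
    have hru : (G.deleteEdges {e | e ∈ C.edges}).Reachable w u :=
      hend u (hh ▸ Sym2.mem_mk_left u v)
    exact hwu (reach_eq hcactus hC hw huC hru)
  have h1d : s(u, v) ∈ q.darts.map SimpleGraph.Dart.edge := h1
  obtain ⟨d, hd, hde⟩ := List.mem_map.mp h1d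
  rcases SimpleGraph.dart_edge_eq_mk'_iff'.mp hde with ⟨hf, hs⟩ | ⟨hf, hs⟩
  · subst hf; subst hs
    obtain ⟨q1, q2, hqeq⟩ := dart_decomp q d hd
    exact main_aux_s19 hconn hcactus hC hw huC hvC hwu hwv hwdist hne2 hend hlen d.adj hqeq h2
  · subst hf; subst hs
    obtain ⟨q1, q2, hqeq⟩ := dart_decomp q d hd
    have hne2' : e₂ ≠ s(d.fst, d.snd) := by rwa [Sym2.eq_swap] at hne2
    exact main_aux_s19 hconn hcactus hC hw hvC huC hwv hwu hwdist.symm hne2' hend hlen d.adj hqeq h2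
end
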